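/- arXiv:1512.07785 — 15 statements merged into one kernel-verified Lean document; each statement's English description precedes it below -/
import Mathlib

section
/- Let Q be a finite quiver, d a dimension vector, k a field, and θ : Q_0 → ℚ a weight with ∑_q θ_q·d_q = 0. If V is a θ-stable representation of (Q,d) over k, then every nonzero endomorphism ψ = (ψ_q) of V (i.e. ψ_q ≠ 0 for some vertex q) has all components ψ_q bijective; in particular, the endomorphism ring of V is a division ring. -/
noncomputable section

open Finset

variable {k : Type*} [Field k]

/-- A family of subspaces `W q ⊆ k^{d q}` is a subrepresentation of the representation
given by the linear maps `φ a : k^{d (src a)} → k^{d (tgt a)}`. -/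
def IsSubrep {V Ar : Type*} (src tgt : Ar → V) (d : V → ℕ)
    (φ : ∀ a : Ar, ((Fin (d (src a)) → k) →ₗ[k] (Fin (d (tgt a)) → k)))
    (W : ∀ q : V, Submodule k (Fin (d q) → k)) : Prop :=
  ∀ a : Ar, ∀ x ∈ W (src a), φ a x ∈ W (tgt a)

/-- `θ(W) = ∑_q θ_q · dim W_q`. -/
def repWeight {V : Type*} [Fintype V] (d : V → ℕ) (θ : V → ℚ)
    (W : ∀ q : V, Submodule k (Fin (d q) → k)) : ℚ :=
  ∑ q, θ q * (Module.finrank k (W q) : ℚ)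

/-- A representation is `θ`-semistable if `θ(W) ≤ 0` for every subrepresentation `W`. -/
def RepSemistable {V Ar : Type*} [Fintype V] (src tgt : Ar → V) (d : V → ℕ) (θ : V → ℚ)
    (φ : ∀ a : Ar, ((Fin (d (src a)) → k) →ₗ[k] (Fin (d (tgt a)) → k))) : Prop :=
  ∀ W : ∀ q : V, Submodule k (Fin (d q) → k),
    IsSubrep src tgt d φ W → repWeight d θ W ≤ 0

/-- A representation is `θ`-stable if it is `θ`-semistable and `θ(W) < 0` for every
subrepresentation other than `0` and the whole representation. -/
def RepStable {V Ar : Type*} [Fintype V] (src tgt : Ar → V) (d : V → ℕ) (θ : V → ℚ)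
    (φ : ∀ a : Ar, ((Fin (d (src a)) → k) →ₗ[k] (Fin (d (tgt a)) → k))) : Prop :=
  RepSemistable src tgt d θ φ ∧
  ∀ W : ∀ q : V, Submodule k (Fin (d q) → k),
    IsSubrep src tgt d φ W →
    W ≠ (fun _ => ⊥) → W ≠ (fun _ => ⊤) →
    repWeight d θ W < 0

/-- Every nonzero endomorphism of a `θ`-stable representation of a finite quiver has all
its components bijective. -/
theorem endomorphism_of_stable_bijective
    {V Ar : Type*} [Fintype V] [Fintype Ar]
    (src tgt : Ar → V) (d : V → ℕ) (θ : V → ℚ)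
    (hθ : ∑ q, θ q * (d q : ℚ) = 0)
    (φ : ∀ a : Ar, ((Fin (d (src a)) → k) →ₗ[k] (Fin (d (tgt a)) → k)))
    (hstable : RepStable src tgt d θ φ)
    (ψ : ∀ q : V, (Fin (d q) → k) →ₗ[k] (Fin (d q) → k))
    (hψ : ∀ a : Ar, (ψ (tgt a)).comp (φ a) = (φ a).comp (ψ (src a)))
    (hne : ∃ q, ψ q ≠ 0) :
    ∀ q, Function.Bijective (ψ q) := by
  by_contra h
  push_neg at h
  obtain ⟨q0, hq0⟩ := h
  obtain ⟨q1, hq1⟩ := hne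
  have hker : IsSubrep src tgt d φ (fun q => LinearMap.ker (ψ q)) := by
    intro a x hx
    simp only [LinearMap.mem_ker] at hx ⊢
    have h2 : ψ (tgt a) (φ a x) = φ a (ψ (src a) x) := LinearMap.congr_fun (hψ a) x
    rw [h2, hx, map_zero]
  have hrange : IsSubrep src tgt d φ (fun q => LinearMap.range (ψ q)) := by
    intro a x hx
    obtain ⟨y, hy⟩ := hx
    refine ⟨φ a y, ?_⟩
    have h2 : ψ (tgt a) (φ a y) = φ a (ψ (src a) y) := LinearMap.congr_fun (hψ a) y
    rw [h2, hy]
  have hinj : ¬ Function.Injective (ψ q0) := fun h' =>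
    hq0 ⟨h', (LinearMap.injective_iff_surjective).mp h'⟩
  have hsurj : ¬ Function.Surjective (ψ q0) := fun h' =>
    hq0 ⟨(LinearMap.injective_iff_surjective).mpr h', h'⟩
  have hk1 : repWeight d θ (fun q => LinearMap.ker (ψ q)) < 0 := by
    refine hstable.2 _ hker ?_ ?_
    · intro hE
      exact hinj (LinearMap.ker_eq_bot.mp (congrFun hE q0))
    · intro hE
      exact hq1 (LinearMap.ker_eq_top.mp (congrFun hE q1))
  have hr1 : repWeight d θ (fun q => LinearMap.range (ψ q)) < 0 := by
    refine hstable.2 _ hrange ?_ ?_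
    · intro hE
      exact hq1 (LinearMap.range_eq_bot.mp (congrFun hE q1))
    · intro hE
      exact hsurj (LinearMap.range_eq_top.mp (congrFun hE q0))
  have hsum : repWeight d θ (fun q => LinearMap.ker (ψ q)) +
      repWeight d θ (fun q => LinearMap.range (ψ q)) = 0 := by
    unfold repWeight
    rw [← Finset.sum_add_distrib, ← hθ]
    refine Finset.sum_congr rfl fun q _ => ?_
    have h1 := LinearMap.finrank_range_add_finrank_ker (ψ q)
    have hd : Module.finrank k (Fin (d q) → k) = d q := by
      simp [Module.finrank_pi]
    rw [hd] at h1
    have : (Module.finrank k (LinearMap.ker (ψ q)) : ℚ) +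
        (Module.finrank k (LinearMap.range (ψ q)) : ℚ) = (d q : ℚ) := by
      exact_mod_cast by omega
    linear_combination θ q * this
  linarith
end
end

section
/- Let A be a discrete valuation ring with fraction field K and residue field κ, Q a finite quiver, d a dimension vector, and θ : Q_0 → ℚ a weight with ∑_q θ_q·d_q = 0. Let ν = (ν_α) and ν' = (ν'_α) be families of matrices ν_α, ν'_α ∈ Mat_{d_{t(α)} × d_{s(α)}}(A) such that the two representations of (Q,d) over κ obtained by reducing all entries modulo the maximal ideal are both θ-stable. Suppose g = (g_q) is a family with g_q ∈ GL_{d_q}(K) satisfying g_{t(α)}·ν_α = ν'_α·g_{s(α)} in Mat(K) for every arrow α. Then there exists c ∈ K^× such that for every vertex q the matrix c·g_q has all its entries in A and det(c·g_q) is a unit of A. -/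
noncomputable section

open Finset

variable {k : Type*} [Field k]

theorem repHom_isUnit_det {V Ar : Type*} [Fintype V] [Fintype Ar]
    (src tgt : Ar → V) (d : V → ℕ) (θ : V → ℚ)
    (hθ : ∑ q, θ q * (d q : ℚ) = 0)
    (φ φ' : ∀ a : Ar, ((Fin (d (src a)) → k) →ₗ[k] (Fin (d (tgt a)) → k)))
    (hst : RepStable src tgt d θ φ) (hst' : RepStable src tgt d θ φ')
    (h : ∀ q : V, Matrix (Fin (d q)) (Fin (d q)) k)
    (hint : ∀ a : Ar, (h (tgt a)).mulVecLin ∘ₗ φ a = φ' a ∘ₗ (h (src a)).mulVecLin)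
    (hne : ¬ ∀ q, h q = 0) : ∀ q, IsUnit (h q).det := by
  classical
  set W : ∀ q : V, Submodule k (Fin (d q) → k) :=
    fun q => LinearMap.ker (h q).mulVecLin with hWdef
  set U : ∀ q : V, Submodule k (Fin (d q) → k) :=
    fun q => LinearMap.range (h q).mulVecLin with hUdef
  have hW : IsSubrep src tgt d φ W := by
    intro a x hx
    have h1 := LinearMap.congr_fun (hint a) x
    simp only [LinearMap.comp_apply] at h1
    have hx0 : (h (src a)).mulVecLin x = 0 := hx
    show (h (tgt a)).mulVecLin (φ a x) = 0
    rw [h1, hx0, map_zero]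
  have hU : IsSubrep src tgt d φ' U := by
    intro a y hy
    obtain ⟨x, rfl⟩ := hy
    refine ⟨φ a x, ?_⟩
    have h1 := LinearMap.congr_fun (hint a) x
    simpa only [LinearMap.comp_apply] using h1
  have hdim : ∀ q, (Module.finrank k (W q) : ℚ) + (Module.finrank k (U q) : ℚ) = d q := by
    intro q
    have h1 := LinearMap.finrank_range_add_finrank_ker (h q).mulVecLin
    rw [Module.finrank_fin_fun] at h1
    have : Module.finrank k (U q) + Module.finrank k (W q) = d q := h1
    push_cast [← this]
    ring
  have hsum : repWeight d θ W + repWeight d θ U = 0 := by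
    rw [repWeight, repWeight, ← Finset.sum_add_distrib, ← hθ]
    exact Finset.sum_congr rfl fun q _ => by rw [← mul_add, hdim q]
  have hWle := hst.1 W hW
  have hUle := hst'.1 U hU
  have hW0 : repWeight d θ W = 0 := by linarith
  have hWtop : W ≠ fun _ => ⊤ := by
    intro hEq
    apply hne
    intro q
    have h1 : LinearMap.ker (h q).mulVecLin = ⊤ := congrFun hEq q
    have h0 : (h q).mulVecLin = 0 := LinearMap.ker_eq_top.mp h1
    have h2 : ∀ j, (h q).mulVec (Pi.single j 1) = 0 := by
      intro j
      have := LinearMap.congr_fun h0 (Pi.single j 1)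
      simpa using this
    ext i j
    have h3 : Matrix.col (h q) j = 0 := by rw [← Matrix.mulVec_single_one, h2 j]
    have h4 := congrFun h3 i
    simpa using h4
  have hWbot : W = fun _ => ⊥ := by
    by_contra hWbot
    have := hst.2 W hW hWbot hWtop
    rw [hW0] at this
    exact lt_irrefl 0 this
  intro q
  have hker : LinearMap.ker (h q).mulVecLin = ⊥ := congrFun hWbot q
  have hinj : Function.Injective ((h q).mulVec) := LinearMap.ker_eq_bot.mp hker
  exact (Matrix.isUnit_iff_isUnit_det _).mp (Matrix.mulVec_injective_iff_isUnit.mp hinj)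

/-- A family of matrices `g_q` over the fraction field of a DVR intertwining two families of
matrices over the DVR whose reductions are `θ`-stable representations can be rescaled by a
common factor so that all entries lie in the DVR and all determinants are units. -/
theorem intertwiner_over_dvr_integral
    {A : Type*} [CommRing A] [IsDomain A] [IsDiscreteValuationRing A]
    {V Ar : Type*} [Fintype V] [Fintype Ar]
    (src tgt : Ar → V) (d : V → ℕ) (θ : V → ℚ)
    (hθ : ∑ q, θ q * (d q : ℚ) = 0)
    (ν ν' : ∀ a : Ar, Matrix (Fin (d (tgt a))) (Fin (d (src a))) A)
    (hst : RepStable src tgt d θ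
      (fun a => Matrix.mulVecLin ((ν a).map (IsLocalRing.residue A))))
    (hst' : RepStable src tgt d θ
      (fun a => Matrix.mulVecLin ((ν' a).map (IsLocalRing.residue A))))
    (g : ∀ q : V, Matrix (Fin (d q)) (Fin (d q)) (FractionRing A))
    (hg : ∀ q : V, IsUnit (g q).det)
    (hcomm : ∀ a : Ar, g (tgt a) * (ν a).map (algebraMap A (FractionRing A))
      = (ν' a).map (algebraMap A (FractionRing A)) * g (src a)) :
    ∃ c : FractionRing A, c ≠ 0 ∧ ∀ q : V,
      ∃ M : Matrix (Fin (d q)) (Fin (d q)) A,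
        M.map (algebraMap A (FractionRing A)) = c • g q ∧ IsUnit M.det := by
  classical
  set ι := algebraMap A (FractionRing A) with hιdef
  have hιinj : Function.Injective ι := IsFractionRing.injective A (FractionRing A)
  by_cases hd : ∀ q : V, d q = 0
  · refine ⟨1, one_ne_zero, fun q => ?_⟩
    haveI : IsEmpty (Fin (d q)) := by rw [hd q]; infer_instance
    exact ⟨0, Subsingleton.elim _ _, by simp [Matrix.det_isEmpty]⟩
  · push_neg at hd
    obtain ⟨q0, hq0⟩ := hd
    -- clear denominators
    obtain ⟨b, hb⟩ := IsLocalization.exist_integer_multiples_of_finite (nonZeroDivisors A)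
      (fun p : Σ q : V, Fin (d q) × Fin (d q) => g p.1 p.2.1 p.2.2)
    simp only [IsLocalization.IsInteger, RingHom.mem_range, Algebra.smul_def] at hb
    choose G hG using hb
    set Gm : ∀ q, Matrix (Fin (d q)) (Fin (d q)) A :=
      fun q => Matrix.of fun i j => G ⟨q, (i, j)⟩ with hGmdef
    have hbK : ι (b : A) ≠ 0 := by
      intro h0
      exact nonZeroDivisors.coe_ne_zero b (hιinj (h0.trans (map_zero ι).symm))
    have hGm : ∀ q, (Gm q).map ι = ι (b : A) • g q := by
      intro q; ext i j
      simpa [Gm, Matrix.map_apply, Matrix.smul_apply, smul_eq_mul] using hG ⟨q, (i, j)⟩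
    have hGcomm : ∀ a, Gm (tgt a) * ν a = ν' a * Gm (src a) := by
      intro a
      have h1 : (Gm (tgt a) * ν a).map ι = (ν' a * Gm (src a)).map ι := by
        rw [Matrix.map_mul, Matrix.map_mul, hGm, hGm, Matrix.smul_mul, hcomm a, Matrix.mul_smul]
      ext i j
      exact hιinj (congrFun (congrFun h1 i) j)
    -- a nonzero entry
    haveI : Nonempty (Fin (d q0)) := ⟨⟨0, Nat.pos_of_ne_zero hq0⟩⟩
    have hgq0 : g q0 ≠ 0 := by
      intro h0
      have := hg q0
      rw [h0, Matrix.det_zero] at this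
      exact this.ne_zero rfl
    obtain ⟨i0, j0, hij⟩ : ∃ i j, g q0 i j ≠ 0 := by
      by_contra hcon; push_neg at hcon
      exact hgq0 (by ext i j; simpa using hcon i j)
    have hGp0 : G ⟨q0, (i0, j0)⟩ ≠ 0 := by
      intro h0
      have h1 := hG ⟨q0, (i0, j0)⟩
      rw [h0, map_zero] at h1
      exact mul_ne_zero hbK hij h1.symm
    -- uniformizer and minimal valuation
    obtain ⟨ϖ, hϖ⟩ := IsDiscreteValuationRing.exists_irreducible A
    have hϖ0 : ϖ ≠ 0 := hϖ.ne_zero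
    obtain ⟨k0, u, hu⟩ := IsDiscreteValuationRing.eq_unit_mul_pow_irreducible hGp0 hϖ
    have hPex : ∃ m, ¬ ∀ p : Σ q : V, Fin (d q) × Fin (d q), ϖ ^ m ∣ G p := by
      refine ⟨k0 + 1, fun hall => ?_⟩
      obtain ⟨t, ht⟩ := hall ⟨q0, (i0, j0)⟩
      rw [hu] at ht
      have h2 : (u : A) = ϖ * t := by
        apply mul_left_cancel₀ (pow_ne_zero k0 hϖ0)
        calc ϖ ^ k0 * (u : A) = (u : A) * ϖ ^ k0 := mul_comm _ _
          _ = ϖ ^ (k0 + 1) * t := ht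
          _ = ϖ ^ k0 * (ϖ * t) := by ring
      exact hϖ.not_isUnit (isUnit_of_dvd_unit ⟨t, h2⟩ u.isUnit)
    set n0 := Nat.find hPex with hn0def
    have hn0 : ¬ ∀ p : Σ q : V, Fin (d q) × Fin (d q), ϖ ^ n0 ∣ G p := Nat.find_spec hPex
    have hn0pos : n0 ≠ 0 := by
      intro h0
      exact hn0 (by rw [h0]; intro p; simp)
    set n := n0 - 1 with hndef
    have hdvd : ∀ p : Σ q : V, Fin (d q) × Fin (d q), ϖ ^ n ∣ G p := by
      by_contra hcon
      exact Nat.find_min hPex (Nat.sub_lt (Nat.pos_of_ne_zero hn0pos) one_pos) hcon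
    have hstrict : ¬ ∀ p : Σ q : V, Fin (d q) × Fin (d q), ϖ ^ (n + 1) ∣ G p := by
      rw [hndef, Nat.sub_add_cancel (Nat.one_le_iff_ne_zero.mpr hn0pos)]
      exact hn0
    choose H hH using hdvd
    set Hm : ∀ q, Matrix (Fin (d q)) (Fin (d q)) A :=
      fun q => Matrix.of fun i j => H ⟨q, (i, j)⟩ with hHmdef
    have hGHm : ∀ q, Gm q = (ϖ ^ n) • Hm q := by
      intro q; ext i j
      simpa [Gm, Hm, Matrix.smul_apply, smul_eq_mul] using hH ⟨q, (i, j)⟩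
    have hπn0 : (ϖ : A) ^ n ≠ 0 := pow_ne_zero _ hϖ0
    have hHcomm : ∀ a, Hm (tgt a) * ν a = ν' a * Hm (src a) := by
      intro a
      have h1 : (ϖ ^ n) • (Hm (tgt a) * ν a) = (ϖ ^ n) • (ν' a * Hm (src a)) := by
        rw [← Matrix.smul_mul, ← hGHm, ← Matrix.mul_smul, ← hGHm, hGcomm a]
      ext i j
      have h2 := congrFun (congrFun h1 i) j
      simp only [Matrix.smul_apply, smul_eq_mul] at h2
      exact mul_left_cancel₀ hπn0 h2
    -- residues
    set r := IsLocalRing.residue A with hrdef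
    have hrcomm : ∀ a,
        (Hm (tgt a)).map r * (ν a).map r = (ν' a).map r * (Hm (src a)).map r := by
      intro a
      rw [← Matrix.map_mul, ← Matrix.map_mul, hHcomm a]
    have hne : ¬ ∀ q, (Hm q).map r = 0 := by
      intro hall
      apply hstrict
      rintro ⟨q, i, j⟩
      have h1 : r (H ⟨q, (i, j)⟩) = 0 := by
        have := congrFun (congrFun (hall q) i) j
        simpa [Hm, Matrix.map_apply] using this
      have h2 : ϖ ∣ H ⟨q, (i, j)⟩ := by
        rw [IsLocalRing.residue_eq_zero_iff,
          (IsDiscreteValuationRing.irreducible_iff_uniformizer ϖ).mp hϖ,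
          Ideal.mem_span_singleton] at h1
        exact h1
      obtain ⟨t, ht⟩ := h2
      exact ⟨t, by rw [hH ⟨q, (i, j)⟩, ht, pow_succ]; ring⟩
    have hint : ∀ a, ((Hm (tgt a)).map r).mulVecLin ∘ₗ Matrix.mulVecLin ((ν a).map r)
        = Matrix.mulVecLin ((ν' a).map r) ∘ₗ ((Hm (src a)).map r).mulVecLin := by
      intro a
      rw [← Matrix.mulVecLin_mul, ← Matrix.mulVecLin_mul, hrcomm a]
    have hunit := repHom_isUnit_det src tgt d θ hθ _ _ hst hst'
      (fun q => (Hm q).map r) hint hne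
    have hHu : ∀ q, IsUnit (Hm q).det := by
      intro q
      have h1 : r ((Hm q).det) ≠ 0 := by
        rw [RingHom.map_det]
        exact (hunit q).ne_zero
      by_contra hcon
      exact h1 (IsLocalRing.residue_eq_zero_iff _ |>.mpr
        ((IsLocalRing.mem_maximalIdeal _).mpr (mem_nonunits_iff.mpr hcon)))
    -- final rescaling
    have hπK : ι (ϖ ^ n) ≠ 0 := by
      intro h0
      exact hπn0 (hιinj (h0.trans (map_zero ι).symm))
    refine ⟨(ι (ϖ ^ n))⁻¹ * ι (b : A), mul_ne_zero (inv_ne_zero hπK) hbK, fun q => ?_⟩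
    refine ⟨Hm q, ?_, hHu q⟩
    have h1 : ι (ϖ ^ n) • (Hm q).map ι = ι (b : A) • g q := by
      rw [← hGm q, hGHm q]
      ext i j
      simp [Matrix.map_apply, Matrix.smul_apply, smul_eq_mul, map_mul]
    calc (Hm q).map ι = (ι (ϖ ^ n))⁻¹ • (ι (ϖ ^ n) • (Hm q).map ι) := by
          rw [smul_smul, inv_mul_cancel₀ hπK, one_smul]
      _ = (ι (ϖ ^ n))⁻¹ • (ι (b : A) • g q) := by rw [h1]
      _ = ((ι (ϖ ^ n))⁻¹ * ι (b : A)) • g q := by rw [smul_smul]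
end
end

section
/- Let k be a field, n ≥ 1, θ ∈ ℚ^n with θ_i ≥ 0 for all i and ∑_i θ_i = 2, and s = (s_1,…,s_n) a tuple of vectors in k^2. Then: (a) s is θ-semistable if and only if θ_i = 0 for every i with s_i = 0, and for every 1-dimensional k-subspace L ⊆ k^2 one has ∑_{i : s_i ∈ L} θ_i ≤ 1; (b) s is θ-stable if and only if s_i ≠ 0 and θ_i > 0 for all i, and for every 1-dimensional k-subspace L ⊆ k^2 one has ∑_{i : s_i ∈ L} θ_i < 1. -/
noncomputable section

open Finset
open scoped Classical

variable {k : Type*} [Field k]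

/-- A pair `(U, W)` is a subrepresentation of the representation `s` of the quiver `Q_n`
(with dimension vector `(2;1,…,1)`) if `s i ∈ W` for all `i ∈ U`. -/
def QnIsSubrep {n : ℕ} (s : Fin n → Fin 2 → k) (U : Finset (Fin n))
    (W : Submodule k (Fin 2 → k)) : Prop :=
  ∀ i ∈ U, s i ∈ W

/-- `s` is `θ`-semistable: `θ(U,W) = -dim W + ∑_{i∈U} θ_i ≤ 0` for every subrepresentation. -/
def QnSemistable {n : ℕ} (θ : Fin n → ℚ) (s : Fin n → Fin 2 → k) : Prop :=
  ∀ (U : Finset (Fin n)) (W : Submodule k (Fin 2 → k)), QnIsSubrep s U W →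
    -(Module.finrank k W : ℚ) + ∑ i ∈ U, θ i ≤ 0

/-- `s` is `θ`-stable: semistable, and `θ(U,W) < 0` for every subrepresentation other than
`(∅, 0)` and `({1,…,n}, k²)`. -/
def QnStable {n : ℕ} (θ : Fin n → ℚ) (s : Fin n → Fin 2 → k) : Prop :=
  QnSemistable θ s ∧
  ∀ (U : Finset (Fin n)) (W : Submodule k (Fin 2 → k)), QnIsSubrep s U W →
    ¬(U = ∅ ∧ W = ⊥) → ¬(U = Finset.univ ∧ W = ⊤) →
    -(Module.finrank k W : ℚ) + ∑ i ∈ U, θ i < 0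

/-- Characterisation of `θ`-(semi)stability of representations of `Q_n`. -/
theorem qn_semistable_stable_criterion {n : ℕ} (hn : 1 ≤ n)
    (θ : Fin n → ℚ) (hθ : ∀ i, 0 ≤ θ i) (hsum : ∑ i, θ i = 2)
    (s : Fin n → Fin 2 → k) :
    (QnSemistable θ s ↔
      ((∀ i, s i = 0 → θ i = 0) ∧
        ∀ L : Submodule k (Fin 2 → k), Module.finrank k L = 1 →
          ∑ i ∈ Finset.univ.filter (fun i => s i ∈ L), θ i ≤ 1)) ∧
    (QnStable θ s ↔
      ((∀ i, s i ≠ 0 ∧ 0 < θ i) ∧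
        ∀ L : Submodule k (Fin 2 → k), Module.finrank k L = 1 →
          ∑ i ∈ Finset.univ.filter (fun i => s i ∈ L), θ i < 1)) := by
  have hfr : Module.finrank k (Fin 2 → k) = 2 := Module.finrank_fin_fun k
  have hrank : ∀ W : Submodule k (Fin 2 → k),
      Module.finrank k W = 0 ∨ Module.finrank k W = 1 ∨ Module.finrank k W = 2 := by
    intro W
    have := Submodule.finrank_le W
    rw [hfr] at this
    omega
  have hbt : (⊥ : Submodule k (Fin 2 → k)) ≠ ⊤ := by
    intro hEq
    have h0 : Module.finrank k (⊥ : Submodule k (Fin 2 → k)) = 0 := finrank_bot k _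
    rw [hEq, finrank_top, hfr] at h0
    omega
  have hSemi : QnSemistable θ s ↔
      ((∀ i, s i = 0 → θ i = 0) ∧
        ∀ L : Submodule k (Fin 2 → k), Module.finrank k L = 1 →
          ∑ i ∈ Finset.univ.filter (fun i => s i ∈ L), θ i ≤ 1) := by
    constructor
    · intro h
      constructor
      · intro i hi
        have hsub : QnIsSubrep s (univ.filter fun j => s j = 0) ⊥ := by
          intro j hj
          simp only [mem_filter] at hj
          simp [hj.2]
        have h2 := h _ _ hsub
        rw [finrank_bot] at h2
        have hz : ∑ j ∈ univ.filter (fun j => s j = 0), θ j = 0 :=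
          le_antisymm (by push_cast at h2; linarith)
            (Finset.sum_nonneg fun j _ => hθ j)
        exact (Finset.sum_eq_zero_iff_of_nonneg (fun j _ => hθ j)).mp hz i (by simp [hi])
      · intro L hL
        have hsub : QnIsSubrep s (univ.filter fun j => s j ∈ L) L := by
          intro j hj; simpa using hj
        have h2 := h _ _ hsub
        rw [hL] at h2
        push_cast at h2
        linarith
    · rintro ⟨h0, hL⟩ U W hsub
      rcases hrank W with h | h | h
      · rw [h]
        have hW : W = ⊥ := by rwa [Submodule.finrank_eq_zero] at h
        have hz : ∑ i ∈ U, θ i = 0 := Finset.sum_eq_zero fun i hi =>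
          h0 i (by simpa [hW, Submodule.mem_bot] using hsub i hi)
        simp [hz]
      · rw [h]
        have h1 := hL W h
        have h2 : ∑ i ∈ U, θ i ≤ ∑ i ∈ univ.filter (fun i => s i ∈ W), θ i := by
          apply Finset.sum_le_sum_of_subset_of_nonneg
          · intro i hi; simp [hsub i hi]
          · intro i _ _; exact hθ i
        push_cast
        linarith
      · rw [h]
        have h2 : ∑ i ∈ U, θ i ≤ ∑ i, θ i :=
          Finset.sum_le_sum_of_subset_of_nonneg (Finset.subset_univ U) fun i _ _ => hθ i
        rw [hsum] at h2
        push_cast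
        linarith
  refine ⟨hSemi, ?_⟩
  constructor
  · rintro ⟨hss, hst⟩
    refine ⟨fun i => ⟨?_, ?_⟩, ?_⟩
    · intro hsi
      have hsub : QnIsSubrep s {i} ⊥ := by
        intro j hj
        simp only [Finset.mem_singleton] at hj
        subst hj
        simp [hsi]
      have h2 := hst {i} ⊥ hsub (by simp) (fun ⟨_, hb⟩ => hbt hb)
      rw [finrank_bot] at h2
      simp only [Finset.sum_singleton] at h2
      have := hθ i
      push_cast at h2
      linarith
    · have hsub : QnIsSubrep s (univ.erase i) ⊤ := fun j _ => Submodule.mem_top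
      have h2 := hst (univ.erase i) ⊤ hsub
        (fun ⟨_, hb⟩ => hbt hb.symm)
        (by
          rintro ⟨he, -⟩
          have hni := Finset.notMem_erase i (univ : Finset (Fin n))
          rw [he] at hni
          exact hni (Finset.mem_univ i))
      rw [finrank_top, hfr] at h2
      rw [Finset.sum_erase_eq_sub (Finset.mem_univ i), hsum] at h2
      push_cast at h2
      linarith
    · intro L hL
      have hsub : QnIsSubrep s (univ.filter fun j => s j ∈ L) L := by
        intro j hj; simpa using hj
      have hLb : L ≠ ⊥ := by
        intro hEq
        rw [hEq, finrank_bot] at hL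
        omega
      have hLt : L ≠ ⊤ := by
        intro hEq
        rw [hEq, finrank_top, hfr] at hL
        omega
      have h2 := hst _ _ hsub (fun ⟨_, hb⟩ => hLb hb) (fun ⟨_, hb⟩ => hLt hb)
      rw [hL] at h2
      push_cast at h2
      linarith
  · rintro ⟨hne, hL⟩
    refine ⟨hSemi.mpr ⟨fun i hi => absurd hi (hne i).1,
      fun L hL' => le_of_lt (hL L hL')⟩, ?_⟩
    intro U W hsub hne1 hne2
    rcases hrank W with h | h | h
    · have hW : W = ⊥ := by rwa [Submodule.finrank_eq_zero] at h
      have hU : U = ∅ := by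
        by_contra hU
        obtain ⟨i, hi⟩ := Finset.nonempty_iff_ne_empty.mpr hU
        exact (hne i).1 (by simpa [hW, Submodule.mem_bot] using hsub i hi)
      exact absurd ⟨hU, hW⟩ hne1
    · rw [h]
      have h1 := hL W h
      have h2 : ∑ i ∈ U, θ i ≤ ∑ i ∈ univ.filter (fun i => s i ∈ W), θ i := by
        apply Finset.sum_le_sum_of_subset_of_nonneg
        · intro i hi; simp [hsub i hi]
        · intro i _ _; exact hθ i
      push_cast
      linarith
    · have hW : W = ⊤ := Submodule.eq_top_of_finrank_eq (h.trans hfr.symm)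
      have hU : U ≠ Finset.univ := fun hU => hne2 ⟨hU, hW⟩
      have : ∃ j, j ∉ U := by
        by_contra h'
        push_neg at h'
        exact hU (Finset.eq_univ_iff_forall.mpr h')
      obtain ⟨j, hj⟩ := this
      have h2 : ∑ i ∈ U, θ i ≤ ∑ i ∈ univ.erase j, θ i := by
        apply Finset.sum_le_sum_of_subset_of_nonneg
        · intro i hi
          exact Finset.mem_erase.mpr ⟨fun hij => hj (hij ▸ hi), Finset.mem_univ i⟩
        · intro i _ _; exact hθ i
      rw [Finset.sum_erase_eq_sub (Finset.mem_univ j), hsum] at h2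
      have hjp := (hne j).2
      rw [h]
      push_cast
      linarith
end
end

section
/- Let k be an infinite field, n ≥ 1, and θ ∈ ℚ^n with ∑_i θ_i = 2. There exists a θ-semistable representation s = (s_1,…,s_n) of Q_n over k if and only if 0 ≤ θ_i ≤ 1 for all i. -/
noncomputable section

open Finset
open scoped Classical

variable {k : Type*} [Field k]

/-- Over an infinite field a `θ`-semistable representation of `Q_n` exists if and only if
`0 ≤ θ_i ≤ 1` for all `i`. -/
theorem exists_qn_semistable_iff [Infinite k] {n : ℕ} (hn : 1 ≤ n)
    (θ : Fin n → ℚ) (hsum : ∑ i, θ i = 2) :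
    (∃ s : Fin n → Fin 2 → k, QnSemistable θ s) ↔ ∀ i, 0 ≤ θ i ∧ θ i ≤ 1 := by
  constructor
  · rintro ⟨s, hs⟩ i
    constructor
    · have h := hs (Finset.univ.erase i) ⊤ (fun j _ => Submodule.mem_top)
      rw [finrank_top, Module.finrank_fin_fun,
        Finset.sum_erase_eq_sub (Finset.mem_univ i), hsum] at h
      push_cast at h
      linarith
    · have h := hs {i} (Submodule.span k {s i})
        (by intro j hj; rw [Finset.mem_singleton] at hj; subst hj
            exact Submodule.mem_span_singleton_self _)
      have hr : Module.finrank k (Submodule.span k ({s i} : Set (Fin 2 → k))) ≤ 1 := by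
        rcases eq_or_ne (s i) 0 with h0 | h0
        · rw [h0, Submodule.span_zero_singleton]; simp
        · rw [finrank_span_singleton h0]
      rw [Finset.sum_singleton] at h
      have : (Module.finrank k (Submodule.span k ({s i} : Set (Fin 2 → k))) : ℚ) ≤ 1 := by
        exact_mod_cast hr
      linarith
  · intro hθ
    obtain x : Fin n ↪ k := (Fin.valEmbedding).trans (Infinite.natEmbedding k)
    refine ⟨fun i => ![1, x i], ?_⟩
    intro U W hUW
    have hfr : Module.finrank k W ≤ 2 := by
      have := Submodule.finrank_le W
      rwa [Module.finrank_fin_fun] at this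
    rcases Nat.lt_or_ge (Module.finrank k W) 2 with hW | hW
    · -- finrank ≤ 1 : U has at most one element
      have hcard : U.card ≤ 1 := by
        rw [Finset.card_le_one]
        intro a ha b hb
        by_contra hab
        have hli : LinearIndependent k ![(![1, x a] : Fin 2 → k), ![1, x b]] := by
          rw [LinearIndependent.pair_iff]
          intro p q hpq
          have h1 : p + q = 0 := by
            have := congrFun hpq 0; simpa using this
          have h2 : p * x a + q * x b = 0 := by
            have := congrFun hpq 1; simpa using this
          have hxa : x a ≠ x b := fun h => hab (x.injective h)
          have hp : p * (x a - x b) = 0 := by linear_combination h2 - x b * h1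
          have hp0 : p = 0 := by
            rcases mul_eq_zero.mp hp with h | h
            · exact h
            · exact absurd (sub_eq_zero.mp h) hxa
          exact ⟨hp0, by linear_combination h1 - hp0⟩
        have hsp : Submodule.span k (Set.range ![(![1, x a] : Fin 2 → k), ![1, x b]]) ≤ W := by
          rw [Submodule.span_le]
          rintro v ⟨t, rfl⟩
          fin_cases t
          · exact hUW a ha
          · exact hUW b hb
        have h2le : 2 ≤ Module.finrank k W := by
          have := Submodule.finrank_mono (s := Submodule.span k
            (Set.range ![(![1, x a] : Fin 2 → k), ![1, x b]])) (t := W) hsp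
          rwa [finrank_span_eq_card hli, Fintype.card_fin] at this
        omega
      rcases Finset.eq_empty_or_nonempty U with rfl | ⟨a, ha⟩
      · simp
      · have hU : U = {a} := by
          refine Finset.eq_singleton_iff_unique_mem.mpr ⟨ha, fun b hb => ?_⟩
          exact (Finset.card_le_one.mp hcard) b hb a ha
        have hvne : (![1, x a] : Fin 2 → k) ≠ 0 := by
          intro h; have := congrFun h 0; simpa using this
        have h1le : 1 ≤ Module.finrank k W := by
          have hsp : Submodule.span k ({![1, x a]} : Set (Fin 2 → k)) ≤ W :=
            Submodule.span_le.mpr (by simpa using hUW a ha)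
          have := Submodule.finrank_mono hsp
          rwa [finrank_span_singleton hvne] at this
        rw [hU, Finset.sum_singleton]
        have : (1 : ℚ) ≤ (Module.finrank k W : ℚ) := by exact_mod_cast h1le
        linarith [(hθ a).2]
    · -- finrank = 2
      have h2 : Module.finrank k W = 2 := le_antisymm hfr hW
      have hle : ∑ i ∈ U, θ i ≤ ∑ i, θ i :=
        Finset.sum_le_sum_of_subset_of_nonneg (Finset.subset_univ U)
          (fun j _ _ => (hθ j).1)
      rw [hsum] at hle
      rw [h2]
      push_cast
      linarith
end
end

section
/- Let k be an infinite field, n ≥ 1, and θ ∈ ℚ^n with ∑_i θ_i = 2. There exists a θ-stable representation s = (s_1,…,s_n) of Q_n over k if and only if 0 < θ_i < 1 for all i. -/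
noncomputable section

open Finset
open scoped Classical

variable {k : Type*} [Field k]

lemma qn_pair_indep {a b : k} (hab : a ≠ b) :
    LinearIndependent k ![(![1,a] : Fin 2 → k), ![1,b]] := by
  rw [LinearIndependent.pair_iff]
  intro s t h
  have h0 := congrFun h 0
  have h1 := congrFun h 1
  simp at h0 h1
  have hsab : s * (a - b) = 0 := by linear_combination h1 - b * h0
  rcases mul_eq_zero.mp hsab with hs | hab'
  · exact ⟨hs, by rwa [hs, zero_add] at h0⟩
  · exact absurd (sub_eq_zero.mp hab') hab

/-- Over an infinite field a `θ`-stable representation of `Q_n` exists if and only if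
`0 < θ_i < 1` for all `i`. -/
theorem exists_qn_stable_iff [Infinite k] {n : ℕ} (hn : 1 ≤ n)
    (θ : Fin n → ℚ) (hsum : ∑ i, θ i = 2) :
    (∃ s : Fin n → Fin 2 → k, QnStable θ s) ↔ ∀ i, 0 < θ i ∧ θ i < 1 := by
  have hfr2 : Module.finrank k (Fin 2 → k) = 2 := by simp [Module.finrank_fin_fun]
  constructor
  · rintro ⟨s, hsemi, hstab⟩ i
    constructor
    · -- θ i > 0 : use U = univ.erase i, W = ⊤
      have hsub : QnIsSubrep s (Finset.univ.erase i) ⊤ := fun j _ => Submodule.mem_top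
      have h1 : ¬((Finset.univ.erase i) = ∅ ∧ (⊤ : Submodule k (Fin 2 → k)) = ⊥) := by
        rintro ⟨-, h⟩
        exact absurd h.symm bot_lt_top.ne
      have h2 : ¬((Finset.univ.erase i) = Finset.univ ∧ (⊤ : Submodule k (Fin 2 → k)) = ⊤) := by
        rintro ⟨h, -⟩
        have : i ∈ Finset.univ.erase i := by rw [h]; exact Finset.mem_univ i
        exact (Finset.mem_erase.mp this).1 rfl
      have hst := hstab _ _ hsub h1 h2
      rw [finrank_top, hfr2] at hst
      have hsumerase : θ i + ∑ j ∈ Finset.univ.erase i, θ j = 2 := by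
        rw [Finset.add_sum_erase _ _ (Finset.mem_univ i), hsum]
      push_cast at hst
      linarith
    · -- θ i < 1 : use U = {i}, W = span {s i}
      have hsub : QnIsSubrep s {i} (Submodule.span k {s i}) := by
        intro j hj
        rw [Finset.mem_singleton] at hj
        subst hj
        exact Submodule.mem_span_singleton_self _
      have hle : Module.finrank k (Submodule.span k {s i}) ≤ 1 := by
        rcases eq_or_ne (s i) 0 with h | h
        · rw [h, Submodule.span_zero_singleton]
          simp
        · rw [finrank_span_singleton h]
      have h1 : ¬(({i} : Finset (Fin n)) = ∅ ∧ Submodule.span k {s i} = ⊥) := by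
        rintro ⟨h, -⟩
        simpa using h
      have h2 : ¬(({i} : Finset (Fin n)) = Finset.univ ∧ Submodule.span k {s i} = ⊤) := by
        rintro ⟨-, h⟩
        rw [h, finrank_top, hfr2] at hle
        omega
      have hst := hstab _ _ hsub h1 h2
      rw [Finset.sum_singleton] at hst
      have hlt : (θ i : ℚ) < (Module.finrank k (Submodule.span k {s i}) : ℚ) := by linarith
      calc θ i < (Module.finrank k (Submodule.span k {s i}) : ℚ) := hlt
        _ ≤ 1 := by exact_mod_cast hle
  · intro hθ
    set x : Fin n → k := fun i => Infinite.natEmbedding k i with hx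
    have hxinj : Function.Injective x := fun i j h => by
      have := (Infinite.natEmbedding k).injective h
      exact Fin.val_injective this
    refine ⟨fun i => ![1, x i], ?_⟩
    have key : ∀ (U : Finset (Fin n)) (W : Submodule k (Fin 2 → k)),
        QnIsSubrep (fun i => ![1, x i]) U W →
        (-(Module.finrank k W : ℚ) + ∑ i ∈ U, θ i ≤ 0) ∧
        (¬(U = ∅ ∧ W = ⊥) → ¬(U = Finset.univ ∧ W = ⊤) →
          -(Module.finrank k W : ℚ) + ∑ i ∈ U, θ i < 0) := by
      intro U W hsub
      have hWle : Module.finrank k W ≤ 2 := by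
        have := Submodule.finrank_le W
        rwa [hfr2] at this
      have hcases : Module.finrank k W = 0 ∨ Module.finrank k W = 1 ∨
          Module.finrank k W = 2 := by omega
      rcases hcases with h | h | h
      · -- W = ⊥, so U = ∅
        have hWbot : W = ⊥ := Submodule.finrank_eq_zero.mp h
        have hU : U = ∅ := by
          by_contra hUne
          obtain ⟨i, hi⟩ := Finset.nonempty_iff_ne_empty.mpr hUne
          have hm := hsub i hi
          rw [hWbot, Submodule.mem_bot] at hm
          have := congrFun hm 0
          simp at this
        subst hU
        refine ⟨by simp [h], fun hne _ => absurd ⟨rfl, hWbot⟩ hne⟩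
      · -- dim 1 : at most one index in U
        have huniq : ∀ i ∈ U, ∀ j ∈ U, i = j := by
          intro i hi j hj
          by_contra hij
          have hind := qn_pair_indep (k := k) (a := x i) (b := x j)
            (fun hc => hij (hxinj hc))
          have hsp : Submodule.span k
              (Set.range ![(![1, x i] : Fin 2 → k), ![1, x j]]) ≤ W := by
            rw [Submodule.span_le]
            rintro v ⟨m, rfl⟩
            fin_cases m
            · simpa using hsub i hi
            · simpa using hsub j hj
          have h2le := Submodule.finrank_mono hsp
          rw [finrank_span_eq_card hind] at h2le
          simp at h2le
          omega
        have hUsum : ∑ i ∈ U, θ i < 1 := by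
          rcases U.eq_empty_or_nonempty with rfl | ⟨i, hi⟩
          · simp
          · have hUi : U = {i} :=
              Finset.eq_singleton_iff_unique_mem.mpr ⟨hi, fun j hj => huniq j hj i hi⟩
            rw [hUi, Finset.sum_singleton]
            exact (hθ i).2
        rw [h]
        push_cast
        exact ⟨by linarith, fun _ _ => by linarith⟩
      · -- W = ⊤
        have hWtop : W = ⊤ := Submodule.eq_top_of_finrank_eq (by rw [h, hfr2])
        have hsle : ∑ i ∈ U, θ i ≤ 2 := by
          rw [← hsum]
          exact Finset.sum_le_sum_of_subset_of_nonneg (Finset.subset_univ U)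
            (fun i _ _ => (hθ i).1.le)
        refine ⟨by rw [h]; push_cast; linarith, fun _ hne => ?_⟩
        have hUne : U ≠ Finset.univ := fun hU => hne ⟨hU, hWtop⟩
        obtain ⟨i, hiu, hiU⟩ :=
          Finset.exists_of_ssubset (lt_of_le_of_ne (Finset.subset_univ U) hUne)
        have hslt : ∑ i ∈ U, θ i < 2 := by
          rw [← hsum]
          exact Finset.sum_lt_sum_of_subset (Finset.subset_univ U) hiu hiU (hθ i).1
            (fun j _ _ => (hθ j).1.le)
        rw [h]
        push_cast
        linarith
    constructor
    · intro U W h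
      exact (key U W h).1
    · intro U W h h1 h2
      exact (key U W h).2 h1 h2

end
end

section
/- Let k be a field and s = (s_1,…,s_n) a tuple of nonzero vectors s_i ∈ k^2. Let {1,…,n} = ⊔_l J_l be the partition defined by: i and j lie in the same block if and only if s_i and s_j are linearly dependent. Then the set Θ(s) = {θ ∈ Δ(2,n) : s is θ-semistable} satisfies Θ(s) = {θ ∈ Δ(2,n) : ∑_{i∈J_l} θ_i ≤ 1 for every block J_l} = conv{ e_i + e_j : i and j lie in different blocks }. -/
noncomputable section

open Finset
open scoped Classical

variable {k : Type*} [Field k]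

/-- The hypersimplex `Δ(2,n) = {θ ∈ ℚ^n : 0 ≤ θ_i ≤ 1, ∑ θ_i = 2}`. -/
def hypersimplex (n : ℕ) : Set (Fin n → ℚ) :=
  {θ | (∀ i, 0 ≤ θ i ∧ θ i ≤ 1) ∧ ∑ i, θ i = 2}


namespace QnAux

variable {n : ℕ}


variable {n : ℕ}

def goodSet (Bl : Fin n → Finset (Fin n)) : Set (Fin n → ℚ) :=
  {θ | θ ∈ hypersimplex n ∧ ∀ i, ∑ t ∈ Bl i, θ t ≤ 1}

def vertexSet (Bl : Fin n → Finset (Fin n)) : Set (Fin n → ℚ) :=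
  {v | ∃ i j, j ∉ Bl i ∧ v = Pi.single i 1 + Pi.single j 1}

def fracs (θ : Fin n → ℚ) : Finset (Fin n) :=
  Finset.univ.filter (fun t => 0 < θ t ∧ θ t < 1)

def pert (θ : Fin n → ℚ) (i j : Fin n) (ε : ℚ) : Fin n → ℚ :=
  fun t => if t = i then θ i + ε else if t = j then θ j - ε else θ t

lemma pert_eq (θ : Fin n → ℚ) {i j : Fin n} (hij : i ≠ j) (ε : ℚ) (t : Fin n) :
    pert θ i j ε t = θ t + (if t = i then ε else 0) - (if t = j then ε else 0) := by
  unfold pert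
  by_cases h1 : t = i
  · subst h1; simp [hij]
  · by_cases h2 : t = j
    · subst h2; simp [h1, Ne.symm hij]
    · simp [h1, h2]

lemma pert_sum (θ : Fin n → ℚ) {i j : Fin n} (hij : i ≠ j) (ε : ℚ)
    (S : Finset (Fin n)) :
    ∑ t ∈ S, pert θ i j ε t
      = ∑ t ∈ S, θ t + (if i ∈ S then ε else 0) - (if j ∈ S then ε else 0) := by
  simp only [pert_eq θ hij]
  rw [Finset.sum_sub_distrib, Finset.sum_add_distrib, Finset.sum_ite_eq',
    Finset.sum_ite_eq']

lemma convex_goodSet (Bl : Fin n → Finset (Fin n)) : Convex ℚ (goodSet Bl) := by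
  intro x hx y hy a b ha hb hab
  obtain ⟨⟨hx1, hx2⟩, hx3⟩ := hx
  obtain ⟨⟨hy1, hy2⟩, hy3⟩ := hy
  have habv : ∀ t, (a • x + b • y) t = a * x t + b * y t := by
    intro t; simp [smul_eq_mul]
  refine ⟨⟨fun i => ?_, ?_⟩, fun i => ?_⟩
  · rw [habv]
    constructor
    · have h1 := (hx1 i).1; have h2 := (hy1 i).1
      nlinarith [mul_nonneg ha h1, mul_nonneg hb h2]
    · nlinarith [mul_le_mul_of_nonneg_left (hx1 i).2 ha,
        mul_le_mul_of_nonneg_left (hy1 i).2 hb]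
  · have : ∑ i, (a • x + b • y) i = a * ∑ i, x i + b * ∑ i, y i := by
      simp only [habv]
      rw [Finset.sum_add_distrib, ← Finset.mul_sum, ← Finset.mul_sum]
    rw [this, hx2, hy2]; linarith
  · have : ∑ t ∈ Bl i, (a • x + b • y) t
        = a * ∑ t ∈ Bl i, x t + b * ∑ t ∈ Bl i, y t := by
      simp only [habv]
      rw [Finset.sum_add_distrib, ← Finset.mul_sum, ← Finset.mul_sum]
    rw [this]
    nlinarith [mul_le_mul_of_nonneg_left (hx3 i) ha,
      mul_le_mul_of_nonneg_left (hy3 i) hb]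

lemma vertex_subset_good (Bl : Fin n → Finset (Fin n)) (hmem : ∀ i, i ∈ Bl i)
    (heq : ∀ i j, j ∈ Bl i → Bl j = Bl i) : vertexSet Bl ⊆ goodSet Bl := by
  rintro v ⟨i, j, hnotin, rfl⟩
  have hij : i ≠ j := fun h => hnotin (h ▸ hmem i)
  have key : ∀ t, (Pi.single i 1 + Pi.single j 1 : Fin n → ℚ) t
      = (if t = i then 1 else 0) + (if t = j then 1 else 0) := by
    intro t; simp [Pi.single_apply]
  refine ⟨⟨fun t => ?_, ?_⟩, fun l => ?_⟩
  · rw [key]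
    by_cases h1 : t = i
    · subst h1
      simp [hij]
    · by_cases h2 : t = j
      · subst h2; simp [Ne.symm hij]
      · simp [h1, h2]
  · simp only [key]
    rw [Finset.sum_add_distrib, Finset.sum_ite_eq', Finset.sum_ite_eq']
    simp; norm_num
  · simp only [key]
    rw [Finset.sum_add_distrib, Finset.sum_ite_eq', Finset.sum_ite_eq']
    by_cases h1 : i ∈ Bl l
    · by_cases h2 : j ∈ Bl l
      · exfalso
        have : Bl i = Bl l := heq l i h1
        exact hnotin (this ▸ h2)
      · simp [h1, h2]
    · by_cases h2 : j ∈ Bl l <;> simp [h1, h2]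

lemma frac_empty_case (Bl : Fin n → Finset (Fin n)) (hmem : ∀ i, i ∈ Bl i)
    (θ : Fin n → ℚ) (hθ : θ ∈ goodSet Bl) (hf : fracs θ = ∅) : θ ∈ vertexSet Bl := by
  have h01 : ∀ t, θ t = 0 ∨ θ t = 1 := by
    intro t
    have ht := hθ.1.1 t
    have hnf : ¬(0 < θ t ∧ θ t < 1) := by
      intro h
      have : t ∈ fracs θ := by simp [fracs, h]
      rw [hf] at this
      exact absurd this (Finset.notMem_empty t)
    rcases eq_or_lt_of_le ht.1 with h | h
    · exact Or.inl h.symm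
    · rcases eq_or_lt_of_le ht.2 with h2 | h2
      · exact Or.inr h2
      · exact absurd ⟨h, h2⟩ hnf
  set S := Finset.univ.filter (fun t => θ t = 1) with hS
  have hsum : ∑ t, θ t = ∑ t, (if θ t = 1 then (1 : ℚ) else 0) := by
    apply Finset.sum_congr rfl
    intro t _
    rcases h01 t with h | h <;> simp [h]
  have hcard : (S.card : ℚ) = 2 := by
    rw [← Finset.sum_boole, ← hsum, hθ.1.2]
  have hcard2 : S.card = 2 := by exact_mod_cast hcard
  obtain ⟨i, j, hij, hSij⟩ := Finset.card_eq_two.mp hcard2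
  have hθi : θ i = 1 := by
    have : i ∈ S := by rw [hSij]; simp
    exact (Finset.mem_filter.mp this).2
  have hθj : θ j = 1 := by
    have : j ∈ S := by rw [hSij]; simp
    exact (Finset.mem_filter.mp this).2
  have hθeq : θ = Pi.single i 1 + Pi.single j 1 := by
    funext t
    have key : (Pi.single i 1 + Pi.single j 1 : Fin n → ℚ) t
        = (if t = i then 1 else 0) + (if t = j then 1 else 0) := by
      simp [Pi.single_apply]
    rw [key]
    by_cases h1 : t = i
    · subst h1; simp [hij, hθi]
    · by_cases h2 : t = j
      · subst h2; simp [h1, hθj]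
      · have : t ∉ S := by rw [hSij]; simp [h1, h2]
        have ht1 : θ t ≠ 1 := fun h => this (by simp [hS, h])
        rcases h01 t with h | h
        · simp [h1, h2, h]
        · exact absurd h ht1
  have hnotin : j ∉ Bl i := by
    intro hin
    have hsub : ({i, j} : Finset (Fin n)) ⊆ Bl i := by
      intro t ht
      rcases Finset.mem_insert.mp ht with h | h
      · subst h; exact hmem _
      · rw [Finset.mem_singleton.mp h]; exact hin
    have hle := Finset.sum_le_sum_of_subset_of_nonneg hsub
      (fun t _ _ => (hθ.1.1 t).1)
    rw [Finset.sum_pair hij, hθi, hθj] at hle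
    linarith [hθ.2 i]
  exact ⟨i, j, hnotin, hθeq⟩

lemma two_fracs (Bl : Fin n → Finset (Fin n)) (θ : Fin n → ℚ) (hθ : θ ∈ goodSet Bl)
    (hne : (fracs θ).Nonempty) : 1 < (fracs θ).card := by
  by_contra hcon
  push_neg at hcon
  have hone : (fracs θ).card = 1 := le_antisymm hcon (Finset.card_pos.mpr hne)
  obtain ⟨i, hi⟩ := Finset.card_eq_one.mp hone
  have hiF : 0 < θ i ∧ θ i < 1 := by
    have : i ∈ fracs θ := by rw [hi]; simp
    exact (Finset.mem_filter.mp this).2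
  have h01 : ∀ t, t ≠ i → θ t = 0 ∨ θ t = 1 := by
    intro t ht
    have hnf : ¬(0 < θ t ∧ θ t < 1) := by
      intro h
      have : t ∈ fracs θ := by simp [fracs, h]
      rw [hi] at this
      exact ht (Finset.mem_singleton.mp this)
    have hb := hθ.1.1 t
    rcases eq_or_lt_of_le hb.1 with h | h
    · exact Or.inl h.symm
    · rcases eq_or_lt_of_le hb.2 with h2 | h2
      · exact Or.inr h2
      · exact absurd ⟨h, h2⟩ hnf
  have hsum : ∑ t, θ t
      = ∑ t, ((if θ t = 1 then (1 : ℚ) else 0) + (if t = i then θ i else 0)) := by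
    apply Finset.sum_congr rfl
    intro t _
    by_cases h : t = i
    · subst h
      have h1 : θ t ≠ 1 := ne_of_lt hiF.2
      simp [h1]
    · rcases h01 t h with h0 | h1
      · simp [h0, h]
      · simp [h1, h]
  rw [Finset.sum_add_distrib, Finset.sum_boole, Finset.sum_ite_eq'] at hsum
  simp only [Finset.mem_univ, if_true] at hsum
  set c := (Finset.univ.filter (fun t => θ t = 1)).card with hc
  have h2 : (c : ℚ) + θ i = 2 := by rw [← hsum, hθ.1.2]
  have hc1 : (1 : ℚ) < (c : ℚ) := by linarith [hiF.1, hiF.2]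
  have hc2 : (c : ℚ) < 2 := by linarith [hiF.1]
  have hn1 : 1 < c := by exact_mod_cast hc1
  have hn2 : c < 2 := by exact_mod_cast hc2
  omega

lemma block_sum_eq (Bl : Fin n → Finset (Fin n)) (hmem : ∀ i, i ∈ Bl i)
    (θ : Fin n → ℚ) (hθ : θ ∈ goodSet Bl) (i : Fin n) (hiF : i ∈ fracs θ)
    (hno : ∀ q, q ∈ fracs θ → q ≠ i → q ∉ Bl i) :
    ∑ t ∈ Bl i, θ t = θ i := by
  have hifr : 0 < θ i ∧ θ i < 1 := (Finset.mem_filter.mp hiF).2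
  have hz : ∀ t ∈ Bl i, t ∉ ({i} : Finset (Fin n)) → θ t = 0 := by
    intro t ht hti
    rw [Finset.mem_singleton] at hti
    have hnf : t ∉ fracs θ := fun h => hno t h hti ht
    have hb := hθ.1.1 t
    have h01 : θ t = 0 ∨ θ t = 1 := by
      by_contra hcon
      push_neg at hcon
      exact hnf (by
        simp only [fracs, Finset.mem_filter, Finset.mem_univ, true_and]
        exact ⟨lt_of_le_of_ne hb.1 (Ne.symm hcon.1), lt_of_le_of_ne hb.2 hcon.2⟩)
    rcases h01 with h | h
    · exact h
    · exfalso
      have hsub : ({t, i} : Finset (Fin n)) ⊆ Bl i := by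
        intro u hu
        rcases Finset.mem_insert.mp hu with h' | h'
        · subst h'; exact ht
        · rw [Finset.mem_singleton.mp h']; exact hmem i
      have hle := Finset.sum_le_sum_of_subset_of_nonneg hsub
        (fun u _ _ => (hθ.1.1 u).1)
      rw [Finset.sum_pair hti, h] at hle
      linarith [hθ.2 i, hifr.1]
  have := Finset.sum_subset (Finset.singleton_subset_iff.mpr (hmem i)) hz
  rw [← this, Finset.sum_singleton]

lemma pert_mem (Bl : Fin n → Finset (Fin n)) (hmem : ∀ i, i ∈ Bl i)
    (heq : ∀ i j, j ∈ Bl i → Bl j = Bl i)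
    (θ : Fin n → ℚ) (hθ : θ ∈ goodSet Bl) {i j : Fin n} (hij : i ≠ j)
    (H : j ∈ Bl i ∨ ((∑ t ∈ Bl i, θ t) = θ i ∧ (∑ t ∈ Bl j, θ t) = θ j))
    (ε : ℚ) (h1 : -min (θ i) (1 - θ j) ≤ ε) (h2 : ε ≤ min (1 - θ i) (θ j)) :
    pert θ i j ε ∈ goodSet Bl := by
  have hεi : ε ≤ 1 - θ i := le_trans h2 (min_le_left _ _)
  have hεj : ε ≤ θ j := le_trans h2 (min_le_right _ _)
  have hεi' : -θ i ≤ ε := le_trans (neg_le_neg (min_le_left _ _)) h1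
  have hεj' : -(1 - θ j) ≤ ε := le_trans (neg_le_neg (min_le_right _ _)) h1
  refine ⟨⟨fun t => ?_, ?_⟩, fun l => ?_⟩
  · unfold pert
    by_cases e1 : t = i
    · subst e1
      rw [if_pos rfl]
      constructor <;> linarith
    · by_cases e2 : t = j
      · subst e2
        rw [if_neg e1, if_pos rfl]
        have hb := hθ.1.1 t
        constructor <;> linarith
      · rw [if_neg e1, if_neg e2]
        exact hθ.1.1 t
  · rw [pert_sum θ hij ε]
    simp only [Finset.mem_univ, if_true]
    rw [hθ.1.2]; ring
  · rw [pert_sum θ hij ε]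
    by_cases hi : i ∈ Bl l <;> by_cases hj : j ∈ Bl l
    · simp only [if_pos hi, if_pos hj]
      linarith [hθ.2 l]
    · simp only [if_pos hi, if_neg hj]
      rcases H with H | H
      · exfalso
        have : Bl i = Bl l := heq l i hi
        exact hj (this ▸ H)
      · have : Bl i = Bl l := heq l i hi
        rw [← this, H.1]
        linarith
    · simp only [if_neg hi, if_pos hj]
      rcases H with H | H
      · exfalso
        have e1 : Bl j = Bl i := heq i j H
        have e2 : Bl j = Bl l := heq l j hj
        have : i ∈ Bl l := by
          rw [← e2, e1]; exact hmem i
        exact hi this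
      · have : Bl j = Bl l := heq l j hj
        rw [← this, H.2]
        have hb := hθ.1.1 j
        linarith
    · simp only [if_neg hi, if_neg hj]
      linarith [hθ.2 l]

lemma fracs_pert_subset (θ : Fin n → ℚ) {i j : Fin n}
    (hiF : i ∈ fracs θ) (hjF : j ∈ fracs θ) (ε : ℚ) :
    fracs (pert θ i j ε) ⊆ fracs θ := by
  intro t ht
  by_cases e1 : t = i
  · subst e1; exact hiF
  · by_cases e2 : t = j
    · subst e2; exact hjF
    · have : pert θ i j ε t = θ t := by simp [pert, e1, e2]
      simp only [fracs, Finset.mem_filter, Finset.mem_univ, true_and, this] at ht ⊢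
      exact ht

lemma goodSet_subset_hull (Bl : Fin n → Finset (Fin n)) (hmem : ∀ i, i ∈ Bl i)
    (heq : ∀ i j, j ∈ Bl i → Bl j = Bl i) :
    goodSet Bl ⊆ convexHull ℚ (vertexSet Bl) := by
  suffices h : ∀ N (θ : Fin n → ℚ), (fracs θ).card ≤ N → θ ∈ goodSet Bl →
      θ ∈ convexHull ℚ (vertexSet Bl) by
    intro θ hθ; exact h (fracs θ).card θ le_rfl hθ
  intro N
  induction N with
  | zero =>
    intro θ hcard hθ
    have hf : fracs θ = ∅ := Finset.card_eq_zero.mp (Nat.le_zero.mp hcard)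
    exact subset_convexHull ℚ _ (frac_empty_case Bl hmem θ hθ hf)
  | succ N ih =>
    intro θ hcard hθ
    by_cases hf : fracs θ = ∅
    · exact subset_convexHull ℚ _ (frac_empty_case Bl hmem θ hθ hf)
    · have hne : (fracs θ).Nonempty := Finset.nonempty_of_ne_empty hf
      obtain ⟨i, j, hiF, hjF, hij, H⟩ :
          ∃ i j, i ∈ fracs θ ∧ j ∈ fracs θ ∧ i ≠ j ∧
            (j ∈ Bl i ∨ ((∑ t ∈ Bl i, θ t) = θ i ∧ (∑ t ∈ Bl j, θ t) = θ j)) := by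
        by_cases hb : ∃ p q, p ∈ fracs θ ∧ q ∈ fracs θ ∧ p ≠ q ∧ q ∈ Bl p
        · obtain ⟨p, q, hp, hq, hpq, hmemb⟩ := hb
          exact ⟨p, q, hp, hq, hpq, Or.inl hmemb⟩
        · push_neg at hb
          obtain ⟨i, hiF, j, hjF, hij⟩ := Finset.one_lt_card.mp (two_fracs Bl θ hθ hne)
          refine ⟨i, j, hiF, hjF, hij, Or.inr ⟨?_, ?_⟩⟩
          · exact block_sum_eq Bl hmem θ hθ i hiF
              (fun q hq hqi => hb i q hiF hq (Ne.symm hqi))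
          · exact block_sum_eq Bl hmem θ hθ j hjF
              (fun q hq hqj => hb j q hjF hq (Ne.symm hqj))
      have hifr : 0 < θ i ∧ θ i < 1 := (Finset.mem_filter.mp hiF).2
      have hjfr : 0 < θ j ∧ θ j < 1 := (Finset.mem_filter.mp hjF).2
      set εp := min (1 - θ i) (θ j) with hεp
      set εm := min (θ i) (1 - θ j) with hεm
      have hεppos : 0 < εp := lt_min (by linarith [hifr.2]) hjfr.1
      have hεmpos : 0 < εm := lt_min hifr.1 (by linarith [hjfr.2])
      have hmemp : pert θ i j εp ∈ goodSet Bl :=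
        pert_mem Bl hmem heq θ hθ hij H εp (by linarith) le_rfl
      have hmemm : pert θ i j (-εm) ∈ goodSet Bl :=
        pert_mem Bl hmem heq θ hθ hij H (-εm) le_rfl (by linarith)
      -- strict decrease of fracs for pert with εp
      have hdrop_p : ∃ t, t ∈ fracs θ ∧ t ∉ fracs (pert θ i j εp) := by
        rcases min_cases (1 - θ i) (θ j) with ⟨hm, _⟩ | ⟨hm, _⟩
        · refine ⟨i, hiF, ?_⟩
          have : pert θ i j εp i = 1 := by
            unfold pert; rw [if_pos rfl, hεp, hm]; ring
          simp [fracs, this]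
        · refine ⟨j, hjF, ?_⟩
          have : pert θ i j εp j = 0 := by
            unfold pert; rw [if_neg (Ne.symm hij), if_pos rfl, hεp, hm]; ring
          simp [fracs, this]
      have hdrop_m : ∃ t, t ∈ fracs θ ∧ t ∉ fracs (pert θ i j (-εm)) := by
        rcases min_cases (θ i) (1 - θ j) with ⟨hm, _⟩ | ⟨hm, _⟩
        · refine ⟨i, hiF, ?_⟩
          have : pert θ i j (-εm) i = 0 := by
            unfold pert; rw [if_pos rfl, hεm, hm]; ring
          simp [fracs, this]
        · refine ⟨j, hjF, ?_⟩
          have : pert θ i j (-εm) j = 1 := by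
            unfold pert; rw [if_neg (Ne.symm hij), if_pos rfl, hεm, hm]; ring
          simp [fracs, this]
      have hcard_p : (fracs (pert θ i j εp)).card ≤ N := by
        obtain ⟨t, ht1, ht2⟩ := hdrop_p
        have hss : fracs (pert θ i j εp) ⊂ fracs θ :=
          (Finset.ssubset_iff_of_subset (fracs_pert_subset θ hiF hjF εp)).mpr ⟨t, ht1, ht2⟩
        have := Finset.card_lt_card hss
        omega
      have hcard_m : (fracs (pert θ i j (-εm))).card ≤ N := by
        obtain ⟨t, ht1, ht2⟩ := hdrop_m
        have hss : fracs (pert θ i j (-εm)) ⊂ fracs θ :=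
          (Finset.ssubset_iff_of_subset (fracs_pert_subset θ hiF hjF (-εm))).mpr ⟨t, ht1, ht2⟩
        have := Finset.card_lt_card hss
        omega
      have hhullp := ih (pert θ i j εp) hcard_p hmemp
      have hhullm := ih (pert θ i j (-εm)) hcard_m hmemm
      have hden : εp + εm ≠ 0 := by positivity
      have hcomb : (εm / (εp + εm)) • pert θ i j εp
          + (εp / (εp + εm)) • pert θ i j (-εm) = θ := by
        funext t
        simp only [Pi.add_apply, Pi.smul_apply, smul_eq_mul, pert]
        by_cases e1 : t = i
        · subst e1
          simp only [if_pos rfl, eq_self_iff_true, ↓reduceIte]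
          field_simp
          ring
        · by_cases e2 : t = j
          · subst e2
            simp only [if_neg e1, if_pos rfl, eq_self_iff_true, ↓reduceIte]
            field_simp
            ring
          · simp only [if_neg e1, if_neg e2]
            field_simp
            ring
      have ha : (0:ℚ) ≤ εm / (εp + εm) := by positivity
      have hb' : (0:ℚ) ≤ εp / (εp + εm) := by positivity
      have hab : εm / (εp + εm) + εp / (εp + εm) = 1 := by
        rw [← add_div, div_eq_one_iff_eq hden]; ring
      have hfin := (convex_convexHull ℚ (vertexSet Bl)) hhullp hhullm ha hb' hab
      rwa [hcomb] at hfin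

lemma goodSet_eq_hull (Bl : Fin n → Finset (Fin n)) (hmem : ∀ i, i ∈ Bl i)
    (heq : ∀ i j, j ∈ Bl i → Bl j = Bl i) :
    goodSet Bl = convexHull ℚ (vertexSet Bl) :=
  Set.Subset.antisymm (goodSet_subset_hull Bl hmem heq)
    (convexHull_min (vertex_subset_good Bl hmem heq) (convex_goodSet Bl))



end QnAux

lemma span_mem_comm {n : ℕ} (s : Fin n → Fin 2 → k) (hs : ∀ i, s i ≠ 0) {i j : Fin n}
    (h : s j ∈ Submodule.span k {s i}) : s i ∈ Submodule.span k {s j} := by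
  rw [Submodule.mem_span_singleton] at h ⊢
  obtain ⟨c, hc⟩ := h
  have hc0 : c ≠ 0 := by
    rintro rfl
    exact hs j (by rw [← hc, zero_smul])
  exact ⟨c⁻¹, by rw [← hc, smul_smul, inv_mul_cancel₀ hc0, one_smul]⟩

lemma qn_part1 {n : ℕ} (s : Fin n → Fin 2 → k) (hs : ∀ i, s i ≠ 0) :
    {θ : Fin n → ℚ | θ ∈ hypersimplex n ∧ QnSemistable θ s}
      = {θ : Fin n → ℚ | θ ∈ hypersimplex n ∧
          ∀ i : Fin n,
            ∑ j ∈ Finset.univ.filter (fun j => s j ∈ Submodule.span k {s i}), θ j ≤ 1} := by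
  ext θ
  simp only [Set.mem_setOf_eq]
  constructor
  · rintro ⟨hΔ, hss⟩
    refine ⟨hΔ, fun i => ?_⟩
    have h := hss (Finset.univ.filter (fun j => s j ∈ Submodule.span k {s i}))
      (Submodule.span k {s i}) (fun j hj => (Finset.mem_filter.mp hj).2)
    rw [finrank_span_singleton (hs i)] at h
    push_cast at h
    linarith
  · rintro ⟨hΔ, hblk⟩
    refine ⟨hΔ, fun U W hUW => ?_⟩
    rcases Finset.eq_empty_or_nonempty U with rfl | ⟨i, hi⟩
    · have : (0:ℚ) ≤ (Module.finrank k W : ℚ) := Nat.cast_nonneg _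
      simp only [Finset.sum_empty]
      linarith
    · have hWi : Submodule.span k {s i} ≤ W :=
        (Submodule.span_singleton_le_iff_mem _ _).mpr (hUW i hi)
      have h1 : 1 ≤ Module.finrank k W := by
        rw [← finrank_span_singleton (K := k) (hs i)]
        exact Submodule.finrank_mono hWi
      rcases eq_or_lt_of_le h1 with h1 | h2
      · have hW : Submodule.span k {s i} = W :=
          Submodule.eq_of_le_of_finrank_eq hWi
            (by rw [finrank_span_singleton (hs i), h1])
        have hsub : U ⊆ Finset.univ.filter (fun j => s j ∈ Submodule.span k {s i}) := by
          intro j hj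
          simp only [Finset.mem_filter, Finset.mem_univ, true_and, hW]
          exact hUW j hj
        have hle := Finset.sum_le_sum_of_subset_of_nonneg hsub (fun t _ _ => (hΔ.1 t).1)
        have hb := hblk i
        rw [← h1]
        push_cast
        linarith
      · have hle := Finset.sum_le_sum_of_subset_of_nonneg (Finset.subset_univ U)
          (fun t _ _ => (hΔ.1 t).1)
        rw [hΔ.2] at hle
        have h2' : (2:ℚ) ≤ (Module.finrank k W : ℚ) := by exact_mod_cast h2
        linarith

/-- Description of the polytope `Θ(s) ⊆ Δ(2,n)` of weights for which a representation `s`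
of `Q_n` with all `s_i ≠ 0` is semistable: it is cut out by the walls given by the blocks of
the linear-dependence partition, and it is the convex hull of the vertices `e_i + e_j`
for `i, j` in different blocks. -/
theorem qn_semistability_polytope {n : ℕ} (s : Fin n → Fin 2 → k) (hs : ∀ i, s i ≠ 0) :
    {θ : Fin n → ℚ | θ ∈ hypersimplex n ∧ QnSemistable θ s}
      = {θ : Fin n → ℚ | θ ∈ hypersimplex n ∧
          ∀ i : Fin n,
            ∑ j ∈ Finset.univ.filter (fun j => s j ∈ Submodule.span k {s i}), θ j ≤ 1} ∧
    {θ : Fin n → ℚ | θ ∈ hypersimplex n ∧ QnSemistable θ s}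
      = convexHull ℚ {v : Fin n → ℚ | ∃ i j : Fin n,
          s j ∉ Submodule.span k {s i} ∧ v = Pi.single i 1 + Pi.single j 1} := by
  have hp1 := qn_part1 s hs
  refine ⟨hp1, ?_⟩
  rw [hp1]
  set Bl : Fin n → Finset (Fin n) :=
    fun i => Finset.univ.filter (fun j => s j ∈ Submodule.span k {s i}) with hBl
  have hmem : ∀ i, i ∈ Bl i := by
    intro i
    simp [hBl, Submodule.mem_span_singleton]
    exact ⟨1, one_smul _ _⟩
  have heq : ∀ i j, j ∈ Bl i → Bl j = Bl i := by
    intro i j hj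
    simp only [hBl, Finset.mem_filter, Finset.mem_univ, true_and] at hj
    ext t
    simp only [hBl, Finset.mem_filter, Finset.mem_univ, true_and]
    constructor
    · intro ht
      exact (Submodule.span_singleton_le_iff_mem _ _).mpr hj ht
    · intro ht
      exact (Submodule.span_singleton_le_iff_mem _ _).mpr (span_mem_comm s hs hj) ht
  have h1 : {θ : Fin n → ℚ | θ ∈ hypersimplex n ∧
      ∀ i : Fin n, ∑ j ∈ Finset.univ.filter (fun j => s j ∈ Submodule.span k {s i}), θ j ≤ 1}
      = QnAux.goodSet Bl := rfl
  have h2 : {v : Fin n → ℚ | ∃ i j : Fin n,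
      s j ∉ Submodule.span k {s i} ∧ v = Pi.single i 1 + Pi.single j 1}
      = QnAux.vertexSet Bl := by
    ext v
    simp only [QnAux.vertexSet, Set.mem_setOf_eq, hBl, Finset.mem_filter, Finset.mem_univ,
      true_and]
  rw [h1, h2]
  exact QnAux.goodSet_eq_hull Bl hmem heq
end
end

section
/- Let k be a field and s = (s_1,…,s_n) a tuple of nonzero vectors s_i ∈ k^2, with the partition {1,…,n} = ⊔_l J_l defined by: i and j lie in the same block if and only if s_i and s_j are linearly dependent. Then there exists θ ∈ Δ(2,n) such that s is θ-stable if and only if the partition has at least 3 blocks. If the partition has exactly two blocks J and its complement J^∁, then {θ ∈ Δ(2,n) : s is θ-semistable} = {θ ∈ Δ(2,n) : ∑_{i∈J} θ_i = 1}. -/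
noncomputable section

open Finset
open scoped Classical

variable {k : Type*} [Field k]

namespace QnAux

variable {n : ℕ}

lemma frk2 : Module.finrank k (Fin 2 → k) = 2 := by simp [Module.finrank_pi]

lemma span_eq_span {v w : Fin 2 → k} (hv : v ≠ 0) (hw : w ≠ 0)
    (h : w ∈ Submodule.span k {v}) : Submodule.span k {w} = Submodule.span k {v} := by
  apply Submodule.eq_of_le_of_finrank_le
  · rwa [Submodule.span_singleton_le_iff_mem]
  · rw [finrank_span_singleton hv, finrank_span_singleton hw]

lemma span_symm {v w : Fin 2 → k} (hv : v ≠ 0) (hw : w ≠ 0)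
    (h : w ∈ Submodule.span k {v}) : v ∈ Submodule.span k {w} := by
  rw [span_eq_span hv hw h]; exact Submodule.mem_span_singleton_self _

def blk (s : Fin n → Fin 2 → k) (i : Fin n) : Finset (Fin n) :=
  univ.filter (fun j => s j ∈ Submodule.span k {s i})

lemma mem_blk {s : Fin n → Fin 2 → k} {i j : Fin n} :
    j ∈ blk s i ↔ s j ∈ Submodule.span k {s i} := by simp [blk]

lemma self_mem_blk (s : Fin n → Fin 2 → k) (i : Fin n) : i ∈ blk s i :=
  mem_blk.2 (Submodule.mem_span_singleton_self _)

lemma blk_eq_blk {s : Fin n → Fin 2 → k} (hs : ∀ i, s i ≠ 0) {i j : Fin n}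
    (h : s j ∈ Submodule.span k {s i}) : blk s j = blk s i := by
  unfold blk; rw [span_eq_span (hs i) (hs j) h]

lemma one_le_finrank {s : Fin n → Fin 2 → k} (hs : ∀ i, s i ≠ 0)
    {W : Submodule k (Fin 2 → k)} {i : Fin n} (hiW : s i ∈ W) :
    1 ≤ Module.finrank k W := by
  have := Submodule.finrank_mono ((Submodule.span_singleton_le_iff_mem _ _).2 hiW)
  rwa [finrank_span_singleton (hs i)] at this

lemma eq_span_of_finrank_one {s : Fin n → Fin 2 → k} (hs : ∀ i, s i ≠ 0)
    {W : Submodule k (Fin 2 → k)} {i : Fin n} (hiW : s i ∈ W)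
    (h1 : Module.finrank k W = 1) : W = Submodule.span k {s i} := by
  symm
  apply Submodule.eq_of_le_of_finrank_le ((Submodule.span_singleton_le_iff_mem _ _).2 hiW)
  rw [finrank_span_singleton (hs i), h1]

lemma semistable_of {θ : Fin n → ℚ} {s : Fin n → Fin 2 → k} (hs : ∀ i, s i ≠ 0)
    (hθ0 : ∀ i, 0 ≤ θ i) (hθ2 : ∑ i, θ i = 2)
    (hb : ∀ i, ∑ j ∈ blk s i, θ j ≤ 1) : QnSemistable θ s := by
  intro U W hUW
  rcases U.eq_empty_or_nonempty with hU | ⟨i, hi⟩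
  · simp [hU]
  · have hiW := hUW i hi
    have h1 : 1 ≤ Module.finrank k W := one_le_finrank hs hiW
    have h2 : Module.finrank k W ≤ 2 := by
      simpa [Module.finrank_pi] using Submodule.finrank_le W
    rcases (by omega : Module.finrank k W = 1 ∨ Module.finrank k W = 2) with h | h
    · have hW := eq_span_of_finrank_one hs hiW h
      have hsub : U ⊆ blk s i := fun j hj => mem_blk.2 (hW ▸ hUW j hj)
      have := (Finset.sum_le_sum_of_subset_of_nonneg hsub
        (fun j _ _ => hθ0 j)).trans (hb i)
      rw [h]; push_cast; linarith
    · have : ∑ j ∈ U, θ j ≤ 2 := by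
        rw [← hθ2]
        exact Finset.sum_le_sum_of_subset_of_nonneg (subset_univ U) (fun j _ _ => hθ0 j)
      rw [h]; push_cast; linarith

lemma stable_of {θ : Fin n → ℚ} {s : Fin n → Fin 2 → k} (hs : ∀ i, s i ≠ 0)
    (hθ0 : ∀ i, 0 < θ i) (hθ2 : ∑ i, θ i = 2)
    (hb : ∀ i, ∑ j ∈ blk s i, θ j < 1) : QnStable θ s := by
  refine ⟨semistable_of hs (fun i => (hθ0 i).le) hθ2 (fun i => (hb i).le), ?_⟩
  intro U W hUW hne1 hne2
  rcases U.eq_empty_or_nonempty with hU | ⟨i, hi⟩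
  · have hW : W ≠ ⊥ := fun h => hne1 ⟨hU, h⟩
    obtain ⟨x, hxW, hx⟩ := Submodule.exists_mem_ne_zero_of_ne_bot hW
    have h1 : 1 ≤ Module.finrank k W := by
      have := Submodule.finrank_mono ((Submodule.span_singleton_le_iff_mem _ _).2 hxW)
      rwa [finrank_span_singleton hx] at this
    have : (1 : ℚ) ≤ Module.finrank k W := by exact_mod_cast h1
    simp only [hU, Finset.sum_empty]
    linarith
  · have hiW := hUW i hi
    have h1 : 1 ≤ Module.finrank k W := one_le_finrank hs hiW
    have h2 : Module.finrank k W ≤ 2 := by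
      simpa [Module.finrank_pi] using Submodule.finrank_le W
    rcases (by omega : Module.finrank k W = 1 ∨ Module.finrank k W = 2) with h | h
    · have hW := eq_span_of_finrank_one hs hiW h
      have hsub : U ⊆ blk s i := fun j hj => mem_blk.2 (hW ▸ hUW j hj)
      have := (Finset.sum_le_sum_of_subset_of_nonneg hsub
        (fun j _ _ => (hθ0 j).le)).trans_lt (hb i)
      rw [h]; push_cast; linarith
    · have hW : W = ⊤ := Submodule.eq_top_of_finrank_eq (by rw [h, frk2])
      have hUne : U ≠ univ := fun hUu => hne2 ⟨hUu, hW⟩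
      obtain ⟨j, hj⟩ : ∃ j, j ∉ U := by
        by_contra hc; push_neg at hc; exact hUne (Finset.eq_univ_iff_forall.2 hc)
      have hsub : U ⊆ univ.erase j := fun x hx =>
        Finset.mem_erase.2 ⟨fun hxj => hj (hxj ▸ hx), mem_univ x⟩
      have h3 : ∑ m ∈ U, θ m ≤ ∑ m ∈ univ.erase j, θ m :=
        Finset.sum_le_sum_of_subset_of_nonneg hsub (fun m _ _ => (hθ0 m).le)
      have h4 : θ j + ∑ m ∈ univ.erase j, θ m = 2 := by
        rw [Finset.add_sum_erase _ _ (mem_univ j), hθ2]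
      have := hθ0 j
      rw [h]; push_cast; linarith

end QnAux
namespace QnAux

variable {n : ℕ} {k : Type*} [Field k]

lemma block_sum {s : Fin n → Fin 2 → k} (hs : ∀ i, s i ≠ 0) (N : ℚ) (m0 : Fin n) :
    ∑ m ∈ blk s m0, (2 : ℚ) / (N * (blk s m).card) = 2 / N := by
  have hcongr : ∀ m ∈ blk s m0, (2 : ℚ) / (N * (blk s m).card)
      = 2 / (N * (blk s m0).card) := by
    intro m hm
    rw [blk_eq_blk hs (mem_blk.1 hm)]
  rw [Finset.sum_congr rfl hcongr, Finset.sum_const, nsmul_eq_mul]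
  have hc : ((blk s m0).card : ℚ) ≠ 0 := by
    exact_mod_cast Finset.card_ne_zero_of_mem (self_mem_blk s m0)
  rcases eq_or_ne N 0 with hN | hN
  · simp [hN]
  · field_simp

lemma stable_of_three {s : Fin n → Fin 2 → k} (hs : ∀ i, s i ≠ 0)
    {i j l : Fin n} (hij : s j ∉ Submodule.span k {s i})
    (hil : s l ∉ Submodule.span k {s i}) (hjl : s l ∉ Submodule.span k {s j}) :
    ∃ θ : Fin n → ℚ, θ ∈ hypersimplex n ∧ QnStable θ s := by
  classical
  set B : Finset (Finset (Fin n)) := univ.image (blk s) with hB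
  set N : ℕ := B.card with hN
  set θ : Fin n → ℚ := fun m => 2 / ((N : ℚ) * (blk s m).card) with hθ
  -- pairwise distinct blocks
  have hd1 : blk s i ≠ blk s j := by
    intro h
    exact hij (mem_blk.1 (h ▸ self_mem_blk s j))
  have hd2 : blk s i ≠ blk s l := by
    intro h
    exact hil (mem_blk.1 (h ▸ self_mem_blk s l))
  have hd3 : blk s j ≠ blk s l := by
    intro h
    exact hjl (mem_blk.1 (h ▸ self_mem_blk s l))
  have hN3 : 3 ≤ N := by
    have hsub : ({blk s i, blk s j, blk s l} : Finset (Finset (Fin n))) ⊆ B := by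
      intro x hx
      simp only [Finset.mem_insert, Finset.mem_singleton] at hx
      rcases hx with h | h | h <;> subst h <;>
        exact Finset.mem_image_of_mem _ (mem_univ _)
    have hcard : ({blk s i, blk s j, blk s l} : Finset (Finset (Fin n))).card = 3 := by
      rw [Finset.card_insert_of_notMem (by simp [hd1, hd2]),
        Finset.card_insert_of_notMem (by simp [hd3]), Finset.card_singleton]
    calc 3 = ({blk s i, blk s j, blk s l} : Finset (Finset (Fin n))).card := hcard.symm
    _ ≤ N := Finset.card_le_card hsub
  have hNQ : (3 : ℚ) ≤ (N : ℚ) := by exact_mod_cast hN3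
  have hcpos : ∀ m, 0 < ((blk s m).card : ℚ) := by
    intro m
    exact_mod_cast Finset.card_pos.2 ⟨m, self_mem_blk s m⟩
  have h1c : ∀ m, (1 : ℚ) ≤ ((blk s m).card : ℚ) := by
    intro m
    exact_mod_cast Finset.card_pos.2 ⟨m, self_mem_blk s m⟩
  have hθpos : ∀ m, 0 < θ m := by
    intro m
    have := hcpos m
    apply div_pos (by norm_num)
    nlinarith
  have hbsum : ∀ m0 : Fin n, ∑ m ∈ blk s m0, θ m = 2 / N := fun m0 => block_sum hs N m0
  have htot : ∑ m, θ m = 2 := by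
    rw [← Finset.sum_fiberwise_of_maps_to
      (fun (x : Fin n) (_ : x ∈ univ) => Finset.mem_image_of_mem (blk s) (mem_univ x)) θ]
    have hfib : ∀ b ∈ B, ∑ x ∈ univ.filter (fun x => blk s x = b), θ x = 2 / N := by
      intro b hb
      obtain ⟨m0, _, rfl⟩ := Finset.mem_image.1 hb
      have hfilter : univ.filter (fun x => blk s x = blk s m0) = blk s m0 := by
        ext x
        simp only [Finset.mem_filter, mem_univ, true_and]
        constructor
        · intro h; exact h ▸ self_mem_blk s x
        · intro h; exact blk_eq_blk hs (mem_blk.1 h)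
      rw [hfilter]
      exact hbsum m0
    rw [Finset.sum_congr rfl hfib, Finset.sum_const, nsmul_eq_mul]
    have : (N : ℚ) ≠ 0 := by linarith
    field_simp
    rfl
  have hblk1 : ∀ m0, ∑ m ∈ blk s m0, θ m < 1 := by
    intro m0
    rw [hbsum m0, div_lt_one (by linarith)]
    linarith
  refine ⟨θ, ⟨fun m => ⟨(hθpos m).le, ?_⟩, htot⟩, stable_of hs hθpos htot hblk1⟩
  rw [div_le_one (by nlinarith [hcpos m])]
  nlinarith [h1c m]

end QnAux

namespace QnAux

variable {n : ℕ} {k : Type*} [Field k]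

lemma exists_three_of_stable {θ : Fin n → ℚ} {s : Fin n → Fin 2 → k}
    (hs : ∀ i, s i ≠ 0) (hθ : θ ∈ hypersimplex n) (hst : QnStable θ s) :
    ∃ i j l : Fin n, s j ∉ Submodule.span k {s i} ∧ s l ∉ Submodule.span k {s i} ∧
      s l ∉ Submodule.span k {s j} := by
  obtain ⟨hθ01, hθ2⟩ := hθ
  have key : ∀ i, ∑ m ∈ blk s i, θ m < 1 := by
    intro i
    have h := hst.2 (blk s i) (Submodule.span k {s i}) (fun m hm => mem_blk.1 hm)
      (fun ⟨h1, _⟩ => by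
        have := self_mem_blk s i
        rw [h1] at this
        exact absurd this (Finset.notMem_empty i))
      (fun ⟨_, h2⟩ => by
        have h3 : Module.finrank k (Submodule.span k {s i}) = 1 :=
          finrank_span_singleton (hs i)
        rw [h2, finrank_top, frk2] at h3
        exact absurd h3 (by norm_num))
    rw [finrank_span_singleton (hs i)] at h
    push_cast at h
    linarith
  have hn : 0 < n := by
    rcases Nat.eq_zero_or_pos n with h | h
    · exfalso; subst h; simp at hθ2
    · exact h
  set i0 : Fin n := ⟨0, hn⟩
  have hA : blk s i0 ≠ univ := by
    intro h
    have := key i0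
    rw [h, hθ2] at this
    norm_num at this
  obtain ⟨j, hj⟩ : ∃ j, j ∉ blk s i0 := by
    by_contra hc; push_neg at hc; exact hA (Finset.eq_univ_iff_forall.2 hc)
  have hAB : blk s i0 ∪ blk s j ≠ univ := by
    intro h
    have h1 := Finset.sum_union_inter (s₁ := blk s i0) (s₂ := blk s j) (f := θ)
    have h2 : 0 ≤ ∑ m ∈ blk s i0 ∩ blk s j, θ m :=
      Finset.sum_nonneg (fun m _ => (hθ01 m).1)
    have h3 := key i0
    have h4 := key j
    rw [h, hθ2] at h1
    linarith
  obtain ⟨l, hl⟩ : ∃ l, l ∉ blk s i0 ∪ blk s j := by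
    by_contra hc; push_neg at hc; exact hAB (Finset.eq_univ_iff_forall.2 hc)
  rw [Finset.mem_union, not_or] at hl
  exact ⟨i0, j, l, fun h => hj (mem_blk.2 h), fun h => hl.1 (mem_blk.2 h),
    fun h => hl.2 (mem_blk.2 h)⟩

end QnAux

open QnAux in
/-- A representation `s` of `Q_n` with all `s_i ≠ 0` is stable for some weight in `Δ(2,n)`
iff the linear-dependence partition has at least 3 blocks; if there are exactly two blocks
`J` and `J^∁`, then the set of weights for which `s` is semistable is the wall
`W_{{J,J^∁}}`. -/
theorem qn_stable_exists_iff_three_blocks {n : ℕ}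
    (s : Fin n → Fin 2 → k) (hs : ∀ i, s i ≠ 0) :
    ((∃ θ : Fin n → ℚ, θ ∈ hypersimplex n ∧ QnStable θ s) ↔
      ∃ i j l : Fin n, s j ∉ Submodule.span k {s i} ∧ s l ∉ Submodule.span k {s i} ∧
        s l ∉ Submodule.span k {s j}) ∧
    (∀ J : Finset (Fin n), J ≠ ∅ → J ≠ Finset.univ →
      (∀ i ∈ J, ∀ j ∈ J, s j ∈ Submodule.span k {s i}) →
      (∀ i ∈ Jᶜ, ∀ j ∈ Jᶜ, s j ∈ Submodule.span k {s i}) →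
      (∀ i ∈ J, ∀ j ∈ Jᶜ, s j ∉ Submodule.span k {s i}) →
      {θ : Fin n → ℚ | θ ∈ hypersimplex n ∧ QnSemistable θ s}
        = {θ : Fin n → ℚ | θ ∈ hypersimplex n ∧ ∑ i ∈ J, θ i = 1}) := by
  constructor
  · constructor
    · rintro ⟨θ, hθ, hst⟩
      exact exists_three_of_stable hs hθ hst
    · rintro ⟨i, j, l, hij, hil, hjl⟩
      exact stable_of_three hs hij hil hjl
  · intro J hJne hJnu hJ hJc hJJc
    obtain ⟨i0, hi0⟩ : J.Nonempty := Finset.nonempty_iff_ne_empty.2 hJne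
    obtain ⟨j0, hj0⟩ : Jᶜ.Nonempty := by
      rw [Finset.nonempty_iff_ne_empty]; simpa using hJnu
    -- blk identification
    have hblkJ : ∀ m ∈ J, blk s m = J := by
      intro m hm
      ext x
      rw [mem_blk]
      constructor
      · intro hx
        by_contra hxJ
        exact hJJc m hm x (Finset.mem_compl.2 hxJ) hx
      · intro hx
        exact hJ m hm x hx
    have hblkJc : ∀ m ∈ Jᶜ, blk s m = Jᶜ := by
      intro m hm
      ext x
      rw [mem_blk]
      constructor
      · intro hx
        by_contra hxJ
        have hxJ' : x ∈ J := by simpa using hxJ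
        exact hJJc x hxJ' m hm (span_symm (hs m) (hs x) hx)
      · intro hx
        exact hJc m hm x hx
    have hsumc : ∀ θ : Fin n → ℚ, ∑ m ∈ J, θ m + ∑ m ∈ Jᶜ, θ m = ∑ m, θ m :=
      fun θ => Finset.sum_add_sum_compl J θ
    ext θ
    simp only [Set.mem_setOf_eq]
    constructor
    · rintro ⟨hΔ, hss⟩
      refine ⟨hΔ, ?_⟩
      have h1 : ∑ m ∈ J, θ m ≤ 1 := by
        have := hss J (Submodule.span k {s i0}) (fun m hm => hJ i0 hi0 m hm)
        rw [finrank_span_singleton (hs i0)] at this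
        push_cast at this
        linarith
      have h2 : ∑ m ∈ Jᶜ, θ m ≤ 1 := by
        have := hss Jᶜ (Submodule.span k {s j0}) (fun m hm => hJc j0 hj0 m hm)
        rw [finrank_span_singleton (hs j0)] at this
        push_cast at this
        linarith
      have h3 := hsumc θ
      rw [hΔ.2] at h3
      linarith
    · rintro ⟨hΔ, hJ1⟩
      refine ⟨hΔ, semistable_of hs (fun m => (hΔ.1 m).1) hΔ.2 ?_⟩
      intro m
      by_cases hm : m ∈ J
      · rw [hblkJ m hm, hJ1]
      · rw [hblkJc m (Finset.mem_compl.2 hm)]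
        have h3 := hsumc θ
        rw [hΔ.2] at h3
        linarith
end
end

section
/- Let n ≥ 2 and J ⊆ {1,…,n} with ∅ ≠ J ≠ {1,…,n}. Then {θ ∈ Δ(2,n) : ∑_{i∈J} θ_i = 1} = conv{ e_i + e_j : i ∈ J, j ∉ J }. -/
open Finset

/-- The wall `W_{{J,J^∁}} = {θ ∈ Δ(2,n) : ∑_{i∈J} θ_i = 1}` of the hypersimplex is the
convex hull of the points `e_i + e_j` with `i ∈ J`, `j ∉ J`. -/
theorem wall_eq_convexHull {n : ℕ} (hn : 2 ≤ n) (J : Finset (Fin n))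
    (hJ : J ≠ ∅) (hJ' : J ≠ Finset.univ) :
    {θ : Fin n → ℚ | ((∀ i, 0 ≤ θ i ∧ θ i ≤ 1) ∧ ∑ i, θ i = 2) ∧ ∑ i ∈ J, θ i = 1}
      = convexHull ℚ {v : Fin n → ℚ | ∃ i ∈ J, ∃ j ∉ J,
          v = Pi.single i 1 + Pi.single j 1} := by
  apply Set.Subset.antisymm
  · -- wall ⊆ convex hull
    intro θ hθ
    obtain ⟨⟨hbound, hsum⟩, hJsum⟩ := hθ
    have hcomp : ∑ i ∈ Jᶜ, θ i = 1 := by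
      have := Finset.sum_add_sum_compl J θ
      rw [hsum, hJsum] at this
      linarith
    set w : Fin n × Fin n → ℚ := fun p => θ p.1 * θ p.2 with hw
    set z : Fin n × Fin n → (Fin n → ℚ) :=
      fun p => Pi.single p.1 1 + Pi.single p.2 1 with hz
    have hws : ∑ p ∈ J ×ˢ Jᶜ, w p = 1 := by
      rw [Finset.sum_product]
      simp only [hw, ← Finset.mul_sum, hcomp, mul_one, hJsum]
    have hcm : (J ×ˢ Jᶜ).centerMass w z = θ := by
      rw [Finset.centerMass, hws, inv_one, one_smul]
      funext k
      rw [Finset.sum_apply]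
      simp only [hz, hw, Pi.smul_apply, Pi.add_apply, Pi.single_apply, smul_eq_mul]
      rw [Finset.sum_product]
      simp only [mul_add, mul_ite, mul_one, mul_zero, Finset.sum_add_distrib,
        Finset.sum_ite_eq', Finset.mem_compl]
      have e1 : ∀ x ∈ J, ∑ x1 ∈ Jᶜ, (if k = x then θ x * θ x1 else 0)
          = if k = x then θ x else 0 := by
        intro x _
        split
        · rw [← Finset.mul_sum, hcomp, mul_one]
        · simp
      have e2 : ∀ x1 ∈ Jᶜ, ∑ x ∈ J, (if k = x1 then θ x * θ x1 else 0)
          = if k = x1 then θ x1 else 0 := by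
        intro x1 _
        split
        · rw [← Finset.sum_mul, hJsum, one_mul]
        · simp
      rw [Finset.sum_congr rfl e1, Finset.sum_ite_eq, Finset.sum_comm,
        Finset.sum_congr rfl e2, Finset.sum_ite_eq]
      by_cases hk : k ∈ J <;> simp [hk]
    rw [← hcm]
    apply Finset.centerMass_mem_convexHull
    · intro p hp
      obtain ⟨h1, h2⟩ := Finset.mem_product.mp hp
      exact mul_nonneg (hbound p.1).1 (hbound p.2).1
    · rw [hws]; norm_num
    · intro p hp
      obtain ⟨h1, h2⟩ := Finset.mem_product.mp hp
      exact ⟨p.1, h1, p.2, by simpa using h2, rfl⟩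
  · -- convex hull ⊆ wall
    apply convexHull_min
    · rintro v ⟨i, hi, j, hj, rfl⟩
      have hij : i ≠ j := fun h => hj (h ▸ hi)
      refine ⟨⟨fun k => ?_, ?_⟩, ?_⟩
      · simp only [Pi.add_apply, Pi.single_apply]
        by_cases h1 : k = i <;> by_cases h2 : k = j <;>
          first
          | (exact absurd (h1.symm.trans h2) hij)
          | simp [h1, h2, hij, hij.symm]
      · simp only [Pi.add_apply, Pi.single_apply, Finset.sum_add_distrib,
          Finset.sum_ite_eq']
        norm_num
      · simp only [Pi.add_apply, Pi.single_apply, Finset.sum_add_distrib,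
          Finset.sum_ite_eq']
        simp [hi, hj]
    · intro x hx y hy a b ha hb hab
      obtain ⟨⟨hxb, hxs⟩, hxJ⟩ := hx
      obtain ⟨⟨hyb, hys⟩, hyJ⟩ := hy
      refine ⟨⟨fun k => ⟨?_, ?_⟩, ?_⟩, ?_⟩
      · have := (hxb k).1; have := (hyb k).1
        simp only [Pi.add_apply, Pi.smul_apply, smul_eq_mul]
        nlinarith
      · have := (hxb k).2; have := (hyb k).2
        simp only [Pi.add_apply, Pi.smul_apply, smul_eq_mul]
        nlinarith
      · simp only [Pi.add_apply, Pi.smul_apply, smul_eq_mul,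
          Finset.sum_add_distrib, ← Finset.mul_sum, hxs, hys]
        linarith
      · simp only [Pi.add_apply, Pi.smul_apply, smul_eq_mul,
          Finset.sum_add_distrib, ← Finset.mul_sum, hxJ, hyJ]
        linarith
end

section
/- Let n ≥ 4 and let J_1, J_2 ⊆ {1,…,n} satisfy 2 ≤ |J_m| ≤ n−2 for m = 1,2 and J_2 ∉ {J_1, {1,…,n}∖J_1}. Then there exists θ ∈ ℚ^n with ∑_i θ_i = 2, 0 < θ_i < 1 for all i, ∑_{i∈J_1} θ_i = 1 and ∑_{i∈J_2} θ_i = 1, if and only if none of the following four conditions holds: J_1 ⊆ J_2, J_2 ⊆ J_1, J_1 ∩ J_2 = ∅, J_1 ∪ J_2 = {1,…,n}. (Equivalently: two distinct inner walls of Δ(2,n) intersect the interior of Δ(2,n) if and only if there is no inclusion between the sets J_1, J_1^∁ and J_2, J_2^∁.) -/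
open Finset

lemma region_sum_half {n : ℕ} (S : Finset (Fin n)) (hS : S.Nonempty) (θ : Fin n → ℚ)
    (h : ∀ i ∈ S, θ i = 1 / (2 * (S.card : ℚ))) : ∑ i ∈ S, θ i = 1 / 2 := by
  have hc : (S.card : ℚ) ≠ 0 := by
    exact_mod_cast (Finset.card_pos.mpr hS).ne'
  rw [Finset.sum_congr rfl h, Finset.sum_const, nsmul_eq_mul]
  field_simp

/-- Two distinct inner walls `W_{{J₁,J₁^∁}}`, `W_{{J₂,J₂^∁}}` of the hypersimplex `Δ(2,n)`
intersect in the interior of `Δ(2,n)` if and only if there is no inclusion between the sets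
`J₁, J₁^∁` and `J₂, J₂^∁`. -/
theorem inner_walls_intersect_interior_iff {n : ℕ} (hn : 4 ≤ n)
    (J1 J2 : Finset (Fin n))
    (h1 : 2 ≤ J1.card) (h1' : J1.card ≤ n - 2)
    (h2 : 2 ≤ J2.card) (h2' : J2.card ≤ n - 2)
    (hne : J2 ≠ J1) (hne' : J2 ≠ J1ᶜ) :
    (∃ θ : Fin n → ℚ, ∑ i, θ i = 2 ∧ (∀ i, 0 < θ i ∧ θ i < 1) ∧
      ∑ i ∈ J1, θ i = 1 ∧ ∑ i ∈ J2, θ i = 1) ↔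
    ¬(J1 ⊆ J2 ∨ J2 ⊆ J1 ∨ J1 ∩ J2 = ∅ ∨ J1 ∪ J2 = Finset.univ) := by
  constructor
  · rintro ⟨θ, hsum, hpos, hJ1, hJ2⟩
    rintro (hsub | hsub | hint | huni)
    · -- J1 ⊆ J2
      have hne2 : (J2 \ J1).Nonempty := by
        rw [Finset.sdiff_nonempty]
        intro h
        exact hne (Finset.Subset.antisymm h hsub)
      have hd := Finset.sum_sdiff (f := θ) hsub
      have hpos2 : 0 < ∑ i ∈ J2 \ J1, θ i :=
        Finset.sum_pos (fun i _ => (hpos i).1) hne2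
      rw [hJ1, hJ2] at hd
      linarith
    · -- J2 ⊆ J1
      have hne2 : (J1 \ J2).Nonempty := by
        rw [Finset.sdiff_nonempty]
        intro h
        exact hne (Finset.Subset.antisymm hsub h)
      have hd := Finset.sum_sdiff (f := θ) hsub
      have hpos2 : 0 < ∑ i ∈ J1 \ J2, θ i :=
        Finset.sum_pos (fun i _ => (hpos i).1) hne2
      rw [hJ2, hJ1] at hd
      linarith
    · -- J1 ∩ J2 = ∅
      have hui := Finset.sum_union_inter (s₁ := J1) (s₂ := J2) (f := θ)
      rw [hint, Finset.sum_empty, hJ1, hJ2, add_zero] at hui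
      have hcompl := Finset.sum_add_sum_compl (J1 ∪ J2) θ
      rw [hui, hsum] at hcompl
      have h0 : ∑ i ∈ (J1 ∪ J2)ᶜ, θ i = 0 := by linarith
      have hce : (J1 ∪ J2)ᶜ = ∅ := by
        by_contra h
        have := Finset.sum_pos (fun i _ => (hpos i).1)
          (Finset.nonempty_iff_ne_empty.mpr h)
        linarith
      have huniv : J1 ∪ J2 = Finset.univ := by
        rwa [Finset.compl_eq_empty_iff] at hce
      apply hne'
      ext i
      have hiu : i ∈ J1 ∪ J2 := huniv ▸ Finset.mem_univ i
      have hii : i ∉ J1 ∩ J2 := hint ▸ Finset.notMem_empty i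
      simp only [Finset.mem_union] at hiu
      simp only [Finset.mem_inter] at hii
      simp only [Finset.mem_compl]
      tauto
    · -- J1 ∪ J2 = univ
      have hui := Finset.sum_union_inter (s₁ := J1) (s₂ := J2) (f := θ)
      rw [huni, hsum, hJ1, hJ2] at hui
      have h0 : ∑ i ∈ J1 ∩ J2, θ i = 0 := by linarith
      have hie : J1 ∩ J2 = ∅ := by
        by_contra h
        have := Finset.sum_pos (fun i _ => (hpos i).1)
          (Finset.nonempty_iff_ne_empty.mpr h)
        linarith
      apply hne'
      ext i
      have hiu : i ∈ J1 ∪ J2 := huni ▸ Finset.mem_univ i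
      have hii : i ∉ J1 ∩ J2 := hie ▸ Finset.notMem_empty i
      simp only [Finset.mem_union] at hiu
      simp only [Finset.mem_inter] at hii
      simp only [Finset.mem_compl]
      tauto
  · intro h
    push_neg at h
    obtain ⟨hs1, hs2, hint, huni⟩ := h
    set A := J1 ∩ J2 with hA
    set B := J1 \ J2 with hB
    set C := J2 \ J1 with hC
    set D := (J1 ∪ J2)ᶜ with hD
    have hAne : A.Nonempty := hint
    have hBne : B.Nonempty := by rw [hB, Finset.sdiff_nonempty]; exact hs1
    have hCne : C.Nonempty := by rw [hC, Finset.sdiff_nonempty]; exact hs2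
    have hDne : D.Nonempty := by
      rw [hD, Finset.nonempty_iff_ne_empty, Ne, Finset.compl_eq_empty_iff]
      exact huni
    set θ : Fin n → ℚ := fun i =>
      if i ∈ A then 1 / (2 * (A.card : ℚ))
      else if i ∈ B then 1 / (2 * (B.card : ℚ))
      else if i ∈ C then 1 / (2 * (C.card : ℚ))
      else 1 / (2 * (D.card : ℚ)) with hθ
    have hsA : ∑ i ∈ A, θ i = 1 / 2 := by
      apply region_sum_half A hAne
      intro i hi; simp [hθ, hi]
    have hsB : ∑ i ∈ B, θ i = 1 / 2 := by
      apply region_sum_half B hBne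
      intro i hi
      have hiA : i ∉ A := by
        simp only [hA, hB, Finset.mem_inter, Finset.mem_sdiff] at hi ⊢
        tauto
      simp [hθ, hi, hiA]
    have hsC : ∑ i ∈ C, θ i = 1 / 2 := by
      apply region_sum_half C hCne
      intro i hi
      have hiA : i ∉ A := by
        simp only [hA, hC, Finset.mem_inter, Finset.mem_sdiff] at hi ⊢
        tauto
      have hiB : i ∉ B := by
        simp only [hB, hC, Finset.mem_sdiff] at hi ⊢
        tauto
      simp [hθ, hi, hiA, hiB]
    have hsD : ∑ i ∈ D, θ i = 1 / 2 := by
      apply region_sum_half D hDne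
      intro i hi
      have hiA : i ∉ A := by
        simp only [hA, hD, Finset.mem_inter, Finset.mem_compl,
          Finset.mem_union] at hi ⊢
        tauto
      have hiB : i ∉ B := by
        simp only [hB, hD, Finset.mem_sdiff, Finset.mem_compl,
          Finset.mem_union] at hi ⊢
        tauto
      have hiC : i ∉ C := by
        simp only [hC, hD, Finset.mem_sdiff, Finset.mem_compl,
          Finset.mem_union] at hi ⊢
        tauto
      simp [hθ, hiA, hiB, hiC]
    have hJ1sum : ∑ i ∈ J1, θ i = 1 := by
      have := Finset.sum_inter_add_sum_sdiff J1 J2 θ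
      rw [← hA, ← hB] at this
      rw [← this, hsA, hsB]; norm_num
    have hJ2sum : ∑ i ∈ J2, θ i = 1 := by
      have := Finset.sum_inter_add_sum_sdiff J2 J1 θ
      rw [Finset.inter_comm, ← hA, ← hC] at this
      rw [← this, hsA, hsC]; norm_num
    have hUsum : ∑ i ∈ J1 ∪ J2, θ i = 3 / 2 := by
      have := Finset.sum_union_inter (s₁ := J1) (s₂ := J2) (f := θ)
      rw [← hA, hsA, hJ1sum, hJ2sum] at this
      linarith
    refine ⟨θ, ?_, ?_, hJ1sum, hJ2sum⟩
    · have := Finset.sum_add_sum_compl (J1 ∪ J2) θ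
      rw [hUsum, ← hD, hsD] at this
      linarith
    · intro i
      have key : ∀ (S : Finset (Fin n)), S.Nonempty →
          0 < 1 / (2 * (S.card : ℚ)) ∧ 1 / (2 * (S.card : ℚ)) < 1 := by
        intro S hS
        have hc : (1 : ℚ) ≤ (S.card : ℚ) := by
          exact_mod_cast Finset.card_pos.mpr hS
        constructor
        · exact div_pos one_pos (by linarith)
        · rw [div_lt_one (by linarith)]; linarith
      rw [hθ]
      by_cases hiA : i ∈ A
      · simpa [hiA] using key A hAne
      by_cases hiB : i ∈ B
      · simpa [hiA, hiB] using key B hBne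
      by_cases hiC : i ∈ C
      · simpa [hiA, hiB, hiC] using key C hCne
      · simpa [hiA, hiB, hiC] using key D hDne
end

section
/- Let k be a field, n ≥ 1, and (η_1,η_2,θ) ∈ ℚ × ℚ × ℚ^n a weight with η_1 + η_2 + ∑_i θ_i = 0 and θ_i ≥ 0 for all i, and let s = (s_1,…,s_n) with s_i = (a_i,b_i) ∈ k × k. Then: (a) s is (η_1,η_2,θ)-semistable if and only if θ_i = 0 for every i with (a_i,b_i) = (0,0), ∑_{i : b_i = 0} θ_i ≤ −η_1, and ∑_{i : a_i = 0} θ_i ≤ −η_2; (b) s is (η_1,η_2,θ)-stable if and only if (a_i,b_i) ≠ (0,0) and θ_i > 0 for all i, ∑_{i : b_i = 0} θ_i < −η_1, and ∑_{i : a_i = 0} θ_i < −η_2. -/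
noncomputable section

open Finset
open scoped Classical

variable {k : Type*} [Field k]

/-- A triple `(U, W₁, W₂)` is a subrepresentation of the representation `s` of the quiver
`P_n` (with dimension vector `(1,…,1)`) if `(s i).1 ∈ W₁` and `(s i).2 ∈ W₂` for `i ∈ U`. -/
def PnIsSubrep {ι : Type*} (s : ι → k × k) (U : Finset ι)
    (W1 W2 : Submodule k k) : Prop :=
  ∀ i ∈ U, (s i).1 ∈ W1 ∧ (s i).2 ∈ W2

/-- `s` is `(η₁,η₂,θ)`-semistable:
`η₁·dim W₁ + η₂·dim W₂ + ∑_{i∈U} θ_i ≤ 0` for every subrepresentation. -/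
def PnSemistable {ι : Type*} [Fintype ι] (η1 η2 : ℚ) (θ : ι → ℚ) (s : ι → k × k) : Prop :=
  ∀ (U : Finset ι) (W1 W2 : Submodule k k), PnIsSubrep s U W1 W2 →
    η1 * (Module.finrank k W1 : ℚ) + η2 * (Module.finrank k W2 : ℚ) + ∑ i ∈ U, θ i ≤ 0

/-- `s` is `(η₁,η₂,θ)`-stable: semistable, and the weight is `< 0` for every
subrepresentation other than `(∅,0,0)` and `({1,…,n},k,k)`. -/
def PnStable {ι : Type*} [Fintype ι] (η1 η2 : ℚ) (θ : ι → ℚ) (s : ι → k × k) : Prop :=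
  PnSemistable η1 η2 θ s ∧
  ∀ (U : Finset ι) (W1 W2 : Submodule k k), PnIsSubrep s U W1 W2 →
    ¬(U = ∅ ∧ W1 = ⊥ ∧ W2 = ⊥) → ¬(U = Finset.univ ∧ W1 = ⊤ ∧ W2 = ⊤) →
    η1 * (Module.finrank k W1 : ℚ) + η2 * (Module.finrank k W2 : ℚ) + ∑ i ∈ U, θ i < 0

/-- Characterisation of `(η₁,η₂,θ)`-(semi)stability of representations of `P_n`. -/
theorem pn_semistable_stable_criterion {n : ℕ} (hn : 1 ≤ n)
    (η1 η2 : ℚ) (θ : Fin n → ℚ) (hθ : ∀ i, 0 ≤ θ i)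
    (hsum : η1 + η2 + ∑ i, θ i = 0) (s : Fin n → k × k) :
    (PnSemistable η1 η2 θ s ↔
      ((∀ i, s i = 0 → θ i = 0) ∧
        ∑ i ∈ Finset.univ.filter (fun i => (s i).2 = 0), θ i ≤ -η1 ∧
        ∑ i ∈ Finset.univ.filter (fun i => (s i).1 = 0), θ i ≤ -η2)) ∧
    (PnStable η1 η2 θ s ↔
      ((∀ i, s i ≠ 0 ∧ 0 < θ i) ∧
        ∑ i ∈ Finset.univ.filter (fun i => (s i).2 = 0), θ i < -η1 ∧
        ∑ i ∈ Finset.univ.filter (fun i => (s i).1 = 0), θ i < -η2)) := by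
  classical
  have hbot : (Module.finrank k (⊥ : Submodule k k) : ℚ) = 0 := by simp
  have htop : (Module.finrank k (⊤ : Submodule k k) : ℚ) = 1 := by
    simp [Module.finrank_self]
  have hW : ∀ W : Submodule k k, W = ⊥ ∨ W = ⊤ := fun W => Ideal.eq_bot_or_top W
  -- part (a)
  have ha : PnSemistable η1 η2 θ s ↔
      ((∀ i, s i = 0 → θ i = 0) ∧
        ∑ i ∈ Finset.univ.filter (fun i => (s i).2 = 0), θ i ≤ -η1 ∧
        ∑ i ∈ Finset.univ.filter (fun i => (s i).1 = 0), θ i ≤ -η2) := by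
    constructor
    · intro ss
      refine ⟨fun i hi => ?_, ?_, ?_⟩
      · have h := ss {i} ⊥ ⊥ (by
          intro j hj
          simp only [Finset.mem_singleton] at hj
          subst hj
          exact ⟨by rw [hi]; exact Submodule.zero_mem _, by rw [hi]; exact Submodule.zero_mem _⟩)
        rw [hbot] at h
        simp only [Finset.sum_singleton, mul_zero, zero_add] at h
        linarith [hθ i]
      · have h := ss (Finset.univ.filter (fun i => (s i).2 = 0)) ⊤ ⊥ (by
          intro j hj
          simp only [Finset.mem_filter] at hj
          exact ⟨trivial, by rw [hj.2]; exact Submodule.zero_mem _⟩)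
        rw [hbot, htop] at h
        linarith
      · have h := ss (Finset.univ.filter (fun i => (s i).1 = 0)) ⊥ ⊤ (by
          intro j hj
          simp only [Finset.mem_filter] at hj
          exact ⟨by rw [hj.2]; exact Submodule.zero_mem _, trivial⟩)
        rw [hbot, htop] at h
        linarith
    · rintro ⟨h0, h1, h2⟩ U W1 W2 hsub
      rcases hW W1 with rfl | rfl <;> rcases hW W2 with rfl | rfl
      · have : ∑ i ∈ U, θ i = 0 := Finset.sum_eq_zero (fun i hi => h0 i (by
          have := hsub i hi
          simp only [Submodule.mem_bot] at this
          exact Prod.ext this.1 this.2))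
        rw [hbot, this]; ring_nf; rfl
      · have hU : U ⊆ Finset.univ.filter (fun i => (s i).1 = 0) := by
          intro i hi
          have := (hsub i hi).1
          simp only [Submodule.mem_bot] at this
          simp [this]
        have := Finset.sum_le_sum_of_subset_of_nonneg hU (fun i _ _ => hθ i)
        rw [hbot, htop]
        linarith
      · have hU : U ⊆ Finset.univ.filter (fun i => (s i).2 = 0) := by
          intro i hi
          have := (hsub i hi).2
          simp only [Submodule.mem_bot] at this
          simp [this]
        have := Finset.sum_le_sum_of_subset_of_nonneg hU (fun i _ _ => hθ i)
        rw [hbot, htop]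
        linarith
      · have := Finset.sum_le_sum_of_subset_of_nonneg (Finset.subset_univ U)
          (fun i _ _ => hθ i)
        rw [htop]
        linarith
  refine ⟨ha, ?_⟩
  constructor
  · rintro ⟨ss, st⟩
    have hne : (⊥ : Submodule k k) ≠ ⊤ := bot_ne_top
    refine ⟨fun i => ⟨?_, ?_⟩, ?_, ?_⟩
    · intro hi
      have h := st {i} ⊥ ⊥ (by
          intro j hj
          simp only [Finset.mem_singleton] at hj
          subst hj
          exact ⟨by rw [hi]; exact Submodule.zero_mem _, by rw [hi]; exact Submodule.zero_mem _⟩)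
        (by rintro ⟨h', -, -⟩; exact Finset.singleton_ne_empty i h') (by
          rintro ⟨-, hb, -⟩; exact hne hb)
      rw [hbot] at h
      simp only [Finset.sum_singleton, mul_zero, zero_add] at h
      linarith [hθ i]
    · have h := st (Finset.univ.erase i) ⊤ ⊤ (fun j _ => ⟨trivial, trivial⟩)
        (by rintro ⟨-, hb, -⟩; exact hne hb.symm)
        (by rintro ⟨hU, -, -⟩
            exact (Finset.notMem_erase i Finset.univ)
              (by rw [hU]; exact Finset.mem_univ i))
      rw [htop] at h
      have hs : ∑ j ∈ Finset.univ.erase i, θ j + θ i = ∑ j, θ j :=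
        Finset.sum_erase_add _ _ (Finset.mem_univ i)
      linarith
    · have h := st (Finset.univ.filter (fun i => (s i).2 = 0)) ⊤ ⊥ (by
          intro j hj
          simp only [Finset.mem_filter] at hj
          exact ⟨trivial, by rw [hj.2]; exact Submodule.zero_mem _⟩)
        (by rintro ⟨-, hb, -⟩; exact hne hb.symm)
        (by rintro ⟨-, -, hb⟩; exact hne hb)
      rw [hbot, htop] at h
      linarith
    · have h := st (Finset.univ.filter (fun i => (s i).1 = 0)) ⊥ ⊤ (by
          intro j hj
          simp only [Finset.mem_filter] at hj
          exact ⟨by rw [hj.2]; exact Submodule.zero_mem _, trivial⟩)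
        (by rintro ⟨-, -, hb⟩; exact hne hb.symm)
        (by rintro ⟨-, hb, -⟩; exact hne hb)
      rw [hbot, htop] at h
      linarith
  · rintro ⟨h, h1, h2⟩
    refine ⟨ha.mpr ⟨fun i hi => absurd hi (h i).1, le_of_lt h1, le_of_lt h2⟩, ?_⟩
    intro U W1 W2 hsub hne1 hne2
    rcases hW W1 with rfl | rfl <;> rcases hW W2 with rfl | rfl
    · exfalso
      apply hne1
      refine ⟨Finset.eq_empty_iff_forall_notMem.mpr (fun i hi => ?_), rfl, rfl⟩
      have := hsub i hi
      simp only [Submodule.mem_bot] at this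
      exact (h i).1 (Prod.ext this.1 this.2)
    · have hU : U ⊆ Finset.univ.filter (fun i => (s i).1 = 0) := by
        intro i hi
        have := (hsub i hi).1
        simp only [Submodule.mem_bot] at this
        simp [this]
      have := Finset.sum_le_sum_of_subset_of_nonneg hU (fun i _ _ => hθ i)
      rw [hbot, htop]
      linarith
    · have hU : U ⊆ Finset.univ.filter (fun i => (s i).2 = 0) := by
        intro i hi
        have := (hsub i hi).2
        simp only [Submodule.mem_bot] at this
        simp [this]
      have := Finset.sum_le_sum_of_subset_of_nonneg hU (fun i _ _ => hθ i)
      rw [hbot, htop]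
      linarith
    · have hU : U ≠ Finset.univ := fun hU => hne2 ⟨hU, rfl, rfl⟩
      obtain ⟨j, hj⟩ : ∃ j, j ∉ U := by
        by_contra hc
        push_neg at hc
        exact hU (Finset.eq_univ_iff_forall.mpr hc)
      have hlt : ∑ i ∈ U, θ i < ∑ i, θ i :=
        Finset.sum_lt_sum_of_subset (Finset.subset_univ U) (Finset.mem_univ j) hj
          ((h j).2) (fun i _ _ => hθ i)
      rw [htop]
      linarith
end
end

section
/- Let k be a field, n ≥ 1, and (η_1,η_2,θ) ∈ ℚ × ℚ × ℚ^n with η_1 + η_2 + ∑_i θ_i = 0. There exists an (η_1,η_2,θ)-semistable representation s of P_n over k if and only if η_1 ≤ 0, η_2 ≤ 0 and θ_i ≥ 0 for all i. -/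
noncomputable section

open Finset
open scoped Classical

variable {k : Type*} [Field k]

/-- An `(η₁,η₂,θ)`-semistable representation of `P_n` exists if and only if
`η₁ ≤ 0`, `η₂ ≤ 0` and `θ_i ≥ 0` for all `i`. -/
theorem exists_pn_semistable_iff {n : ℕ} (hn : 1 ≤ n)
    (η1 η2 : ℚ) (θ : Fin n → ℚ) (hsum : η1 + η2 + ∑ i, θ i = 0) :
    (∃ s : Fin n → k × k, PnSemistable η1 η2 θ s) ↔
      (η1 ≤ 0 ∧ η2 ≤ 0 ∧ ∀ i, 0 ≤ θ i) := by
  constructor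
  · rintro ⟨s, hs⟩
    refine ⟨?_, ?_, ?_⟩
    · have := hs ∅ ⊤ ⊥ (by intro i hi; simp at hi)
      simpa [finrank_top, Module.finrank_self] using this
    · have := hs ∅ ⊥ ⊤ (by intro i hi; simp at hi)
      simpa [finrank_top, Module.finrank_self] using this
    · intro i
      have h := hs (Finset.univ \ {i}) ⊤ ⊤ (by intro j hj; simp)
      rw [Finset.sum_sdiff_eq_sub (Finset.singleton_subset_iff.mpr (Finset.mem_univ i)),
        Finset.sum_singleton] at h
      simp only [finrank_top, Module.finrank_self, Nat.cast_one, mul_one] at h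
      linarith
  · rintro ⟨h1, h2, h3⟩
    refine ⟨fun _ => (1, 1), ?_⟩
    intro U W1 W2 hsub
    rcases U.eq_empty_or_nonempty with rfl | ⟨i, hi⟩
    · simp only [Finset.sum_empty, add_zero]
      have := mul_nonpos_of_nonpos_of_nonneg h1 (by positivity : (0:ℚ) ≤ (Module.finrank k W1 : ℚ))
      have := mul_nonpos_of_nonpos_of_nonneg h2 (by positivity : (0:ℚ) ≤ (Module.finrank k W2 : ℚ))
      linarith
    · have hW1 : W1 = ⊤ := by
        rw [Submodule.eq_top_iff']
        intro x
        simpa using W1.smul_mem x (hsub i hi).1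
      have hW2 : W2 = ⊤ := by
        rw [Submodule.eq_top_iff']
        intro x
        simpa using W2.smul_mem x (hsub i hi).2
      subst hW1; subst hW2
      simp only [finrank_top, Module.finrank_self, Nat.cast_one, mul_one]
      have hle : ∑ j ∈ U, θ j ≤ ∑ j, θ j :=
        Finset.sum_le_sum_of_subset_of_nonneg (Finset.subset_univ U) (fun j _ _ => h3 j)
      linarith
end
end

section
/- Let n ≥ 2 and J ⊆ {1,…,n} with ∅ ≠ J ≠ {1,…,n}. Then {(η_1,η_2,θ) ∈ Δ^1×Δ^{n−1} : ∑_{i∈J} θ_i = −η_1} = conv({ e_i − f_1 : i ∈ J } ∪ { e_i − f_2 : i ∉ J }). -/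
open Finset

/-- The inner wall `W_J = {(η₁,η₂,θ) ∈ Δ¹×Δ^{n−1} : ∑_{i∈J} θ_i = −η₁}` is the convex hull
of the points `e_i − f₁` for `i ∈ J` and `e_i − f₂` for `i ∉ J`. -/
theorem inner_wall_eq_convexHull {n : ℕ} (hn : 2 ≤ n) (J : Finset (Fin n))
    (hJ : J ≠ ∅) (hJ' : J ≠ Finset.univ) :
    {p : ℚ × ℚ × (Fin n → ℚ) | (p.1 ≤ 0 ∧ p.2.1 ≤ 0 ∧ p.1 + p.2.1 = -1 ∧
        (∀ i, 0 ≤ p.2.2 i) ∧ ∑ i, p.2.2 i = 1) ∧ ∑ i ∈ J, p.2.2 i = -p.1}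
      = convexHull ℚ {p : ℚ × ℚ × (Fin n → ℚ) |
          (∃ i ∈ J, p = (-1, 0, Pi.single i 1)) ∨
          (∃ i ∉ J, p = (0, -1, Pi.single i 1))} := by
  apply Set.Subset.antisymm
  · rintro ⟨η₁, η₂, θ⟩ ⟨⟨h1, h2, h3, h4, h5⟩, h6⟩
    set z : Fin n → ℚ × ℚ × (Fin n → ℚ) := fun i =>
      if i ∈ J then ((-1 : ℚ), (0:ℚ), Pi.single i 1) else (0, -1, Pi.single i 1) with hz
    have hmem := Finset.centerMass_mem_convexHull (t := (Finset.univ : Finset (Fin n)))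
      (w := θ) (z := z)
      (s := {p : ℚ × ℚ × (Fin n → ℚ) |
          (∃ i ∈ J, p = (-1, 0, Pi.single i 1)) ∨
          (∃ i ∉ J, p = (0, -1, Pi.single i 1))}) (fun i _ => h4 i)
      (by rw [h5]; norm_num)
      (fun i _ => by
        by_cases hi : i ∈ J
        · exact Or.inl ⟨i, hi, by simp [hz, hi]⟩
        · exact Or.inr ⟨i, hi, by simp [hz, hi]⟩)
    have hcm : Finset.centerMass Finset.univ θ z = (η₁, η₂, θ) := by
      rw [Finset.centerMass, h5, inv_one, one_smul]
      have e1 : ∀ i ∈ Finset.univ, θ i • (z i).1 = if i ∈ J then -θ i else 0 := by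
        intro i _; by_cases hi : i ∈ J <;> simp [hz, hi]
      have e2 : ∀ i ∈ Finset.univ, θ i • (z i).2.1 = if i ∈ Jᶜ then -θ i else 0 := by
        intro i _; by_cases hi : i ∈ J <;> simp [hz, hi]
      refine Prod.ext ?_ (Prod.ext ?_ ?_)
      · simp only [Prod.fst_sum, Prod.smul_fst]
        rw [Finset.sum_congr rfl e1, Finset.sum_ite_mem, Finset.univ_inter,
          Finset.sum_neg_distrib, h6]
        simp
      · simp only [Prod.snd_sum, Prod.fst_sum, Prod.smul_snd, Prod.smul_fst]
        rw [Finset.sum_congr rfl e2, Finset.sum_ite_mem, Finset.univ_inter,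
          Finset.sum_neg_distrib]
        have h7 := Finset.sum_compl_add_sum J θ
        simp only at h6 h7 ⊢
        rw [h5] at h7
        linarith
      · simp only [Prod.snd_sum, Prod.smul_snd]
        funext j
        have e3 : ∀ i ∈ Finset.univ, (θ i • (z i).2.2) j = if i = j then θ i else 0 := by
          intro i _
          rcases eq_or_ne i j with rfl | hij
          · by_cases hi : i ∈ J <;> simp [hz, hi]
          · by_cases hi : i ∈ J <;> simp [hz, hi, Pi.single_apply, hij]
        rw [Finset.sum_apply, Finset.sum_congr rfl e3, Finset.sum_ite_eq']
        simp
    rw [← hcm]; exact hmem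
  · apply convexHull_min
    · rintro p (⟨i, hi, rfl⟩ | ⟨i, hi, rfl⟩)
      · refine ⟨⟨by norm_num, le_refl 0, by norm_num, fun j => ?_, by simp⟩, ?_⟩
        · by_cases h : j = i <;> simp [Pi.single_apply, h]
        · simp [Pi.single_apply, Finset.sum_ite_eq', hi]
      · refine ⟨⟨le_refl 0, by norm_num, by norm_num, fun j => ?_, by simp⟩, ?_⟩
        · by_cases h : j = i <;> simp [Pi.single_apply, h]
        · simp [Pi.single_apply, Finset.sum_ite_eq', hi]
    · intro x hx y hy a b ha hb hab
      obtain ⟨⟨hx1, hx2, hx3, hx4, hx5⟩, hx6⟩ := hx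
      obtain ⟨⟨hy1, hy2, hy3, hy4, hy5⟩, hy6⟩ := hy
      have g1 : (a • x + b • y).1 = a * x.1 + b * y.1 := rfl
      have g2 : (a • x + b • y).2.1 = a * x.2.1 + b * y.2.1 := rfl
      have g3 : ∀ j, (a • x + b • y).2.2 j = a * x.2.2 j + b * y.2.2 j := fun j => rfl
      refine ⟨⟨?_, ?_, ?_, ?_, ?_⟩, ?_⟩
      · rw [g1]; nlinarith
      · rw [g2]; nlinarith
      · rw [g1, g2]; nlinarith
      · intro j; rw [g3 j]; have := hx4 j; have := hy4 j; nlinarith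
      · simp only [g3, Finset.sum_add_distrib, ← Finset.mul_sum, hx5, hy5]; linarith
      · simp only [g3, g1, Finset.sum_add_distrib, ← Finset.mul_sum, hx6, hy6]; ring
end

section
/- Let k be a field and s = (s_1,…,s_n) with s_i = (a_i,b_i) ∈ k × k and s_i ≠ (0,0) for all i. Set J_0 = {i : a_i = 0} and J_∞ = {i : b_i = 0} (these are disjoint). Then the set Θ(s) = {(η_1,η_2,θ) ∈ Δ^1×Δ^{n−1} : s is (η_1,η_2,θ)-semistable} satisfies Θ(s) = {(η_1,η_2,θ) ∈ Δ^1×Δ^{n−1} : ∑_{i∈J_∞} θ_i ≤ −η_1 and ∑_{i∈J_0} θ_i ≤ −η_2} = conv({ e_i − f_1 : i ∉ J_0 } ∪ { e_i − f_2 : i ∉ J_∞ }). -/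
noncomputable section

open Finset
open scoped Classical

variable {k : Type*} [Field k]

lemma pn_lemConv {n : ℕ} (s : Fin n → k × k) :
    Convex ℚ {w : ℚ × ℚ × (Fin n → ℚ) | (w.1 ≤ 0 ∧ w.2.1 ≤ 0 ∧ w.1 + w.2.1 = -1 ∧
          (∀ i, 0 ≤ w.2.2 i) ∧ ∑ i, w.2.2 i = 1) ∧
          ∑ i ∈ Finset.univ.filter (fun i => (s i).2 = 0), w.2.2 i ≤ -w.1 ∧
          ∑ i ∈ Finset.univ.filter (fun i => (s i).1 = 0), w.2.2 i ≤ -w.2.1} := by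
  rintro x ⟨⟨hx1, hx2, hx3, hx4, hx5⟩, hx6, hx7⟩ y ⟨⟨hy1, hy2, hy3, hy4, hy5⟩, hy6, hy7⟩
    a b ha hb hab
  have hfst : (a • x + b • y).1 = a * x.1 + b * y.1 := rfl
  have hsnd : (a • x + b • y).2.1 = a * x.2.1 + b * y.2.1 := rfl
  have hthd : ∀ i, (a • x + b • y).2.2 i = a * x.2.2 i + b * y.2.2 i := fun i => rfl
  refine ⟨⟨?_, ?_, ?_, ?_, ?_⟩, ?_, ?_⟩
  · rw [hfst]; nlinarith
  · rw [hsnd]; nlinarith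
  · rw [hfst, hsnd]; linear_combination a * hx3 + b * hy3 - hab
  · intro i; rw [hthd]; have := hx4 i; have := hy4 i; nlinarith
  · simp only [hthd, Finset.sum_add_distrib, ← Finset.mul_sum, hx5, hy5]; linarith
  · simp only [hthd, Finset.sum_add_distrib, ← Finset.mul_sum, hfst]
    have := mul_le_mul_of_nonneg_left hx6 ha
    have := mul_le_mul_of_nonneg_left hy6 hb
    linarith
  · simp only [hthd, Finset.sum_add_distrib, ← Finset.mul_sum, hsnd]
    have := mul_le_mul_of_nonneg_left hx7 ha
    have := mul_le_mul_of_nonneg_left hy7 hb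
    linarith

lemma pn_lemB {n : ℕ} (s : Fin n → k × k) (hs : ∀ i, s i ≠ 0) :
    {w : ℚ × ℚ × (Fin n → ℚ) | (w.1 ≤ 0 ∧ w.2.1 ≤ 0 ∧ w.1 + w.2.1 = -1 ∧
          (∀ i, 0 ≤ w.2.2 i) ∧ ∑ i, w.2.2 i = 1) ∧
          ∑ i ∈ Finset.univ.filter (fun i => (s i).2 = 0), w.2.2 i ≤ -w.1 ∧
          ∑ i ∈ Finset.univ.filter (fun i => (s i).1 = 0), w.2.2 i ≤ -w.2.1}
      ⊇ convexHull ℚ {p : ℚ × ℚ × (Fin n → ℚ) |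
          (∃ i : Fin n, (s i).1 ≠ 0 ∧ p = (-1, 0, Pi.single i 1)) ∨
          (∃ i : Fin n, (s i).2 ≠ 0 ∧ p = (0, -1, Pi.single i 1))} := by
  apply convexHull_min
  · rintro p (⟨i, hi, rfl⟩ | ⟨i, hi, rfl⟩) <;>
      refine ⟨⟨by norm_num, by norm_num, by norm_num, fun j => ?_, ?_⟩, ?_, ?_⟩
    · simp only [Pi.single_apply]; split <;> norm_num
    · simp
    · simp only [Pi.single_apply]
      rw [Finset.sum_ite_eq' (univ.filter (fun j => (s j).2 = 0)) i (fun _ => (1:ℚ))]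
      split <;> norm_num
    · simp only [Pi.single_apply]
      rw [Finset.sum_ite_eq' (univ.filter (fun j => (s j).1 = 0)) i (fun _ => (1:ℚ))]
      have : i ∉ univ.filter (fun j => (s j).1 = 0) := by simp [hi]
      rw [if_neg this]; norm_num
    · simp only [Pi.single_apply]; split <;> norm_num
    · simp
    · simp only [Pi.single_apply]
      rw [Finset.sum_ite_eq' (univ.filter (fun j => (s j).2 = 0)) i (fun _ => (1:ℚ))]
      have : i ∉ univ.filter (fun j => (s j).2 = 0) := by simp [hi]
      rw [if_neg this]; norm_num
    · simp only [Pi.single_apply]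
      rw [Finset.sum_ite_eq' (univ.filter (fun j => (s j).1 = 0)) i (fun _ => (1:ℚ))]
      split <;> norm_num
  · exact pn_lemConv s

lemma pn_lemC {n : ℕ} (s : Fin n → k × k) (hs : ∀ i, s i ≠ 0) :
    {w : ℚ × ℚ × (Fin n → ℚ) | (w.1 ≤ 0 ∧ w.2.1 ≤ 0 ∧ w.1 + w.2.1 = -1 ∧
          (∀ i, 0 ≤ w.2.2 i) ∧ ∑ i, w.2.2 i = 1) ∧
          ∑ i ∈ Finset.univ.filter (fun i => (s i).2 = 0), w.2.2 i ≤ -w.1 ∧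
          ∑ i ∈ Finset.univ.filter (fun i => (s i).1 = 0), w.2.2 i ≤ -w.2.1}
      ⊆ convexHull ℚ {p : ℚ × ℚ × (Fin n → ℚ) |
          (∃ i : Fin n, (s i).1 ≠ 0 ∧ p = (-1, 0, Pi.single i 1)) ∨
          (∃ i : Fin n, (s i).2 ≠ 0 ∧ p = (0, -1, Pi.single i 1))} := by
  rintro ⟨η1, η2, θ⟩ ⟨⟨hη1, hη2, hsum, hθ, hθ1⟩, h1, h2⟩
  simp only [Set.mem_setOf_eq] at h1 h2 hθ hθ1 ⊢
  -- abbreviations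
  set α : ℚ := -η1 with hα
  set T : ℚ := ∑ i ∈ univ.filter (fun i => ¬(s i).2 = 0 ∧ ¬(s i).1 = 0), θ i with hTdef
  set t : ℚ := α - ∑ i ∈ univ.filter (fun i => (s i).2 = 0), θ i with htdef
  set r : ℚ := if T = 0 then 0 else t / T with hrdef
  set lam : Fin n → ℚ := fun i =>
    if (s i).2 = 0 then θ i else if (s i).1 = 0 then 0 else r * θ i with hlamdef
  set mu : Fin n → ℚ := fun i => θ i - lam i with hmudef
  -- partition of the total mass
  have hJ0eq : univ.filter (fun i => ¬(s i).2 = 0 ∧ (s i).1 = 0)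
      = univ.filter (fun i => (s i).1 = 0) := by
    apply Finset.filter_congr
    intro i _
    simp only [eq_iff_iff, and_iff_right_iff_imp]
    intro ha hb
    exact hs i (Prod.ext ha hb)
  have hpart : ∑ i ∈ univ.filter (fun i => (s i).2 = 0), θ i
      + ∑ i ∈ univ.filter (fun i => (s i).1 = 0), θ i + T = 1 := by
    have e1 := Finset.sum_filter_add_sum_filter_not univ (fun i => (s i).2 = 0) θ
    have e2 := Finset.sum_filter_add_sum_filter_not
      (univ.filter (fun i => ¬(s i).2 = 0)) (fun i => (s i).1 = 0) θ
    rw [Finset.filter_filter, Finset.filter_filter, hJ0eq] at e2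
    rw [hθ1] at e1
    rw [hTdef]
    linarith
  have hT0 : 0 ≤ T := Finset.sum_nonneg (fun i _ => hθ i)
  have ht0 : 0 ≤ t := by rw [htdef]; linarith
  have htT : t ≤ T := by rw [htdef]; linarith
  have hrT : r * T = t := by
    by_cases hTz : T = 0
    · rw [hrdef, if_pos hTz, zero_mul]
      linarith [hTz ▸ htT]
    · rw [hrdef, if_neg hTz]
      field_simp
  have hr0 : 0 ≤ r := by
    rw [hrdef]; split
    · exact le_refl 0
    · exact div_nonneg ht0 hT0
  have hr1 : r ≤ 1 := by
    rw [hrdef]; split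
    · norm_num
    · rw [div_le_one (lt_of_le_of_ne hT0 (Ne.symm ‹T ≠ 0›))]; exact htT
  have hlam0 : ∀ i, 0 ≤ lam i := by
    intro i; rw [hlamdef]; dsimp only; split_ifs
    · exact hθ i
    · exact le_refl 0
    · exact mul_nonneg hr0 (hθ i)
  have hlamle : ∀ i, lam i ≤ θ i := by
    intro i; rw [hlamdef]; dsimp only; split_ifs
    · exact le_refl _
    · exact hθ i
    · nlinarith [hθ i]
  have hlamA0 : ∀ i, (s i).1 = 0 → lam i = 0 := by
    intro i ha
    have hb : ¬ (s i).2 = 0 := fun hb => hs i (Prod.ext ha hb)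
    rw [hlamdef]; dsimp only; rw [if_neg hb, if_pos ha]
  have hmuB0 : ∀ i, (s i).2 = 0 → mu i = 0 := by
    intro i hb
    rw [hmudef, hlamdef]; dsimp only; rw [if_pos hb, sub_self]
  have hmu0 : ∀ i, 0 ≤ mu i := by
    intro i; rw [hmudef]; dsimp only; linarith [hlamle i]
  -- total of lam
  have hsuml : ∑ i, lam i = α := by
    rw [← Finset.sum_filter_add_sum_filter_not univ (fun i => (s i).2 = 0) lam,
      ← Finset.sum_filter_add_sum_filter_not
        (univ.filter (fun i => ¬(s i).2 = 0)) (fun i => (s i).1 = 0) lam,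
      Finset.filter_filter, Finset.filter_filter, hJ0eq]
    have e1 : ∑ i ∈ univ.filter (fun i => (s i).2 = 0), lam i
        = ∑ i ∈ univ.filter (fun i => (s i).2 = 0), θ i := by
      apply Finset.sum_congr rfl
      intro i hi
      simp only [mem_filter] at hi
      rw [hlamdef]; dsimp only; rw [if_pos hi.2]
    have e2 : ∑ i ∈ univ.filter (fun i => (s i).1 = 0), lam i = 0 := by
      apply Finset.sum_eq_zero
      intro i hi
      simp only [mem_filter] at hi
      exact hlamA0 i hi.2
    have e3 : ∑ i ∈ univ.filter (fun i => ¬(s i).2 = 0 ∧ ¬(s i).1 = 0), lam i = r * T := by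
      rw [hTdef, Finset.mul_sum]
      apply Finset.sum_congr rfl
      intro i hi
      simp only [mem_filter] at hi
      rw [hlamdef]; dsimp only; rw [if_neg hi.2.1, if_neg hi.2.2]
    rw [e1, e2, e3, hrT, htdef]
    ring
  have hsumm : ∑ i, mu i = 1 - α := by
    rw [hmudef]
    dsimp only
    rw [Finset.sum_sub_distrib, hθ1, hsuml]
  -- the two index finsets
  set A : Finset (Fin n) := univ.filter (fun i => ¬(s i).1 = 0) with hAdef
  set B : Finset (Fin n) := univ.filter (fun i => ¬(s i).2 = 0) with hBdef
  have hsumlA : ∑ i ∈ A, lam i = α := by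
    rw [← hsuml]
    apply Finset.sum_subset (Finset.subset_univ A)
    intro i _ hi
    rw [hAdef] at hi
    simp only [mem_filter, mem_univ, true_and, not_not] at hi
    exact hlamA0 i hi
  have hsummB : ∑ i ∈ B, mu i = 1 - α := by
    rw [← hsumm]
    apply Finset.sum_subset (Finset.subset_univ B)
    intro i _ hi
    rw [hBdef] at hi
    simp only [mem_filter, mem_univ, true_and, not_not] at hi
    exact hmuB0 i hi
  -- the centre of mass
  set t' : Finset (Fin n ⊕ Fin n) :=
    A.map ⟨Sum.inl, Sum.inl_injective⟩ ∪ B.map ⟨Sum.inr, Sum.inr_injective⟩ with ht'def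
  set W : Fin n ⊕ Fin n → ℚ := Sum.elim lam mu with hWdef
  set z : Fin n ⊕ Fin n → ℚ × ℚ × (Fin n → ℚ) :=
    Sum.elim (fun i => ((-1 : ℚ), (0 : ℚ), Pi.single i (1 : ℚ)))
      (fun i => ((0 : ℚ), (-1 : ℚ), Pi.single i (1 : ℚ))) with hzdef
  have hdisj : Disjoint (A.map ⟨Sum.inl, Sum.inl_injective⟩)
      (B.map ⟨Sum.inr, Sum.inr_injective⟩) := by
    rw [Finset.disjoint_left]
    rintro x hx hx'
    simp only [Finset.mem_map, Function.Embedding.coeFn_mk] at hx hx'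
    obtain ⟨i, -, rfl⟩ := hx
    obtain ⟨j, -, hj⟩ := hx'
    exact Sum.inl_ne_inr hj.symm
  have hWsum : ∑ x ∈ t', W x = 1 := by
    rw [ht'def, Finset.sum_union hdisj, Finset.sum_map, Finset.sum_map]
    simp only [Function.Embedding.coeFn_mk, hWdef, Sum.elim_inl, Sum.elim_inr]
    rw [hsumlA, hsummB]
    ring
  have hW0 : ∀ x ∈ t', 0 ≤ W x := by
    rintro (i | i) _
    · exact hlam0 i
    · exact hmu0 i
  have hWpos : 0 < ∑ x ∈ t', W x := by rw [hWsum]; norm_num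
  have hz' : ∀ x ∈ t', z x ∈ {p : ℚ × ℚ × (Fin n → ℚ) |
      (∃ i : Fin n, (s i).1 ≠ 0 ∧ p = (-1, 0, Pi.single i 1)) ∨
      (∃ i : Fin n, (s i).2 ≠ 0 ∧ p = (0, -1, Pi.single i 1))} := by
    intro x hx
    rw [ht'def, Finset.mem_union] at hx
    rcases hx with hx | hx <;> simp only [Finset.mem_map, Function.Embedding.coeFn_mk] at hx
    · obtain ⟨i, hi, rfl⟩ := hx
      rw [hAdef] at hi
      simp only [mem_filter, mem_univ, true_and] at hi
      exact Or.inl ⟨i, hi, rfl⟩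
    · obtain ⟨i, hi, rfl⟩ := hx
      rw [hBdef] at hi
      simp only [mem_filter, mem_univ, true_and] at hi
      exact Or.inr ⟨i, hi, rfl⟩
  have hmem := Finset.centerMass_mem_convexHull t' hW0 hWpos hz'
  rw [Finset.centerMass_eq_of_sum_1 _ _ hWsum] at hmem
  have key : ∑ x ∈ t', W x • z x = (η1, η2, θ) := by
    rw [ht'def, Finset.sum_union hdisj, Finset.sum_map, Finset.sum_map]
    simp only [Function.Embedding.coeFn_mk, hWdef, hzdef, Sum.elim_inl, Sum.elim_inr]
    apply Prod.ext
    · simp only [Prod.fst_add, Prod.fst_sum, Prod.smul_fst, smul_eq_mul, mul_neg, mul_one,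
        mul_zero, Finset.sum_neg_distrib, Finset.sum_const_zero, add_zero]
      rw [hsumlA]; rw [hα]; ring
    · apply Prod.ext
      · simp only [Prod.snd_add, Prod.fst_add, Prod.snd_sum, Prod.fst_sum, Prod.smul_snd,
          Prod.smul_fst, smul_eq_mul, mul_neg, mul_one, mul_zero, Finset.sum_neg_distrib,
          Finset.sum_const_zero, zero_add]
        rw [hsummB]
        linarith
      · funext j
        simp only [Prod.snd_add, Prod.snd_sum, Prod.smul_snd, Pi.add_apply, Finset.sum_apply,
          Pi.smul_apply, smul_eq_mul, Pi.single_apply, mul_ite, mul_one, mul_zero]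
        rw [Finset.sum_ite_eq A j lam, Finset.sum_ite_eq B j mu]
        by_cases hja : j ∈ A <;> by_cases hjb : j ∈ B
        · rw [if_pos hja, if_pos hjb, hmudef]; ring
        · rw [if_pos hja, if_neg hjb]
          rw [hBdef] at hjb
          simp only [mem_filter, mem_univ, true_and, not_not] at hjb
          rw [hlamdef]; dsimp only; rw [if_pos hjb, add_zero]
        · rw [if_neg hja, if_pos hjb]
          rw [hAdef] at hja
          simp only [mem_filter, mem_univ, true_and, not_not] at hja
          rw [hmudef]; dsimp only; rw [hlamA0 j hja]; ring
        · exfalso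
          rw [hAdef] at hja
          rw [hBdef] at hjb
          simp only [mem_filter, mem_univ, true_and, not_not] at hja hjb
          exact hs j (Prod.ext hja hjb)
  rw [key] at hmem
  exact hmem

lemma pn_lemA {n : ℕ} (s : Fin n → k × k) (hs : ∀ i, s i ≠ 0) :
    {w : ℚ × ℚ × (Fin n → ℚ) | (w.1 ≤ 0 ∧ w.2.1 ≤ 0 ∧ w.1 + w.2.1 = -1 ∧
        (∀ i, 0 ≤ w.2.2 i) ∧ ∑ i, w.2.2 i = 1) ∧ PnSemistable w.1 w.2.1 w.2.2 s}
      = {w : ℚ × ℚ × (Fin n → ℚ) | (w.1 ≤ 0 ∧ w.2.1 ≤ 0 ∧ w.1 + w.2.1 = -1 ∧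
          (∀ i, 0 ≤ w.2.2 i) ∧ ∑ i, w.2.2 i = 1) ∧
          ∑ i ∈ Finset.univ.filter (fun i => (s i).2 = 0), w.2.2 i ≤ -w.1 ∧
          ∑ i ∈ Finset.univ.filter (fun i => (s i).1 = 0), w.2.2 i ≤ -w.2.1} := by
  ext w
  obtain ⟨η1, η2, θ⟩ := w
  simp only [Set.mem_setOf_eq]
  constructor
  · rintro ⟨hbase, hss⟩
    refine ⟨hbase, ?_, ?_⟩
    · have h := hss (univ.filter (fun i => (s i).2 = 0)) ⊤ ⊥ ?_
      · simp at h; linarith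
      · intro i hi
        simp only [mem_filter] at hi
        exact ⟨Submodule.mem_top, by rw [hi.2]; exact Submodule.zero_mem _⟩
    · have h := hss (univ.filter (fun i => (s i).1 = 0)) ⊥ ⊤ ?_
      · simp at h; linarith
      · intro i hi
        simp only [mem_filter] at hi
        exact ⟨by rw [hi.2]; exact Submodule.zero_mem _, Submodule.mem_top⟩
  · rintro ⟨hbase, h1, h2⟩
    obtain ⟨hη1, hη2, hsum, hθ, hθ1⟩ := hbase
    refine ⟨⟨hη1, hη2, hsum, hθ, hθ1⟩, ?_⟩
    intro U W1 W2 hU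
    rcases Ideal.eq_bot_or_top W1 with hW1 | hW1 <;>
      rcases Ideal.eq_bot_or_top W2 with hW2 | hW2 <;> subst hW1 <;> subst hW2 <;>
      simp only [finrank_bot, finrank_top, Module.finrank_self, Nat.cast_zero, Nat.cast_one,
        mul_zero, mul_one, zero_add, add_zero]
    · have : U = ∅ := by
        by_contra h
        obtain ⟨i, hi⟩ := Finset.nonempty_iff_ne_empty.mpr h
        obtain ⟨ha, hb⟩ := hU i hi
        simp only [Submodule.mem_bot] at ha hb
        exact hs i (Prod.ext ha hb)
      simp [this]
    · -- W1 = ⊥, W2 = ⊤ : U ⊆ J0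
      have hsub : U ⊆ univ.filter (fun i => (s i).1 = 0) := by
        intro i hi
        simp only [mem_filter, mem_univ, true_and]
        have := (hU i hi).1
        simpa only [Submodule.mem_bot] using this
      have := Finset.sum_le_sum_of_subset_of_nonneg hsub (fun i _ _ => hθ i)
      linarith
    · have hsub : U ⊆ univ.filter (fun i => (s i).2 = 0) := by
        intro i hi
        simp only [mem_filter, mem_univ, true_and]
        have := (hU i hi).2
        simpa only [Submodule.mem_bot] using this
      have := Finset.sum_le_sum_of_subset_of_nonneg hsub (fun i _ _ => hθ i)
      linarith
    · have : ∑ i ∈ U, θ i ≤ 1 := by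
        rw [← hθ1]
        exact Finset.sum_le_sum_of_subset_of_nonneg (Finset.subset_univ U) (fun i _ _ => hθ i)
      linarith

/-- Description of the polytope `Θ(s) ⊆ Δ¹×Δ^{n−1}` of weights for which a representation
`s` of `P_n` with all `s_i ≠ 0` is semistable: it is cut out by the two walls
`W_{J₀^∁}`, `W_{J_∞}`, and it is the convex hull of the points `e_i − f₁` for `i ∉ J₀` and
`e_i − f₂` for `i ∉ J_∞`. -/
theorem pn_semistability_polytope {n : ℕ} (s : Fin n → k × k) (hs : ∀ i, s i ≠ 0) :
    {w : ℚ × ℚ × (Fin n → ℚ) | (w.1 ≤ 0 ∧ w.2.1 ≤ 0 ∧ w.1 + w.2.1 = -1 ∧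
        (∀ i, 0 ≤ w.2.2 i) ∧ ∑ i, w.2.2 i = 1) ∧ PnSemistable w.1 w.2.1 w.2.2 s}
      = {w : ℚ × ℚ × (Fin n → ℚ) | (w.1 ≤ 0 ∧ w.2.1 ≤ 0 ∧ w.1 + w.2.1 = -1 ∧
          (∀ i, 0 ≤ w.2.2 i) ∧ ∑ i, w.2.2 i = 1) ∧
          ∑ i ∈ Finset.univ.filter (fun i => (s i).2 = 0), w.2.2 i ≤ -w.1 ∧
          ∑ i ∈ Finset.univ.filter (fun i => (s i).1 = 0), w.2.2 i ≤ -w.2.1} ∧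
    {w : ℚ × ℚ × (Fin n → ℚ) | (w.1 ≤ 0 ∧ w.2.1 ≤ 0 ∧ w.1 + w.2.1 = -1 ∧
        (∀ i, 0 ≤ w.2.2 i) ∧ ∑ i, w.2.2 i = 1) ∧ PnSemistable w.1 w.2.1 w.2.2 s}
      = convexHull ℚ {p : ℚ × ℚ × (Fin n → ℚ) |
          (∃ i : Fin n, (s i).1 ≠ 0 ∧ p = (-1, 0, Pi.single i 1)) ∨
          (∃ i : Fin n, (s i).2 ≠ 0 ∧ p = (0, -1, Pi.single i 1))} :=
  ⟨pn_lemA s hs, (pn_lemA s hs).trans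
    (Set.Subset.antisymm (pn_lemC s hs) (pn_lemB s hs))⟩
end
end

section
/- Let k be a field and s = (s_1,…,s_n) with s_i = (a_i,b_i) ∈ k × k and s_i ≠ (0,0) for all i; set J_0 = {i : a_i = 0} and J_∞ = {i : b_i = 0}. Then there exists w ∈ Δ^1×Δ^{n−1} such that s is w-stable if and only if J_0 ∪ J_∞ ≠ {1,…,n}. If J_0 ∪ J_∞ = {1,…,n}, then {w ∈ Δ^1×Δ^{n−1} : s is w-semistable} = {(η_1,η_2,θ) ∈ Δ^1×Δ^{n−1} : ∑_{i∈J_∞} θ_i = −η_1}. -/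
noncomputable section

open Finset
open scoped Classical

variable {k : Type*} [Field k]

lemma pn_semistable_iff {n : ℕ} (η1 η2 : ℚ) (θ : Fin n → ℚ) (s : Fin n → k × k)
    (hs : ∀ i, s i ≠ 0)
    (hθ : ∀ i, 0 ≤ θ i) (hsum : ∑ i, θ i = 1) (hη : η1 + η2 = -1) :
    PnSemistable η1 η2 θ s ↔
      (η1 + ∑ i ∈ univ.filter (fun i => (s i).2 = 0), θ i ≤ 0 ∧
       η2 + ∑ i ∈ univ.filter (fun i => (s i).1 = 0), θ i ≤ 0) := by
  constructor
  · intro h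
    constructor
    · have := h (univ.filter (fun i => (s i).2 = 0)) ⊤ ⊥
        (fun i hi => ⟨trivial, by simp at hi; exact (Submodule.mem_bot k).2 hi⟩)
      simpa using this
    · have := h (univ.filter (fun i => (s i).1 = 0)) ⊥ ⊤
        (fun i hi => ⟨by simp at hi; exact (Submodule.mem_bot k).2 hi, trivial⟩)
      simpa using this
  · rintro ⟨h1, h2⟩ U W1 W2 hsub
    rcases eq_bot_or_eq_top W1 with rfl | rfl <;> rcases eq_bot_or_eq_top W2 with rfl | rfl
    · have hU : U = ∅ := by
        rw [Finset.eq_empty_iff_forall_notMem]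
        intro i hi
        obtain ⟨h1', h2'⟩ := hsub i hi
        exact hs i (Prod.ext ((Submodule.mem_bot k).1 h1') ((Submodule.mem_bot k).1 h2'))
      simp [hU]
    · have hsub' : U ⊆ univ.filter (fun i => (s i).1 = 0) := by
        intro i hi
        simp only [mem_filter, mem_univ, true_and]
        exact (Submodule.mem_bot k).1 (hsub i hi).1
      have := Finset.sum_le_sum_of_subset_of_nonneg hsub' (fun i _ _ => hθ i)
      simp only [finrank_bot, finrank_top, Module.finrank_self]
      push_cast
      linarith
    · have hsub' : U ⊆ univ.filter (fun i => (s i).2 = 0) := by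
        intro i hi
        simp only [mem_filter, mem_univ, true_and]
        exact (Submodule.mem_bot k).1 (hsub i hi).2
      have := Finset.sum_le_sum_of_subset_of_nonneg hsub' (fun i _ _ => hθ i)
      simp only [finrank_bot, finrank_top, Module.finrank_self]
      push_cast
      linarith
    · have := Finset.sum_le_sum_of_subset_of_nonneg (Finset.subset_univ U)
        (fun i _ _ => hθ i)
      simp only [finrank_top, Module.finrank_self]
      push_cast
      linarith

lemma pn_stable_of {n : ℕ} (η1 η2 : ℚ) (θ : Fin n → ℚ) (s : Fin n → k × k)
    (hs : ∀ i, s i ≠ 0)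
    (hθ : ∀ i, 0 < θ i) (hsum : ∑ i, θ i = 1) (hη : η1 + η2 = -1)
    (h1 : η1 + ∑ i ∈ univ.filter (fun i => (s i).2 = 0), θ i < 0)
    (h2 : η2 + ∑ i ∈ univ.filter (fun i => (s i).1 = 0), θ i < 0) :
    PnStable η1 η2 θ s := by
  refine ⟨(pn_semistable_iff η1 η2 θ s hs (fun i => (hθ i).le) hsum hη).2
    ⟨h1.le, h2.le⟩, ?_⟩
  intro U W1 W2 hsub hne1 hne2
  rcases eq_bot_or_eq_top W1 with rfl | rfl <;> rcases eq_bot_or_eq_top W2 with rfl | rfl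
  · have hU : U = ∅ := by
      rw [Finset.eq_empty_iff_forall_notMem]
      intro i hi
      obtain ⟨h1', h2'⟩ := hsub i hi
      exact hs i (Prod.ext ((Submodule.mem_bot k).1 h1') ((Submodule.mem_bot k).1 h2'))
    exact absurd ⟨hU, rfl, rfl⟩ hne1
  · have hsub' : U ⊆ univ.filter (fun i => (s i).1 = 0) := by
      intro i hi
      simp only [mem_filter, mem_univ, true_and]
      exact (Submodule.mem_bot k).1 (hsub i hi).1
    have := Finset.sum_le_sum_of_subset_of_nonneg hsub' (fun i _ _ => (hθ i).le)
    simp only [finrank_bot, finrank_top, Module.finrank_self]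
    push_cast
    linarith
  · have hsub' : U ⊆ univ.filter (fun i => (s i).2 = 0) := by
      intro i hi
      simp only [mem_filter, mem_univ, true_and]
      exact (Submodule.mem_bot k).1 (hsub i hi).2
    have := Finset.sum_le_sum_of_subset_of_nonneg hsub' (fun i _ _ => (hθ i).le)
    simp only [finrank_bot, finrank_top, Module.finrank_self]
    push_cast
    linarith
  · have hU : U ≠ univ := fun h => hne2 ⟨h, rfl, rfl⟩
    obtain ⟨j, hj⟩ : ∃ j, j ∉ U := by
      by_contra h
      push_neg at h
      exact hU (Finset.eq_univ_iff_forall.2 h)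
    have hsub' : U ⊆ univ.erase j := fun i hi =>
      Finset.mem_erase.2 ⟨fun h => hj (h ▸ hi), mem_univ i⟩
    have h3 := Finset.sum_le_sum_of_subset_of_nonneg hsub' (fun i _ _ => (hθ i).le)
    have h4 : ∑ i ∈ univ.erase j, θ i = (∑ i, θ i) - θ j :=
      Finset.sum_erase_eq_sub (mem_univ j)
    have := hθ j
    simp only [finrank_top, Module.finrank_self]
    push_cast
    rw [h4, hsum] at h3
    linarith

lemma pn_stable_implies {n : ℕ} (η1 η2 : ℚ) (θ : Fin n → ℚ) (s : Fin n → k × k)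
    (hst : PnStable η1 η2 θ s) :
    η1 + ∑ i ∈ univ.filter (fun i => (s i).2 = 0), θ i < 0 ∧
      η2 + ∑ i ∈ univ.filter (fun i => (s i).1 = 0), θ i < 0 := by
  obtain ⟨_, h⟩ := hst
  constructor
  · have := h (univ.filter (fun i => (s i).2 = 0)) ⊤ ⊥
      (fun i hi => ⟨trivial, by simp at hi; exact (Submodule.mem_bot k).2 hi⟩)
      (fun hc => absurd hc.2.1 top_ne_bot)
      (fun hc => absurd hc.2.2 bot_ne_top)
    simpa using this
  · have := h (univ.filter (fun i => (s i).1 = 0)) ⊥ ⊤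
      (fun i hi => ⟨by simp at hi; exact (Submodule.mem_bot k).2 hi, trivial⟩)
      (fun hc => absurd hc.2.2 top_ne_bot)
      (fun hc => absurd hc.2.1 bot_ne_top)
    simpa using this

/-- A representation `s` of `P_n` with all `s_i ≠ 0` is stable for some weight in
`Δ¹×Δ^{n−1}` iff `J₀ ∪ J_∞ ≠ {1,…,n}`; if `J₀ ∪ J_∞ = {1,…,n}`, the set of weights in
`Δ¹×Δ^{n−1}` for which `s` is semistable is the wall `W_{J_∞}`. -/
theorem pn_stable_exists_iff {n : ℕ} (s : Fin n → k × k) (hs : ∀ i, s i ≠ 0) :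
    ((∃ (η1 η2 : ℚ) (θ : Fin n → ℚ),
        (η1 ≤ 0 ∧ η2 ≤ 0 ∧ η1 + η2 = -1 ∧ (∀ i, 0 ≤ θ i) ∧ ∑ i, θ i = 1) ∧
        PnStable η1 η2 θ s) ↔
      Finset.univ.filter (fun i => (s i).1 = 0) ∪
        Finset.univ.filter (fun i => (s i).2 = 0) ≠ Finset.univ) ∧
    (Finset.univ.filter (fun i => (s i).1 = 0) ∪
        Finset.univ.filter (fun i => (s i).2 = 0) = Finset.univ →
      {w : ℚ × ℚ × (Fin n → ℚ) | (w.1 ≤ 0 ∧ w.2.1 ≤ 0 ∧ w.1 + w.2.1 = -1 ∧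
          (∀ i, 0 ≤ w.2.2 i) ∧ ∑ i, w.2.2 i = 1) ∧ PnSemistable w.1 w.2.1 w.2.2 s}
        = {w : ℚ × ℚ × (Fin n → ℚ) | (w.1 ≤ 0 ∧ w.2.1 ≤ 0 ∧ w.1 + w.2.1 = -1 ∧
            (∀ i, 0 ≤ w.2.2 i) ∧ ∑ i, w.2.2 i = 1) ∧
            ∑ i ∈ Finset.univ.filter (fun i => (s i).2 = 0), w.2.2 i = -w.1}) := by
  set J0 := univ.filter (fun i => (s i).1 = 0) with hJ0
  set Ji := univ.filter (fun i => (s i).2 = 0) with hJi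
  have hdisj : Disjoint J0 Ji := by
    rw [Finset.disjoint_left]
    intro i hi0 hii
    rw [hJ0, mem_filter] at hi0
    rw [hJi, mem_filter] at hii
    exact hs i (Prod.ext hi0.2 hii.2)
  constructor
  · constructor
    · rintro ⟨η1, η2, θ, ⟨_, _, hη, hθ, hsum⟩, hst⟩ hcontra
      obtain ⟨h1, h2⟩ := pn_stable_implies η1 η2 θ s hst
      have hsum' : ∑ i ∈ J0 ∪ Ji, θ i = ∑ i ∈ J0, θ i + ∑ i ∈ Ji, θ i :=
        Finset.sum_union hdisj
      rw [hcontra, hsum] at hsum'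
      linarith
    · intro hne
      have hn : 0 < n := by
        rcases Nat.eq_zero_or_pos n with rfl | h
        · exact absurd (by simp [hJ0, hJi, Finset.univ_eq_empty]) hne
        · exact h
      have hcard : J0.card + Ji.card < n := by
        have h1 : (J0 ∪ Ji).card = J0.card + Ji.card :=
          Finset.card_union_of_disjoint hdisj
        have hss : J0 ∪ Ji ⊂ univ := (Finset.subset_univ _).ssubset_of_ne hne
        have h2 := Finset.card_lt_card hss
        rw [h1, Finset.card_univ, Fintype.card_fin] at h2
        exact h2
      set N : ℚ := (n : ℚ) with hN
      have hNpos : 0 < N := by positivity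
      set c0 : ℚ := (J0.card : ℚ) with hc0
      set ci : ℚ := (Ji.card : ℚ) with hci
      have hc0n : 0 ≤ c0 := Nat.cast_nonneg _
      have hcin : 0 ≤ ci := Nat.cast_nonneg _
      have hlt : c0 + ci < N := by
        rw [hc0, hci, hN]
        exact_mod_cast hcard
      refine ⟨(c0 - ci - N)/(2*N), (ci - c0 - N)/(2*N), fun _ => 1/N,
        ⟨?_, ?_, ?_, ?_, ?_⟩, ?_⟩
      · apply div_nonpos_of_nonpos_of_nonneg <;> nlinarith
      · apply div_nonpos_of_nonpos_of_nonneg <;> nlinarith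
      · field_simp
        ring
      · intro i
        positivity
      · rw [Finset.sum_const, Finset.card_univ, Fintype.card_fin, nsmul_eq_mul]
        field_simp
        exact hN.symm
      · apply pn_stable_of _ _ _ _ hs (fun i => by positivity)
        · rw [Finset.sum_const, Finset.card_univ, Fintype.card_fin, nsmul_eq_mul]
          field_simp
          exact hN.symm
        · field_simp
          ring
        · rw [← hJi, Finset.sum_const, nsmul_eq_mul]
          have he : (c0 - ci - N)/(2*N) + (Ji.card : ℚ) * (1/N) = (c0 + ci - N)/(2*N) := by
            rw [← hci]
            field_simp
            ring
          rw [he]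
          apply div_neg_of_neg_of_pos
          · linarith
          · positivity
        · rw [← hJ0, Finset.sum_const, nsmul_eq_mul]
          have he : (ci - c0 - N)/(2*N) + (J0.card : ℚ) * (1/N) = (ci + c0 - N)/(2*N) := by
            rw [← hc0]
            field_simp
            ring
          rw [he]
          apply div_neg_of_neg_of_pos
          · linarith
          · positivity
  · intro hun
    ext w
    obtain ⟨η1, η2, θ⟩ := w
    simp only [Set.mem_setOf_eq]
    have hpart : ∀ θ' : Fin n → ℚ, ∑ i, θ' i = 1 →
        ∑ i ∈ J0, θ' i + ∑ i ∈ Ji, θ' i = 1 := by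
      intro θ' hsum'
      rw [← Finset.sum_union hdisj, hun, hsum']
    constructor
    · rintro ⟨⟨ha, hb, hη, hθ, hsum⟩, hss⟩
      refine ⟨⟨ha, hb, hη, hθ, hsum⟩, ?_⟩
      obtain ⟨h1, h2⟩ := (pn_semistable_iff η1 η2 θ s hs hθ hsum hη).1 hss
      rw [← hJi] at h1
      rw [← hJ0] at h2
      have := hpart θ hsum
      linarith
    · rintro ⟨⟨ha, hb, hη, hθ, hsum⟩, heq⟩
      refine ⟨⟨ha, hb, hη, hθ, hsum⟩, ?_⟩
      apply (pn_semistable_iff η1 η2 θ s hs hθ hsum hη).2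
      rw [← hJi, ← hJ0]
      have := hpart θ hsum
      constructor <;> linarith
end
end

section
/- Let k be a field, n ≥ 1, and a ≠ b in {1,…,n+2}. Let θ ∈ Δ(2,n+2) satisfy 0 < ∑_{i≠a,b} θ_i < θ_a + θ_b. Set λ = 1/∑_{i≠a,b} θ_i and define the P_n-weight w' = (η'_1, η'_2, (θ'_i)_{i≠a,b}) indexed by {1,…,n+2}∖{a,b} by η'_1 = λ(θ_a − 1), η'_2 = λ(θ_b − 1), θ'_i = λθ_i (note η'_1 + η'_2 + ∑_{i≠a,b} θ'_i = 0). Then for every tuple s = (s_1,…,s_{n+2}) of vectors in k^2: s is θ-semistable if and only if s_a and s_b are linearly independent and the representation (a_i, b_i)_{i≠a,b} of P_n over k, where s_i = a_i·s_a + b_i·s_b, is w'-semistable; and likewise s is θ-stable if and only if s_a and s_b are linearly independent and (a_i, b_i)_{i≠a,b} is w'-stable. -/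
noncomputable section

open Finset
open scoped Classical

variable {k : Type*} [Field k]

/-- A representation `s` of `Q_{n+2}` is `θ`-(semi)stable for `θ ∈ Δ(2,n+2)` with
`0 < ∑_{i≠a,b} θ_i < θ_a + θ_b` if and only if `s_a, s_b` are linearly independent and the
associated representation of `P_n` (given by the coordinates of the `s_i`, `i ≠ a,b`, in
the basis `s_a, s_b`) is (semi)stable for the weight
`(λ(θ_a−1), λ(θ_b−1), (λθ_i)_{i≠a,b})`, where `λ = 1/∑_{i≠a,b} θ_i`. -/
theorem qn_stability_iff_pn_stability {n : ℕ} (hn : 1 ≤ n)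
    (a b : Fin (n + 2)) (hab : a ≠ b)
    (θ : Fin (n + 2) → ℚ)
    (hΔ : (∀ i, 0 ≤ θ i ∧ θ i ≤ 1) ∧ ∑ i, θ i = 2)
    (hpos : 0 < ∑ i ∈ ({a, b} : Finset (Fin (n + 2)))ᶜ, θ i)
    (hlt : ∑ i ∈ ({a, b} : Finset (Fin (n + 2)))ᶜ, θ i < θ a + θ b)
    (lam : ℚ) (hlam : lam = 1 / ∑ i ∈ ({a, b} : Finset (Fin (n + 2)))ᶜ, θ i)
    (s : Fin (n + 2) → Fin 2 → k) :
    (QnSemistable θ s ↔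
      (LinearIndependent k ![s a, s b] ∧
        ∀ c : {i : Fin (n + 2) // i ≠ a ∧ i ≠ b} → k × k,
          (∀ i : {i : Fin (n + 2) // i ≠ a ∧ i ≠ b},
            s i.val = (c i).1 • s a + (c i).2 • s b) →
          PnSemistable (lam * (θ a - 1)) (lam * (θ b - 1))
            (fun i : {i : Fin (n + 2) // i ≠ a ∧ i ≠ b} => lam * θ i.val) c)) ∧
    (QnStable θ s ↔
      (LinearIndependent k ![s a, s b] ∧
        ∀ c : {i : Fin (n + 2) // i ≠ a ∧ i ≠ b} → k × k,
          (∀ i : {i : Fin (n + 2) // i ≠ a ∧ i ≠ b},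
            s i.val = (c i).1 • s a + (c i).2 • s b) →
          PnStable (lam * (θ a - 1)) (lam * (θ b - 1))
            (fun i : {i : Fin (n + 2) // i ≠ a ∧ i ≠ b} => lam * θ i.val) c)) := by
  classical
  obtain ⟨hΔ1, hΔ2⟩ := hΔ
  have hθnn : ∀ i, 0 ≤ θ i := fun i => (hΔ1 i).1
  have hθle : ∀ i, θ i ≤ 1 := fun i => (hΔ1 i).2
  set T := ∑ i ∈ ({a, b} : Finset (Fin (n + 2)))ᶜ, θ i with hT
  have hsplit : θ a + θ b + T = 2 := by
    rw [hT, ← Finset.sum_pair hab, Finset.sum_add_sum_compl, hΔ2]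
  have hT1 : T < 1 := by linarith
  have hθa : 0 < θ a := by linarith [hθle b]
  have hθb : 0 < θ b := by linarith [hθle a]
  have hlam0 : 0 < lam := by rw [hlam]; positivity
  have hfin2 : Module.finrank k (Fin 2 → k) = 2 := by simp
  have hbt1 : (⊥ : Submodule k k) ≠ ⊤ := by
    intro h
    have h0 : Module.finrank k (⊥ : Submodule k k)
        = Module.finrank k (⊤ : Submodule k k) := by rw [h]
    simp at h0
  have hbt2 : (⊥ : Submodule k (Fin 2 → k)) ≠ ⊤ := by
    intro h
    have h0 : Module.finrank k (⊥ : Submodule k (Fin 2 → k))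
        = Module.finrank k (⊤ : Submodule k (Fin 2 → k)) := by rw [h]
    simp at h0
  have hWk : ∀ W : Submodule k k, W = ⊥ ∨ W = ⊤ := by
    intro W
    rcases eq_or_ne W ⊥ with h | h
    · exact Or.inl h
    · right
      obtain ⟨x, hx, hx0⟩ := Submodule.exists_mem_ne_zero_of_ne_bot h
      rw [eq_top_iff]
      intro y _
      have hy : y = (y * x⁻¹) • x := by rw [smul_eq_mul, mul_assoc, inv_mul_cancel₀ hx0, mul_one]
      rw [hy]; exact W.smul_mem _ hx
  have unscale_le : ∀ X Y : ℚ, lam * X = Y → Y ≤ 0 → X ≤ 0 := by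
    intro X Y hXY hY
    refine le_of_mul_le_mul_left ?_ hlam0
    rw [mul_zero, hXY]; exact hY
  have unscale_lt : ∀ X Y : ℚ, lam * X = Y → Y < 0 → X < 0 := by
    intro X Y hXY hY
    refine lt_of_mul_lt_mul_left ?_ hlam0.le
    rw [mul_zero, hXY]; exact hY
  -- sum estimates
  have hsum_one : ∀ (x : Fin (n + 2)) (U : Finset (Fin (n + 2))),
      (∀ i ∈ U, (i = a ∨ i = b) → i = x) →
      ∑ i ∈ U, θ i ≤ θ x + ∑ i ∈ U.filter (fun i => i ≠ a ∧ i ≠ b), θ i := by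
    intro x U hU
    have h1 : ∑ i ∈ U.filter (fun i => i ≠ a ∧ i ≠ b), θ i
        + ∑ i ∈ U.filter (fun i => ¬(i ≠ a ∧ i ≠ b)), θ i = ∑ i ∈ U, θ i :=
      Finset.sum_filter_add_sum_filter_not _ _ _
    have h2 : ∑ i ∈ U.filter (fun i => ¬(i ≠ a ∧ i ≠ b)), θ i
        ≤ ∑ i ∈ ({x} : Finset _), θ i := by
      apply Finset.sum_le_sum_of_subset_of_nonneg
      · intro i hi
        simp only [Finset.mem_filter, not_and_or, not_not] at hi
        simp only [Finset.mem_singleton]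
        exact hU i hi.1 hi.2
      · intro i _ _; exact hθnn i
    rw [Finset.sum_singleton] at h2
    linarith
  have hsum_pair : ∀ U : Finset (Fin (n + 2)),
      ∑ i ∈ U, θ i ≤ θ a + θ b + ∑ i ∈ U.filter (fun i => i ≠ a ∧ i ≠ b), θ i := by
    intro U
    have h1 : ∑ i ∈ U.filter (fun i => i ≠ a ∧ i ≠ b), θ i
        + ∑ i ∈ U.filter (fun i => ¬(i ≠ a ∧ i ≠ b)), θ i = ∑ i ∈ U, θ i :=
      Finset.sum_filter_add_sum_filter_not _ _ _
    have h2 : ∑ i ∈ U.filter (fun i => ¬(i ≠ a ∧ i ≠ b)), θ i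
        ≤ ∑ i ∈ ({a, b} : Finset _), θ i := by
      apply Finset.sum_le_sum_of_subset_of_nonneg
      · intro i hi
        simp only [Finset.mem_filter, not_and_or, not_not] at hi
        simp only [Finset.mem_insert, Finset.mem_singleton]
        exact hi.2
      · intro i _ _; exact hθnn i
    rw [Finset.sum_pair hab] at h2
    linarith
  have hsum_compl : ∀ U : Finset (Fin (n + 2)), a ∉ U → b ∉ U → ∑ i ∈ U, θ i ≤ T := by
    intro U ha hb
    apply Finset.sum_le_sum_of_subset_of_nonneg
    · intro i hi
      simp only [Finset.mem_compl, Finset.mem_insert, Finset.mem_singleton]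
      rintro (rfl | rfl)
      · exact ha hi
      · exact hb hi
    · intro i _ _; exact hθnn i
  have hcoeff : LinearIndependent k ![s a, s b] →
      ∀ x y : k, x • s a + y • s b = 0 → x = 0 ∧ y = 0 := by
    intro hli x y hxy
    have h := Fintype.linearIndependent_iff.mp hli ![x, y]
      (by simpa [Fin.sum_univ_two] using hxy)
    exact ⟨h 0, h 1⟩
  -- A : semistability implies linear independence
  have keyA : QnSemistable θ s → LinearIndependent k ![s a, s b] := by
    intro hss
    have hsa : s a ≠ 0 := by
      intro h0
      have h := hss {a} ⊥ (by
        intro i hi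
        rw [Finset.mem_singleton] at hi
        subst hi
        simp [h0])
      rw [Finset.sum_singleton, finrank_bot] at h
      push_cast at h
      linarith
    have hsb : s b ≠ 0 := by
      intro h0
      have h := hss {b} ⊥ (by
        intro i hi
        rw [Finset.mem_singleton] at hi
        subst hi
        simp [h0])
      rw [Finset.sum_singleton, finrank_bot] at h
      push_cast at h
      linarith
    by_contra hnli
    rw [Fintype.linearIndependent_iff] at hnli
    push_neg at hnli
    obtain ⟨g, hg0, i0, hi0⟩ := hnli
    rw [Fin.sum_univ_two] at hg0
    simp only [Matrix.cons_val_zero, Matrix.cons_val_one, Matrix.head_cons] at hg0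
    have hg1 : g 1 ≠ 0 := by
      intro h1
      rw [h1, zero_smul, add_zero] at hg0
      rcases smul_eq_zero.mp hg0 with h | h
      · fin_cases i0
        · exact hi0 h
        · exact hi0 h1
      · exact hsa h
    have hmem : s b ∈ Submodule.span k {s a} := by
      have h1 : g 1 • s b = (-(g 0)) • s a := by
        rw [neg_smul]
        exact eq_neg_of_add_eq_zero_right hg0
      rw [Submodule.mem_span_singleton]
      refine ⟨(g 1)⁻¹ * (-(g 0)), ?_⟩
      rw [mul_smul, ← h1, inv_smul_smul₀ hg1]
    have h := hss {a, b} (Submodule.span k {s a}) (by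
      intro i hi
      rcases Finset.mem_insert.mp hi with rfl | hi
      · exact Submodule.mem_span_singleton_self _
      · rw [Finset.mem_singleton] at hi
        subst hi
        exact hmem)
    rw [Finset.sum_pair hab, finrank_span_singleton hsa] at h
    push_cast at h
    linarith
  -- forward transfer: P_n subreps induce Q_n subreps
  have keyF : ∀ (_ : s a ≠ 0) (_ : s b ≠ 0)
      (c : {i : Fin (n + 2) // i ≠ a ∧ i ≠ b} → k × k)
      (_ : ∀ i, s i.val = (c i).1 • s a + (c i).2 • s b)
      (U : Finset {i : Fin (n + 2) // i ≠ a ∧ i ≠ b}) (W1 W2 : Submodule k k),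
      PnIsSubrep c U W1 W2 →
      ∃ (U' : Finset (Fin (n + 2))) (W : Submodule k (Fin 2 → k)),
        QnIsSubrep s U' W ∧
        lam * (θ a - 1) * (Module.finrank k W1 : ℚ)
            + lam * (θ b - 1) * (Module.finrank k W2 : ℚ)
            + ∑ i ∈ U, lam * θ i.val
          = lam * (-(Module.finrank k W : ℚ) + ∑ i ∈ U', θ i) ∧
        (¬(U = ∅ ∧ W1 = ⊥ ∧ W2 = ⊥) → ¬(U' = ∅ ∧ W = ⊥)) ∧
        (¬(U = Finset.univ ∧ W1 = ⊤ ∧ W2 = ⊤) → ¬(U' = Finset.univ ∧ W = ⊤)) := by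
    intro hsa hsb c hc U W1 W2 hsub
    set e := Function.Embedding.subtype (fun i : Fin (n + 2) => i ≠ a ∧ i ≠ b) with he
    have hmap : ∑ i ∈ U.map e, θ i = ∑ i ∈ U, θ i.val := by
      rw [Finset.sum_map]
      simp [he, Function.Embedding.coe_subtype]
    have hamem : a ∉ U.map e := by
      simp only [Finset.mem_map, he, Function.Embedding.coe_subtype]
      rintro ⟨j, -, hj⟩
      exact j.prop.1 hj
    have hbmem : b ∉ U.map e := by
      simp only [Finset.mem_map, he, Function.Embedding.coe_subtype]
      rintro ⟨j, -, hj⟩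
      exact j.prop.2 hj
    rcases hWk W1 with h1 | h1 <;> rcases hWk W2 with h2 | h2 <;> subst h1 <;> subst h2
    · -- (⊥, ⊥)
      refine ⟨U.map e, ⊥, ?_, ?_, ?_, ?_⟩
      · intro i hi
        obtain ⟨j, hj, rfl⟩ := Finset.mem_map.mp hi
        obtain ⟨hj1, hj2⟩ := hsub j hj
        rw [Submodule.mem_bot] at hj1 hj2
        have hcj := hc j
        rw [hj1, hj2, zero_smul, zero_smul, add_zero] at hcj
        rw [Submodule.mem_bot]
        exact hcj
      · rw [hmap, ← Finset.mul_sum]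
        simp only [finrank_bot]
        push_cast
        ring
      · intro hne h
        exact hne ⟨Finset.map_eq_empty.mp h.1, rfl, rfl⟩
      · intro _ h
        exact hbt2 h.2
    · -- (⊥, ⊤)
      refine ⟨insert b (U.map e), Submodule.span k {s b}, ?_, ?_, ?_, ?_⟩
      · intro i hi
        rcases Finset.mem_insert.mp hi with rfl | hi
        · exact Submodule.mem_span_singleton_self _
        · obtain ⟨j, hj, rfl⟩ := Finset.mem_map.mp hi
          obtain ⟨hj1, -⟩ := hsub j hj
          rw [Submodule.mem_bot] at hj1
          have hcj := hc j
          rw [hj1, zero_smul, zero_add] at hcj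
          exact hcj ▸ Submodule.smul_mem _ _ (Submodule.mem_span_singleton_self _)
      · rw [Finset.sum_insert hbmem, hmap, ← Finset.mul_sum]
        simp only [finrank_span_singleton hsb, finrank_bot, finrank_top, Module.finrank_self]
        push_cast
        ring
      · intro _ h
        exact hsb (Submodule.span_singleton_eq_bot.mp h.2)
      · intro _ h
        have h21 := finrank_span_singleton (K := k) hsb
        rw [h.2, finrank_top, hfin2] at h21
        exact absurd h21 (by norm_num)
    · -- (⊤, ⊥)
      refine ⟨insert a (U.map e), Submodule.span k {s a}, ?_, ?_, ?_, ?_⟩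
      · intro i hi
        rcases Finset.mem_insert.mp hi with rfl | hi
        · exact Submodule.mem_span_singleton_self _
        · obtain ⟨j, hj, rfl⟩ := Finset.mem_map.mp hi
          obtain ⟨-, hj2⟩ := hsub j hj
          rw [Submodule.mem_bot] at hj2
          have hcj := hc j
          rw [hj2, zero_smul, add_zero] at hcj
          exact hcj ▸ Submodule.smul_mem _ _ (Submodule.mem_span_singleton_self _)
      · rw [Finset.sum_insert hamem, hmap, ← Finset.mul_sum]
        simp only [finrank_span_singleton hsa, finrank_bot, finrank_top, Module.finrank_self]
        push_cast
        ring
      · intro _ h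
        exact hsa (Submodule.span_singleton_eq_bot.mp h.2)
      · intro _ h
        have h21 := finrank_span_singleton (K := k) hsa
        rw [h.2, finrank_top, hfin2] at h21
        exact absurd h21 (by norm_num)
    · -- (⊤, ⊤)
      have hains : a ∉ insert b (U.map e) := by
        rw [Finset.mem_insert]
        rintro (h | h)
        · exact hab h
        · exact hamem h
      refine ⟨insert a (insert b (U.map e)), ⊤, ?_, ?_, ?_, ?_⟩
      · intro i _
        exact Submodule.mem_top
      · rw [Finset.sum_insert hains, Finset.sum_insert hbmem, hmap, ← Finset.mul_sum]
        simp only [finrank_top, Module.finrank_self, hfin2]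
        push_cast
        ring
      · intro _ h
        exact hbt2 h.2.symm
      · intro hne h
        refine absurd ?_ hne
        refine ⟨?_, rfl, rfl⟩
        rw [Finset.eq_univ_iff_forall]
        intro j
        have hj : (j : Fin (n + 2)) ∈ insert a (insert b (U.map e)) := by
          rw [h.1]; exact Finset.mem_univ _
        rcases Finset.mem_insert.mp hj with hj' | hj'
        · exact absurd hj' j.prop.1
        rcases Finset.mem_insert.mp hj' with hj'' | hj''
        · exact absurd hj'' j.prop.2
        obtain ⟨j', hj'U, hval⟩ := Finset.mem_map.mp hj''
        have : j' = j := Subtype.coe_injective hval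
        exact this ▸ hj'U
  have hspanW : ∀ (W : Submodule k (Fin 2 → k)) (v : Fin 2 → k), v ≠ 0 → v ∈ W →
      Module.finrank k W = 1 → W = Submodule.span k {v} := by
    intro W v hv hvW h1
    refine (Submodule.eq_of_le_of_finrank_le
      ((Submodule.span_singleton_le_iff_mem _ _).2 hvW) ?_).symm
    rw [h1, finrank_span_singleton hv]
  have hsubsum : ∀ (V : Finset (Fin (n + 2))),
      ∑ i ∈ V.subtype (fun i => i ≠ a ∧ i ≠ b), lam * θ i.val
        = lam * ∑ i ∈ V.filter (fun i => i ≠ a ∧ i ≠ b), θ i := by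
    intro V
    rw [Finset.sum_subtype_eq_sum_filter (fun i => lam * θ i), ← Finset.mul_sum]
  -- reverse: semistable case
  have keyC : ∀ (hli : LinearIndependent k ![s a, s b])
      (c : {i : Fin (n + 2) // i ≠ a ∧ i ≠ b} → k × k),
      (∀ i, s i.val = (c i).1 • s a + (c i).2 • s b) →
      PnSemistable (lam * (θ a - 1)) (lam * (θ b - 1))
        (fun i : {i : Fin (n + 2) // i ≠ a ∧ i ≠ b} => lam * θ i.val) c →
      QnSemistable θ s := by
    intro hli c hc hPn U W hsubQ
    have hPnR : ∀ (V : Finset {i : Fin (n + 2) // i ≠ a ∧ i ≠ b}) (W1 W2 : Submodule k k),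
        PnIsSubrep c V W1 W2 →
        lam * (θ a - 1) * (Module.finrank k W1 : ℚ)
          + lam * (θ b - 1) * (Module.finrank k W2 : ℚ)
          + ∑ i ∈ V, lam * θ i.val ≤ 0 := hPn
    have hsa : s a ≠ 0 := fun h0 =>
      one_ne_zero ((hcoeff hli 1 0 (by rw [h0]; simp)).1)
    have hsb : s b ≠ 0 := fun h0 =>
      one_ne_zero ((hcoeff hli 0 1 (by rw [h0]; simp)).2)
    have hrle : Module.finrank k W ≤ 2 := by
      have := Submodule.finrank_le W
      rwa [hfin2] at this
    have hcases : Module.finrank k W = 0 ∨ Module.finrank k W = 1 ∨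
        Module.finrank k W = 2 := by omega
    rcases hcases with h0 | h1 | h2
    · -- rank 0
      have hW : W = ⊥ := Submodule.finrank_eq_zero.mp h0
      have haU : a ∉ U := fun h =>
        hsa (by have := hsubQ a h; rwa [hW, Submodule.mem_bot] at this)
      have hbU : b ∉ U := fun h =>
        hsb (by have := hsubQ b h; rwa [hW, Submodule.mem_bot] at this)
      have hfilter : U.filter (fun i => i ≠ a ∧ i ≠ b) = U :=
        Finset.filter_true_of_mem (by
          intro i hi
          exact ⟨fun h => haU (h ▸ hi), fun h => hbU (h ▸ hi)⟩)
      have hPn' := hPnR (U.subtype (fun i => i ≠ a ∧ i ≠ b)) ⊥ ⊥ (by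
        intro i hi
        have hiU : (i : Fin (n + 2)) ∈ U := Finset.mem_subtype.mp hi
        have hs0 : s (i : Fin (n + 2)) = 0 := by
          have := hsubQ _ hiU
          rwa [hW, Submodule.mem_bot] at this
        have hz := hcoeff hli (c i).1 (c i).2 (by rw [← hc i]; exact hs0)
        exact ⟨(Submodule.mem_bot k).mpr hz.1, (Submodule.mem_bot k).mpr hz.2⟩)
      rw [hsubsum, hfilter] at hPn'
      have hSU : ∑ i ∈ U, θ i ≤ 0 :=
        unscale_le _ _ (by simp only [finrank_bot]; push_cast; ring) hPn'
      rw [h0]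
      push_cast
      linarith
    · -- rank 1
      by_cases hsaW : s a ∈ W
      · have hW : W = Submodule.span k {s a} := hspanW W (s a) hsa hsaW h1
        have hsbW : s b ∉ W := by
          rw [hW]
          intro hm
          obtain ⟨t, ht⟩ := Submodule.mem_span_singleton.mp hm
          have h := hcoeff hli t (-1) (by rw [neg_smul, one_smul, ht]; simp)
          exact absurd h.2 (neg_ne_zero.mpr one_ne_zero)
        have hbU : b ∉ U := fun h => hsbW (hsubQ b h)
        have hPn' := hPnR (U.subtype (fun i => i ≠ a ∧ i ≠ b)) ⊤ ⊥ (by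
          intro i hi
          refine ⟨Submodule.mem_top, (Submodule.mem_bot k).mpr ?_⟩
          have hiU := Finset.mem_subtype.mp hi
          have hm := hsubQ _ hiU
          rw [hW] at hm
          obtain ⟨t, ht⟩ := Submodule.mem_span_singleton.mp hm
          have heq : ((c i).1 - t) • s a + (c i).2 • s b = 0 := by
            have h' : (c i).1 • s a + (c i).2 • s b = t • s a := by
              rw [← hc i]; exact ht.symm
            linear_combination (norm := module) h'
          exact (hcoeff hli _ _ heq).2)
        rw [hsubsum] at hPn'
        have hX : (θ a - 1) + ∑ i ∈ U.filter (fun i => i ≠ a ∧ i ≠ b), θ i ≤ 0 :=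
          unscale_le _ _ (by
            simp only [finrank_top, Module.finrank_self, finrank_bot]
            push_cast; ring) hPn'
        have hle := hsum_one a U (by
          intro i hi h
          rcases h with rfl | rfl
          · rfl
          · exact absurd hi hbU)
        rw [h1]
        push_cast
        linarith
      · by_cases hsbW : s b ∈ W
        · have hW : W = Submodule.span k {s b} := hspanW W (s b) hsb hsbW h1
          have haU : a ∉ U := fun h => hsaW (hsubQ a h)
          have hPn' := hPnR (U.subtype (fun i => i ≠ a ∧ i ≠ b)) ⊥ ⊤ (by
            intro i hi
            refine ⟨(Submodule.mem_bot k).mpr ?_, Submodule.mem_top⟩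
            have hiU := Finset.mem_subtype.mp hi
            have hm := hsubQ _ hiU
            rw [hW] at hm
            obtain ⟨t, ht⟩ := Submodule.mem_span_singleton.mp hm
            have heq : (c i).1 • s a + ((c i).2 - t) • s b = 0 := by
              have h' : (c i).1 • s a + (c i).2 • s b = t • s b := by
                rw [← hc i]; exact ht.symm
              linear_combination (norm := module) h'
            exact (hcoeff hli _ _ heq).1)
          rw [hsubsum] at hPn'
          have hX : (θ b - 1) + ∑ i ∈ U.filter (fun i => i ≠ a ∧ i ≠ b), θ i ≤ 0 :=
            unscale_le _ _ (by
              simp only [finrank_top, Module.finrank_self, finrank_bot]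
              push_cast; ring) hPn'
          have hle := hsum_one b U (by
            intro i hi h
            rcases h with rfl | rfl
            · exact absurd hi haU
            · rfl)
          rw [h1]
          push_cast
          linarith
        · have haU : a ∉ U := fun h => hsaW (hsubQ a h)
          have hbU : b ∉ U := fun h => hsbW (hsubQ b h)
          have := hsum_compl U haU hbU
          rw [h1]
          push_cast
          linarith
    · -- rank 2
      have h2' : ∑ i ∈ U, θ i ≤ 2 := by
        calc ∑ i ∈ U, θ i ≤ ∑ i, θ i :=
              Finset.sum_le_sum_of_subset_of_nonneg (Finset.subset_univ U)
                (fun i _ _ => hθnn i)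
          _ = 2 := hΔ2
      rw [h2]
      push_cast
      linarith
  -- reverse: stable case (strict inequalities)
  have keyE : ∀ (hli : LinearIndependent k ![s a, s b])
      (c : {i : Fin (n + 2) // i ≠ a ∧ i ≠ b} → k × k),
      (∀ i, s i.val = (c i).1 • s a + (c i).2 • s b) →
      PnStable (lam * (θ a - 1)) (lam * (θ b - 1))
        (fun i : {i : Fin (n + 2) // i ≠ a ∧ i ≠ b} => lam * θ i.val) c →
      ∀ (U : Finset (Fin (n + 2))) (W : Submodule k (Fin 2 → k)), QnIsSubrep s U W →
        ¬(U = ∅ ∧ W = ⊥) → ¬(U = Finset.univ ∧ W = ⊤) →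
        -(Module.finrank k W : ℚ) + ∑ i ∈ U, θ i < 0 := by
    intro hli c hc hPnSt U W hsubQ hnz hnf
    have hPnR : ∀ (V : Finset {i : Fin (n + 2) // i ≠ a ∧ i ≠ b}) (W1 W2 : Submodule k k),
        PnIsSubrep c V W1 W2 →
        ¬(V = ∅ ∧ W1 = ⊥ ∧ W2 = ⊥) → ¬(V = Finset.univ ∧ W1 = ⊤ ∧ W2 = ⊤) →
        lam * (θ a - 1) * (Module.finrank k W1 : ℚ)
          + lam * (θ b - 1) * (Module.finrank k W2 : ℚ)
          + ∑ i ∈ V, lam * θ i.val < 0 := hPnSt.2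
    have hsa : s a ≠ 0 := fun h0 =>
      one_ne_zero ((hcoeff hli 1 0 (by rw [h0]; simp)).1)
    have hsb : s b ≠ 0 := fun h0 =>
      one_ne_zero ((hcoeff hli 0 1 (by rw [h0]; simp)).2)
    have hrle : Module.finrank k W ≤ 2 := by
      have := Submodule.finrank_le W
      rwa [hfin2] at this
    have hcases : Module.finrank k W = 0 ∨ Module.finrank k W = 1 ∨
        Module.finrank k W = 2 := by omega
    rcases hcases with h0 | h1 | h2
    · -- rank 0
      have hW : W = ⊥ := Submodule.finrank_eq_zero.mp h0
      have haU : a ∉ U := fun h =>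
        hsa (by have := hsubQ a h; rwa [hW, Submodule.mem_bot] at this)
      have hbU : b ∉ U := fun h =>
        hsb (by have := hsubQ b h; rwa [hW, Submodule.mem_bot] at this)
      have hfilter : U.filter (fun i => i ≠ a ∧ i ≠ b) = U :=
        Finset.filter_true_of_mem (by
          intro i hi
          exact ⟨fun h => haU (h ▸ hi), fun h => hbU (h ▸ hi)⟩)
      have hUne : U ≠ ∅ := fun h => hnz ⟨h, hW⟩
      obtain ⟨x, hx⟩ := Finset.nonempty_iff_ne_empty.mpr hUne
      have hxa : x ≠ a := fun h => haU (h ▸ hx)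
      have hxb : x ≠ b := fun h => hbU (h ▸ hx)
      have hPn' := hPnR (U.subtype (fun i => i ≠ a ∧ i ≠ b)) ⊥ ⊥ (by
        intro i hi
        have hiU : (i : Fin (n + 2)) ∈ U := Finset.mem_subtype.mp hi
        have hs0 : s (i : Fin (n + 2)) = 0 := by
          have := hsubQ _ hiU
          rwa [hW, Submodule.mem_bot] at this
        have hz := hcoeff hli (c i).1 (c i).2 (by rw [← hc i]; exact hs0)
        exact ⟨(Submodule.mem_bot k).mpr hz.1, (Submodule.mem_bot k).mpr hz.2⟩)
        (by
          rintro ⟨h, -⟩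
          have : (⟨x, hxa, hxb⟩ : {i : Fin (n + 2) // i ≠ a ∧ i ≠ b})
              ∈ U.subtype (fun i => i ≠ a ∧ i ≠ b) := Finset.mem_subtype.mpr hx
          rw [h] at this
          exact absurd this (Finset.notMem_empty _))
        (by rintro ⟨-, h, -⟩; exact hbt1 h)
      rw [hsubsum, hfilter] at hPn'
      have hSU : ∑ i ∈ U, θ i < 0 :=
        unscale_lt _ _ (by simp only [finrank_bot]; push_cast; ring) hPn'
      rw [h0]
      push_cast
      linarith
    · -- rank 1
      by_cases hsaW : s a ∈ W
      · have hW : W = Submodule.span k {s a} := hspanW W (s a) hsa hsaW h1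
        have hsbW : s b ∉ W := by
          rw [hW]
          intro hm
          obtain ⟨t, ht⟩ := Submodule.mem_span_singleton.mp hm
          have h := hcoeff hli t (-1) (by rw [neg_smul, one_smul, ht]; simp)
          exact absurd h.2 (neg_ne_zero.mpr one_ne_zero)
        have hbU : b ∉ U := fun h => hsbW (hsubQ b h)
        have hPn' := hPnR (U.subtype (fun i => i ≠ a ∧ i ≠ b)) ⊤ ⊥ (by
          intro i hi
          refine ⟨Submodule.mem_top, (Submodule.mem_bot k).mpr ?_⟩
          have hiU := Finset.mem_subtype.mp hi
          have hm := hsubQ _ hiU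
          rw [hW] at hm
          obtain ⟨t, ht⟩ := Submodule.mem_span_singleton.mp hm
          have heq : ((c i).1 - t) • s a + (c i).2 • s b = 0 := by
            have h' : (c i).1 • s a + (c i).2 • s b = t • s a := by
              rw [← hc i]; exact ht.symm
            linear_combination (norm := module) h'
          exact (hcoeff hli _ _ heq).2)
          (by rintro ⟨-, h, -⟩; exact hbt1 h.symm)
          (by rintro ⟨-, -, h⟩; exact hbt1 h)
        rw [hsubsum] at hPn'
        have hX : (θ a - 1) + ∑ i ∈ U.filter (fun i => i ≠ a ∧ i ≠ b), θ i < 0 :=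
          unscale_lt _ _ (by
            simp only [finrank_top, Module.finrank_self, finrank_bot]
            push_cast; ring) hPn'
        have hle := hsum_one a U (by
          intro i hi h
          rcases h with rfl | rfl
          · rfl
          · exact absurd hi hbU)
        rw [h1]
        push_cast
        linarith
      · by_cases hsbW : s b ∈ W
        · have hW : W = Submodule.span k {s b} := hspanW W (s b) hsb hsbW h1
          have haU : a ∉ U := fun h => hsaW (hsubQ a h)
          have hPn' := hPnR (U.subtype (fun i => i ≠ a ∧ i ≠ b)) ⊥ ⊤ (by
            intro i hi
            refine ⟨(Submodule.mem_bot k).mpr ?_, Submodule.mem_top⟩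
            have hiU := Finset.mem_subtype.mp hi
            have hm := hsubQ _ hiU
            rw [hW] at hm
            obtain ⟨t, ht⟩ := Submodule.mem_span_singleton.mp hm
            have heq : (c i).1 • s a + ((c i).2 - t) • s b = 0 := by
              have h' : (c i).1 • s a + (c i).2 • s b = t • s b := by
                rw [← hc i]; exact ht.symm
              linear_combination (norm := module) h'
            exact (hcoeff hli _ _ heq).1)
            (by rintro ⟨-, -, h⟩; exact hbt1 h.symm)
            (by rintro ⟨-, h, -⟩; exact hbt1 h)
          rw [hsubsum] at hPn'
          have hX : (θ b - 1) + ∑ i ∈ U.filter (fun i => i ≠ a ∧ i ≠ b), θ i < 0 :=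
            unscale_lt _ _ (by
              simp only [finrank_top, Module.finrank_self, finrank_bot]
              push_cast; ring) hPn'
          have hle := hsum_one b U (by
            intro i hi h
            rcases h with rfl | rfl
            · exact absurd hi haU
            · rfl)
          rw [h1]
          push_cast
          linarith
        · have haU : a ∉ U := fun h => hsaW (hsubQ a h)
          have hbU : b ∉ U := fun h => hsbW (hsubQ b h)
          have := hsum_compl U haU hbU
          rw [h1]
          push_cast
          linarith
    · -- rank 2
      have hW : W = ⊤ := Submodule.eq_top_of_finrank_eq (by rw [h2, hfin2])
      have hUne : U ≠ Finset.univ := fun h => hnf ⟨h, hW⟩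
      have hj : ∃ j, j ∉ U := by
        by_contra h
        push_neg at h
        exact hUne (Finset.eq_univ_iff_forall.2 h)
      by_cases hcover : ∀ i : Fin (n + 2), i ≠ a ∧ i ≠ b → i ∈ U
      · obtain ⟨j, hjU⟩ := hj
        have hjab : j = a ∨ j = b := by
          by_contra h
          push_neg at h
          exact hjU (hcover j ⟨h.1, h.2⟩)
        have hUsub : U ⊆ Finset.univ.erase j := by
          intro i hi
          rw [Finset.mem_erase]
          exact ⟨fun h => hjU (h ▸ hi), Finset.mem_univ _⟩
        have hsum : ∑ i ∈ Finset.univ.erase j, θ i + θ j = 2 := by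
          rw [Finset.sum_erase_add _ _ (Finset.mem_univ j), hΔ2]
        have hle : ∑ i ∈ U, θ i ≤ ∑ i ∈ Finset.univ.erase j, θ i :=
          Finset.sum_le_sum_of_subset_of_nonneg hUsub (fun i _ _ => hθnn i)
        have hjpos : 0 < θ j := by
          rcases hjab with rfl | rfl
          · exact hθa
          · exact hθb
        rw [h2]
        push_cast
        linarith
      · push_neg at hcover
        obtain ⟨j, hjab, hjU⟩ := hcover
        have hPn' := hPnR (U.subtype (fun i => i ≠ a ∧ i ≠ b)) ⊤ ⊤
          (fun i _ => ⟨Submodule.mem_top, Submodule.mem_top⟩)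
          (by rintro ⟨-, h, -⟩; exact hbt1 h.symm)
          (by
            rintro ⟨h, -⟩
            have : (⟨j, hjab⟩ : {i : Fin (n + 2) // i ≠ a ∧ i ≠ b})
                ∈ U.subtype (fun i => i ≠ a ∧ i ≠ b) := by
              rw [h]; exact Finset.mem_univ _
            exact hjU (Finset.mem_subtype.mp this))
        rw [hsubsum] at hPn'
        have hX : (θ a - 1) + (θ b - 1)
            + ∑ i ∈ U.filter (fun i => i ≠ a ∧ i ≠ b), θ i < 0 :=
          unscale_lt _ _ (by
            simp only [finrank_top, Module.finrank_self]
            push_cast; ring) hPn'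
        have hle := hsum_pair U
        rw [h2]
        push_cast
        linarith
  -- existence of coordinates
  have hexc : LinearIndependent k ![s a, s b] →
      ∃ c : {i : Fin (n + 2) // i ≠ a ∧ i ≠ b} → k × k,
        ∀ i, s i.val = (c i).1 • s a + (c i).2 • s b := by
    intro hli
    have hcard : Fintype.card (Fin 2) = Module.finrank k (Fin 2 → k) := by simp
    let B := basisOfLinearIndependentOfCardEqFinrank hli hcard
    refine ⟨fun i => (B.repr (s i.val) 0, B.repr (s i.val) 1), fun i => ?_⟩
    have h := B.sum_repr (s i.val)
    rw [Fin.sum_univ_two] at h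
    have hB0 : B 0 = s a := by
      simp [B, coe_basisOfLinearIndependentOfCardEqFinrank]
    have hB1 : B 1 = s b := by
      simp [B, coe_basisOfLinearIndependentOfCardEqFinrank]
    rw [hB0, hB1] at h
    exact h.symm
  -- forward: semistable gives Pn-semistable
  have keyB : QnSemistable θ s → s a ≠ 0 → s b ≠ 0 →
      ∀ c : {i : Fin (n + 2) // i ≠ a ∧ i ≠ b} → k × k,
        (∀ i, s i.val = (c i).1 • s a + (c i).2 • s b) →
        PnSemistable (lam * (θ a - 1)) (lam * (θ b - 1))
          (fun i : {i : Fin (n + 2) // i ≠ a ∧ i ≠ b} => lam * θ i.val) c := by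
    intro hss hsa hsb c hc U W1 W2 hsub
    obtain ⟨U', W, hsubQ, heq, -, -⟩ := keyF hsa hsb c hc U W1 W2 hsub
    show lam * (θ a - 1) * (Module.finrank k W1 : ℚ)
        + lam * (θ b - 1) * (Module.finrank k W2 : ℚ)
        + ∑ i ∈ U, lam * θ i.val ≤ 0
    rw [heq]
    simpa using mul_le_mul_of_nonneg_left (hss U' W hsubQ) hlam0.le
  -- forward: stable gives Pn-stable (strict part)
  have keyD : QnStable θ s → s a ≠ 0 → s b ≠ 0 →
      ∀ c : {i : Fin (n + 2) // i ≠ a ∧ i ≠ b} → k × k,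
        (∀ i, s i.val = (c i).1 • s a + (c i).2 • s b) →
        ∀ (U : Finset {i : Fin (n + 2) // i ≠ a ∧ i ≠ b}) (W1 W2 : Submodule k k),
          PnIsSubrep c U W1 W2 →
          ¬(U = ∅ ∧ W1 = ⊥ ∧ W2 = ⊥) → ¬(U = Finset.univ ∧ W1 = ⊤ ∧ W2 = ⊤) →
          lam * (θ a - 1) * (Module.finrank k W1 : ℚ)
            + lam * (θ b - 1) * (Module.finrank k W2 : ℚ)
            + ∑ i ∈ U, lam * θ i.val < 0 := by
    intro hst hsa hsb c hc U W1 W2 hsub hnz hnf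
    obtain ⟨U', W, hsubQ, heq, htz, htf⟩ := keyF hsa hsb c hc U W1 W2 hsub
    rw [heq]
    simpa using mul_lt_mul_of_pos_left (hst.2 U' W hsubQ (htz hnz) (htf hnf)) hlam0
  constructor
  · constructor
    · intro hss
      have hli := keyA hss
      have hsa : s a ≠ 0 := fun h0 =>
        one_ne_zero ((hcoeff hli 1 0 (by rw [h0]; simp)).1)
      have hsb : s b ≠ 0 := fun h0 =>
        one_ne_zero ((hcoeff hli 0 1 (by rw [h0]; simp)).2)
      exact ⟨hli, keyB hss hsa hsb⟩
    · rintro ⟨hli, h⟩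
      obtain ⟨c, hc⟩ := hexc hli
      exact keyC hli c hc (h c hc)
  · constructor
    · intro hst
      have hli := keyA hst.1
      have hsa : s a ≠ 0 := fun h0 =>
        one_ne_zero ((hcoeff hli 1 0 (by rw [h0]; simp)).1)
      have hsb : s b ≠ 0 := fun h0 =>
        one_ne_zero ((hcoeff hli 0 1 (by rw [h0]; simp)).2)
      exact ⟨hli, fun c hc => ⟨keyB hst.1 hsa hsb c hc, keyD hst hsa hsb c hc⟩⟩
    · rintro ⟨hli, h⟩
      obtain ⟨c, hc⟩ := hexc hli
      exact ⟨keyC hli c hc (h c hc).1, keyE hli c hc (h c hc)⟩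
end
end
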